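/- arXiv:0712.1378 — 9 statements merged into one kernel-verified Lean document; each statement's English description precedes it below -/
import Mathlib

section
/- For all real numbers λ > 0 and t with 0 < t < λ, the integral (1/(4π)) ∫_{(√t−√λ)²}^{(√t+√λ)²} (log x / x) · (x − t + λ)/√(4λt − (x − t − λ)²) dx equals (1/2)·log(λ − t). -/
open Real MeasureTheory intervalIntegral Set

set_option maxHeartbeats 2000000 in
lemma aux_main (s r : ℝ) (hs : 0 < s) (hsr : s < r) :
    (∫ x in ((s - r) ^ 2)..((s + r) ^ 2),
        Real.log x / x * ((x - s ^ 2 + r ^ 2) /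
          Real.sqrt (4 * r ^ 2 * s ^ 2 - (x - s ^ 2 - r ^ 2) ^ 2)))
      = 2 * π * Real.log (r ^ 2 - s ^ 2) := by
  have hr : 0 < r := hs.trans hsr
  set a : ℝ := (s - r) ^ 2 with ha_def
  set b : ℝ := (s + r) ^ 2 with hb_def
  set e : ℝ := r ^ 2 - s ^ 2 with he_def
  set c : ℝ := 2 * s * r with hc_def
  have hc : 0 < c := by rw [hc_def]; positivity
  have he : 0 < e := by rw [he_def]; nlinarith
  have ha : 0 < a := by rw [ha_def]; nlinarith
  have hb0 : 0 < b := by rw [hb_def]; positivity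
  have hab : a < b := by rw [ha_def, hb_def]; nlinarith
  have hab2 : a * b = e ^ 2 := by rw [ha_def, hb_def, he_def]; ring
  have hbc : b = s ^ 2 + r ^ 2 + c := by rw [hb_def, hc_def]; ring
  have hac : a = s ^ 2 + r ^ 2 - c := by rw [ha_def, hc_def]; ring
  set P : ℝ → ℝ := fun x => (x - a) * (b - x) with hP_def
  have hD : ∀ x : ℝ, 4 * r ^ 2 * s ^ 2 - (x - s ^ 2 - r ^ 2) ^ 2 = P x := by
    intro x; simp only [hP_def, ha_def, hb_def]; ring
  set u : ℝ → ℝ := fun x => (x - s ^ 2 - r ^ 2) / c with hu_def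
  set w : ℝ → ℝ := fun x => ((s ^ 2 + r ^ 2) * x - e ^ 2) / (c * x) with hw_def
  set φ : ℝ → ℝ := fun x => Real.arcsin (u x) + Real.arcsin (w x) with hφ_def
  set f : ℝ → ℝ := fun x =>
      Real.log x / x * ((x - s ^ 2 + r ^ 2) /
        Real.sqrt (4 * r ^ 2 * s ^ 2 - (x - s ^ 2 - r ^ 2) ^ 2)) with hf_def
  set ψ : ℝ → ℝ := fun x => φ (max x a) / max x a with hψ_def
  have hx_pos : ∀ x : ℝ, a ≤ x → 0 < x := fun x hx => lt_of_lt_of_le ha hx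
  have hP_pos : ∀ x ∈ Ioo a b, 0 < P x := fun x hx =>
    mul_pos (sub_pos.2 hx.1) (sub_pos.2 hx.2)
  have hsP : ∀ x ∈ Ioo a b, 0 < Real.sqrt (P x) := fun x hx => Real.sqrt_pos.2 (hP_pos x hx)
  -- bounds on u and w
  have hu_mem : ∀ x ∈ Ioo a b, u x ∈ Ioo (-1 : ℝ) 1 := by
    intro x hx
    have h1 := hx.1; have h2 := hx.2
    rw [hac] at h1; rw [hbc] at h2
    constructor
    · rw [hu_def]; rw [lt_div_iff₀ hc]; linarith
    · rw [hu_def]; rw [div_lt_one hc]; linarith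
  have hw_mem : ∀ x ∈ Ioo a b, w x ∈ Ioo (-1 : ℝ) 1 := by
    intro x hx
    have hx0 : 0 < x := hx_pos x hx.1.le
    have hcx : 0 < c * x := mul_pos hc hx0
    constructor
    · rw [hw_def]; rw [lt_div_iff₀ hcx]
      have h1 : (s ^ 2 + r ^ 2) * x - e ^ 2 - -1 * (c * x) = b * (x - a) := by
        rw [← hab2, hbc]; ring
      nlinarith [mul_pos hb0 (sub_pos.2 hx.1)]
    · rw [hw_def]; rw [div_lt_one hcx]
      have h1 : c * x - ((s ^ 2 + r ^ 2) * x - e ^ 2) = a * (b - x) := by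
        rw [← hab2, hac]; ring
      nlinarith [mul_pos ha (sub_pos.2 hx.2)]
  -- sqrt identities
  have h1u : ∀ x ∈ Ioo a b, Real.sqrt (1 - u x ^ 2) = Real.sqrt (P x) / c := by
    intro x hx
    have key : 1 - u x ^ 2 = P x / c ^ 2 := by
      rw [hu_def, hP_def, ha_def, hb_def, hc_def]
      have h2 : (2 : ℝ) * s * r ≠ 0 := by positivity
      field_simp
      ring
    rw [key, Real.sqrt_div' _ (sq_nonneg c), Real.sqrt_sq hc.le]
  have h1w : ∀ x ∈ Ioo a b, Real.sqrt (1 - w x ^ 2) = e * Real.sqrt (P x) / (c * x) := by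
    intro x hx
    have hx0 : 0 < x := hx_pos x hx.1.le
    have key : 1 - w x ^ 2 = e ^ 2 * P x / (c * x) ^ 2 := by
      rw [hw_def, hP_def, ha_def, hb_def, hc_def, he_def]
      have h2 : (2 : ℝ) * s * r ≠ 0 := by positivity
      field_simp
      ring
    rw [key, Real.sqrt_div' _ (sq_nonneg (c * x)), Real.sqrt_sq (mul_pos hc hx0).le,
      Real.sqrt_mul (sq_nonneg e), Real.sqrt_sq he.le]
  -- derivative of φ
  have hφ_deriv : ∀ x ∈ Ioo a b, HasDerivAt φ ((x + e) / (x * Real.sqrt (P x))) x := by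
    intro x hx
    have hx0 : 0 < x := hx_pos x hx.1.le
    have hum := hu_mem x hx
    have hwm := hw_mem x hx
    have hsPx := hsP x hx
    have hu_d : HasDerivAt u (1 / c) x := by
      rw [hu_def]
      simpa using (((hasDerivAt_id x).sub_const (s ^ 2)).sub_const (r ^ 2)).div_const c
    have h1 : HasDerivAt (fun y => Real.arcsin (u y)) ((Real.sqrt (P x))⁻¹) x := by
      have h := (Real.hasDerivAt_arcsin (ne_of_gt hum.1) (ne_of_lt hum.2)).comp x hu_d
      have hv : 1 / Real.sqrt (1 - u x ^ 2) * (1 / c) = (Real.sqrt (P x))⁻¹ := by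
        rw [h1u x hx]
        field_simp
      rwa [hv] at h
    have hw_d : HasDerivAt w (e ^ 2 / (c * x ^ 2)) x := by
      have hnum : HasDerivAt (fun y : ℝ => (s ^ 2 + r ^ 2) * y - e ^ 2) (s ^ 2 + r ^ 2) x := by
        simpa using ((hasDerivAt_id x).const_mul (s ^ 2 + r ^ 2)).sub_const (e ^ 2)
      have hden : HasDerivAt (fun y : ℝ => c * y) c x := by
        simpa using (hasDerivAt_id x).const_mul c
      have hden0 : c * x ≠ 0 := (mul_pos hc hx0).ne'
      have h := hnum.div hden hden0
      rw [hw_def]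
      convert h using 1
      · rfl
      · rfl
      · rfl
      field_simp
      ring
    have h2 : HasDerivAt (fun y => Real.arcsin (w y)) (e / (x * Real.sqrt (P x))) x := by
      have h := (Real.hasDerivAt_arcsin (ne_of_gt hwm.1) (ne_of_lt hwm.2)).comp x hw_d
      have hv : 1 / Real.sqrt (1 - w x ^ 2) * (e ^ 2 / (c * x ^ 2)) = e / (x * Real.sqrt (P x)) := by
        rw [h1w x hx]
        field_simp [hx0.ne', hsPx.ne', he.ne', hc.ne']
      rwa [hv] at h
    have h3 := h1.add h2
    have hv2 : (Real.sqrt (P x))⁻¹ + e / (x * Real.sqrt (P x)) = (x + e) / (x * Real.sqrt (P x)) := by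
      field_simp
    rw [hv2] at h3
    rw [hφ_def]
    exact h3
  -- G and its derivative
  set G : ℝ → ℝ := fun x => Real.log x * φ x with hG_def
  set g' : ℝ → ℝ := fun x => f x + ψ x with hg'_def
  have hG_deriv : ∀ x ∈ Ioo a b, HasDerivAt G (g' x) x := by
    intro x hx
    have hx0 : 0 < x := hx_pos x hx.1.le
    have hsPx := hsP x hx
    have hlog : HasDerivAt Real.log x⁻¹ x := Real.hasDerivAt_log hx0.ne'
    have h := hlog.mul (hφ_deriv x hx)
    rw [hG_def, hg'_def]
    convert h using 1
    · rfl
    · rfl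
    · rfl
    rw [hf_def, hψ_def]
    simp only [max_eq_left hx.1.le, hD x]
    rw [he_def]
    field_simp
    ring
  -- continuity
  have hIcc_ne : ∀ x ∈ Icc a b, x ≠ 0 := fun x hx => (hx_pos x hx.1).ne'
  have hφ_cont : ContinuousOn φ (Icc a b) := by
    rw [hφ_def]
    apply ContinuousOn.add
    · apply (Real.continuous_arcsin.comp _).continuousOn
      rw [hu_def]; fun_prop
    · apply Real.continuous_arcsin.comp_continuousOn
      rw [hw_def]
      apply ContinuousOn.div (by fun_prop) (by fun_prop)
      intro x hx; exact mul_ne_zero hc.ne' (hIcc_ne x hx)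
  have hG_cont : ContinuousOn G (Icc a b) := by
    rw [hG_def]
    exact (Real.continuousOn_log.mono fun x hx => by simpa using hIcc_ne x hx).mul hφ_cont
  have hmax_pos : ∀ x : ℝ, 0 < max x a := fun x => lt_of_lt_of_le ha (le_max_right x a)
  have hψ_cont : Continuous ψ := by
    have hψ_eq2 : ψ = fun x => (Real.arcsin ((max x a - s ^ 2 - r ^ 2) / c) +
        Real.arcsin (((s ^ 2 + r ^ 2) * max x a - e ^ 2) / (c * max x a))) / max x a := by
      funext x; simp only [hψ_def, hφ_def, hu_def, hw_def]
    rw [hψ_eq2]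
    have hmax : Continuous fun x : ℝ => max x a := continuous_id.max continuous_const
    have hc1 : Continuous fun x : ℝ => Real.arcsin ((max x a - s ^ 2 - r ^ 2) / c) :=
      Real.continuous_arcsin.comp (by fun_prop)
    have hc2 : Continuous fun x : ℝ =>
        Real.arcsin (((s ^ 2 + r ^ 2) * max x a - e ^ 2) / (c * max x a)) := by
      apply Real.continuous_arcsin.comp
      apply Continuous.div (by fun_prop) (by fun_prop)
      intro x; exact mul_ne_zero hc.ne' (hmax_pos x).ne'
    exact (hc1.add hc2).div (by fun_prop) fun x => (hmax_pos x).ne'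
  have hψ_eq : ∀ x : ℝ, a ≤ x → ψ x = φ x / x := by
    intro x hx; simp only [hψ_def, max_eq_left hx]
  -- integrability of f
  set m : ℝ := (a + b) / 2 with hm_def
  have ham : a < m := by rw [hm_def]; linarith
  have hmb : m < b := by rw [hm_def]; linarith
  have hk_cont : ContinuousOn (fun x => Real.log x * (x + e) / x) (Icc a b) := by
    apply ContinuousOn.div _ (by fun_prop) hIcc_ne
    exact (Real.continuousOn_log.mono fun x hx => by simpa using hIcc_ne x hx).mul (by fun_prop)
  obtain ⟨C, hC⟩ := isCompact_Icc.exists_bound_of_continuousOn hk_cont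
  set M : ℝ := |C| with hM_def
  have hM0 : 0 ≤ M := abs_nonneg C
  have hMb : ∀ x ∈ Icc a b, |Real.log x * (x + e) / x| ≤ M := fun x hx =>
    (hC x hx).trans (le_abs_self C)
  have hf_meas : Measurable f := by
    rw [hf_def]
    apply Measurable.mul
    · exact Real.measurable_log.div measurable_id
    · apply Measurable.div (by fun_prop)
      exact Real.continuous_sqrt.measurable.comp (by fun_prop)
  have hfx_eq : ∀ x : ℝ, f x = Real.log x * (x + e) / x * (Real.sqrt (P x))⁻¹ := by
    intro x
    simp only [hf_def, hD x, he_def]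
    ring
  have habs : ∀ x ∈ Ioo a b, |f x| ≤ M * (Real.sqrt (P x))⁻¹ := by
    intro x hx
    rw [hfx_eq x, abs_mul, abs_of_nonneg (inv_nonneg.2 (Real.sqrt_nonneg _))]
    exact mul_le_mul_of_nonneg_right (hMb x ⟨hx.1.le, hx.2.le⟩)
      (inv_nonneg.2 (Real.sqrt_nonneg _))
  have hrpow_eq : ∀ y : ℝ, 0 ≤ y → y ^ (-(1/2) : ℝ) = (Real.sqrt y)⁻¹ := by
    intro y hy
    rw [Real.rpow_neg hy, Real.sqrt_eq_rpow]
  have hint1 : IntervalIntegrable f volume a m := by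
    have hbm0 : 0 < b - m := by linarith
    have hbm : 0 < Real.sqrt (b - m) := Real.sqrt_pos.2 hbm0
    set g1 : ℝ → ℝ := fun x => M / Real.sqrt (b - m) * (x - a) ^ (-(1/2) : ℝ) with hg1_def
    have hg1_int : IntervalIntegrable g1 volume a m := by
      have h0 : IntervalIntegrable (fun x : ℝ => x ^ (-(1/2) : ℝ)) volume 0 (m - a) :=
        intervalIntegrable_rpow' (by norm_num)
      have h1 : IntervalIntegrable (fun x : ℝ => (x - a) ^ (-(1/2) : ℝ)) volume a m := by
        simpa using h0.comp_sub_right a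
      simpa [hg1_def] using h1.const_mul (M / Real.sqrt (b - m))
    apply hg1_int.mono_fun (hf_meas.aestronglyMeasurable.restrict)
    rw [Filter.EventuallyLE, ae_restrict_iff' measurableSet_uIoc]
    refine Filter.Eventually.of_forall fun x hx => ?_
    rw [uIoc_of_le ham.le] at hx
    have hxb : x < b := lt_of_le_of_lt hx.2 hmb
    have hxIoo : x ∈ Ioo a b := ⟨hx.1, hxb⟩
    have hxa0 : (0:ℝ) < x - a := by linarith [hx.1]
    have hsxa : 0 < Real.sqrt (x - a) := Real.sqrt_pos.2 hxa0
    have hsbx : 0 < Real.sqrt (b - x) := Real.sqrt_pos.2 (by linarith)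
    have hsplit : Real.sqrt (P x) = Real.sqrt (x - a) * Real.sqrt (b - x) := by
      rw [hP_def]; exact Real.sqrt_mul hxa0.le _
    have hmono : Real.sqrt (b - m) ≤ Real.sqrt (b - x) :=
      Real.sqrt_le_sqrt (by linarith [hx.2])
    have hineq : (Real.sqrt (P x))⁻¹ ≤ (Real.sqrt (b - m))⁻¹ * (Real.sqrt (x - a))⁻¹ := by
      rw [hsplit, mul_inv]
      rw [mul_comm]
      apply mul_le_mul_of_nonneg_right _ (inv_nonneg.2 (Real.sqrt_nonneg _))
      exact inv_anti₀ hbm hmono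
    have hg1x : ‖g1 x‖ = M * (Real.sqrt (b - m))⁻¹ * (Real.sqrt (x - a))⁻¹ := by
      simp only [hg1_def]
      rw [Real.norm_eq_abs, abs_of_nonneg
        (mul_nonneg (div_nonneg hM0 (Real.sqrt_nonneg _)) (Real.rpow_nonneg hxa0.le _)),
        hrpow_eq _ hxa0.le, div_eq_mul_inv]
    rw [Real.norm_eq_abs, hg1x]
    calc |f x| ≤ M * (Real.sqrt (P x))⁻¹ := habs x hxIoo
      _ ≤ M * ((Real.sqrt (b - m))⁻¹ * (Real.sqrt (x - a))⁻¹) :=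
          mul_le_mul_of_nonneg_left hineq hM0
      _ = M * (Real.sqrt (b - m))⁻¹ * (Real.sqrt (x - a))⁻¹ := by ring
  have hint2 : IntervalIntegrable f volume m b := by
    have hma0 : 0 < m - a := by linarith
    have hma : 0 < Real.sqrt (m - a) := Real.sqrt_pos.2 hma0
    set g2 : ℝ → ℝ := fun x => M / Real.sqrt (m - a) * (b - x) ^ (-(1/2) : ℝ) with hg2_def
    have hg2_int : IntervalIntegrable g2 volume m b := by
      have h0 : IntervalIntegrable (fun x : ℝ => x ^ (-(1/2) : ℝ)) volume 0 (b - m) :=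
        intervalIntegrable_rpow' (by norm_num)
      have h1 : IntervalIntegrable (fun x : ℝ => (b - x) ^ (-(1/2) : ℝ)) volume m b := by
        have := h0.comp_sub_left b
        simp only [sub_zero, sub_sub_cancel] at this
        exact this.symm
      simpa [hg2_def] using h1.const_mul (M / Real.sqrt (m - a))
    apply hg2_int.mono_fun (hf_meas.aestronglyMeasurable.restrict)
    rw [Filter.EventuallyLE, ae_restrict_iff' measurableSet_uIoc]
    refine Filter.Eventually.of_forall fun x hx => ?_
    rw [uIoc_of_le hmb.le] at hx
    have hxa : a < x := lt_trans ham hx.1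
    rcases eq_or_lt_of_le hx.2 with hxb | hxb
    · have hPb : P x = 0 := by rw [hxb, hP_def]; simp
      have : f x = 0 := by rw [hfx_eq x, hPb, Real.sqrt_zero, inv_zero, mul_zero]
      rw [this]
      simp [Real.norm_eq_abs]
    · have hxIoo : x ∈ Ioo a b := ⟨hxa, hxb⟩
      have hbx0 : (0:ℝ) < b - x := by linarith
      have hsplit : Real.sqrt (P x) = Real.sqrt (x - a) * Real.sqrt (b - x) := by
        rw [hP_def]; exact Real.sqrt_mul (by linarith : (0:ℝ) ≤ x - a) _
      have hmono : Real.sqrt (m - a) ≤ Real.sqrt (x - a) :=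
        Real.sqrt_le_sqrt (by linarith [hx.1])
      have hineq : (Real.sqrt (P x))⁻¹ ≤ (Real.sqrt (m - a))⁻¹ * (Real.sqrt (b - x))⁻¹ := by
        rw [hsplit, mul_inv]
        apply mul_le_mul_of_nonneg_right _ (inv_nonneg.2 (Real.sqrt_nonneg _))
        exact inv_anti₀ hma hmono
      have hg2x : ‖g2 x‖ = M * (Real.sqrt (m - a))⁻¹ * (Real.sqrt (b - x))⁻¹ := by
        simp only [hg2_def]
        rw [Real.norm_eq_abs, abs_of_nonneg
          (mul_nonneg (div_nonneg hM0 (Real.sqrt_nonneg _)) (Real.rpow_nonneg hbx0.le _)),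
          hrpow_eq _ hbx0.le, div_eq_mul_inv]
      rw [Real.norm_eq_abs, hg2x]
      calc |f x| ≤ M * (Real.sqrt (P x))⁻¹ := habs x hxIoo
        _ ≤ M * ((Real.sqrt (m - a))⁻¹ * (Real.sqrt (b - x))⁻¹) :=
            mul_le_mul_of_nonneg_left hineq hM0
        _ = M * (Real.sqrt (m - a))⁻¹ * (Real.sqrt (b - x))⁻¹ := by ring
  have hf_int : IntervalIntegrable f volume a b := hint1.trans hint2
  have hψ_int : IntervalIntegrable ψ volume a b := hψ_cont.intervalIntegrable a b
  -- FTC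
  have hg'_int : IntervalIntegrable g' volume a b := by
    rw [hg'_def]; exact hf_int.add hψ_int
  have hkey : ∫ x in a..b, g' x = G b - G a :=
    integral_eq_sub_of_hasDeriv_right_of_le hab.le hG_cont
      (fun x hx => (hG_deriv x hx).hasDerivWithinAt) hg'_int
  -- endpoint values
  have hua : u a = -1 := by
    simp only [hu_def]
    rw [div_eq_iff hc.ne']
    rw [hac]; ring
  have hub : u b = 1 := by
    simp only [hu_def]
    rw [div_eq_iff hc.ne']
    rw [hbc]; ring
  have hwa : w a = -1 := by
    simp only [hw_def]
    rw [div_eq_iff (mul_ne_zero hc.ne' ha.ne')]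
    rw [← hab2, hbc]; ring
  have hwb : w b = 1 := by
    simp only [hw_def]
    rw [div_eq_iff (mul_ne_zero hc.ne' hb0.ne')]
    rw [← hab2, hac]; ring
  have hφa : φ a = -π := by
    simp only [hφ_def]
    simp only [hua, hwa, Real.arcsin_neg_one]; ring
  have hφb : φ b = π := by
    simp only [hφ_def]
    simp only [hub, hwb, Real.arcsin_one]; ring
  have hGba : G b - G a = 2 * π * Real.log e := by
    simp only [hG_def, hφa, hφb]
    have h3 : Real.log a + Real.log b = 2 * Real.log e := by
      rw [← Real.log_mul ha.ne' hb0.ne', hab2, Real.log_pow]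
      push_cast; ring
    linear_combination π * h3
  -- symmetry: ∫ ψ = 0
  have hmem_inv : ∀ y ∈ Icc a b, e ^ 2 / y ∈ Icc a b := by
    intro y hy
    have hy0 : 0 < y := hx_pos y hy.1
    constructor
    · rw [le_div_iff₀ hy0, ← hab2]
      exact mul_le_mul_of_nonneg_left hy.2 ha.le
    · rw [div_le_iff₀ hy0, ← hab2]
      calc a * b ≤ y * b := mul_le_mul_of_nonneg_right hy.1 hb0.le
        _ = b * y := mul_comm _ _
  have hφ_inv : ∀ y ∈ Icc a b, φ (e ^ 2 / y) = -φ y := by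
    intro y hy
    have hy0 : 0 < y := hx_pos y hy.1
    have h1 : u (e ^ 2 / y) = -w y := by
      simp only [hu_def, hw_def]
      field_simp
      ring
    have h2 : w (e ^ 2 / y) = -u y := by
      simp only [hu_def, hw_def]
      field_simp
      ring
    simp only [hφ_def, h1, h2, Real.arcsin_neg]
    ring
  have hinv_deriv : ∀ y ∈ uIcc a b, HasDerivAt (fun z : ℝ => e ^ 2 / z) (-(e ^ 2) / y ^ 2) y := by
    intro y hy
    rw [uIcc_of_le hab.le] at hy
    have hy0 : 0 < y := hx_pos y hy.1
    have h := (hasDerivAt_inv hy0.ne').const_mul (e ^ 2)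
    have h2 : HasDerivAt (fun z : ℝ => e ^ 2 / z) (e ^ 2 * -(y ^ 2)⁻¹) y := by
      simpa only [div_eq_mul_inv] using h
    convert h2 using 1
    field_simp
  have hf'_cont : ContinuousOn (fun y : ℝ => -(e ^ 2) / y ^ 2) (uIcc a b) := by
    rw [uIcc_of_le hab.le]
    apply ContinuousOn.div continuousOn_const (by fun_prop)
    intro y hy; exact pow_ne_zero 2 (hx_pos y hy.1).ne'
  have hsub := integral_comp_smul_deriv hinv_deriv hf'_cont hψ_cont
  have hea : e ^ 2 / a = b := by
    rw [← hab2]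
    field_simp [mul_comm]
  have heb : e ^ 2 / b = a := by
    rw [← hab2]
    field_simp
  rw [hea, heb] at hsub
  have hcongr : ∀ y ∈ uIcc a b,
      (-(e ^ 2) / y ^ 2) • ((ψ ∘ fun z : ℝ => e ^ 2 / z) y) = ψ y := by
    intro y hy
    rw [uIcc_of_le hab.le] at hy
    have hy0 : 0 < y := hx_pos y hy.1
    have hm' := hmem_inv y hy
    simp only [Function.comp, smul_eq_mul]
    rw [hψ_eq _ hm'.1, hψ_eq _ hy.1, hφ_inv y hy]
    field_simp
  rw [intervalIntegral.integral_congr hcongr] at hsub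
  have hψ0 : ∫ y in a..b, ψ y = 0 := by
    have h5 := hsub
    rw [intervalIntegral.integral_symm] at h5
    linarith
  -- assemble
  have hfψ : ∫ x in a..b, g' x = (∫ x in a..b, f x) + ∫ x in a..b, ψ x := by
    rw [hg'_def]; exact intervalIntegral.integral_add hf_int hψ_int
  have hfinal : (∫ x in a..b, f x) = 2 * π * Real.log e := by
    have h6 : (∫ x in a..b, f x) + ∫ x in a..b, ψ x = G b - G a := by
      rw [← hfψ]; exact hkey
    rw [hψ0] at h6
    rw [hGba] at h6
    linarith
  exact hfinal

/-- For all real `l > 0` and `t` with `0 < t < l`, the integral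
`(1/(4π)) ∫_{(√t−√l)²}^{(√t+√l)²} (log x / x) · (x − t + l)/√(4lt − (x − t − l)²) dx`
equals `(1/2)·log(l − t)`. -/
theorem stmt0 (l t : ℝ) (hl : 0 < l) (ht : 0 < t) (htl : t < l) :
    (1 / (4 * π)) *
      ∫ x in ((Real.sqrt t - Real.sqrt l) ^ 2)..((Real.sqrt t + Real.sqrt l) ^ 2),
        (Real.log x / x) * ((x - t + l) / Real.sqrt (4 * l * t - (x - t - l) ^ 2))
    = (1 / 2) * Real.log (l - t) := by
  have hs : 0 < Real.sqrt t := Real.sqrt_pos.2 ht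
  have hsr : Real.sqrt t < Real.sqrt l := Real.sqrt_lt_sqrt ht.le htl
  have h := aux_main (Real.sqrt t) (Real.sqrt l) hs hsr
  rw [Real.sq_sqrt ht.le, Real.sq_sqrt hl.le] at h
  rw [h]
  have hπ : π ≠ 0 := Real.pi_ne_zero
  field_simp
  ring
end

section
/- Let μ be a finite Borel measure on ℝ whose support is a compact subset of (0,∞), and let t = μ(ℝ). Then lim_{c→∞} [ t·log c − ∫₀^c ( ∫ 1/(s+x) dμ(x) ) ds ] = ∫ log x dμ(x). -/
open Real MeasureTheory Filter

/-- Let `μ` be a finite Borel measure on `ℝ` whose support is a compact subset `K` of `(0,∞)`,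
and let `t = μ(ℝ)`.  Then
`lim_{c→∞} [ t·log c − ∫₀^c ( ∫ 1/(s+x) dμ(x) ) ds ] = ∫ log x dμ(x)`. -/
theorem stmt4 (μ : Measure ℝ) [IsFiniteMeasure μ]
    (K : Set ℝ) (hK : IsCompact K) (hKpos : K ⊆ Set.Ioi 0) (hμK : μ Kᶜ = 0) :
    Tendsto
      (fun c : ℝ =>
        (μ Set.univ).toReal * Real.log c - ∫ s in (0 : ℝ)..c, ∫ x, 1 / (s + x) ∂μ)
      atTop (nhds (∫ x, Real.log x ∂μ)) := by
  obtain ⟨a, b, ha, hab⟩ : ∃ a b : ℝ, 0 < a ∧ K ⊆ Set.Icc a b := by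
    rcases K.eq_empty_or_nonempty with h | h
    · exact ⟨1, 1, one_pos, by simp [h]⟩
    · refine ⟨sInf K, sSup K, hKpos (hK.sInf_mem h), fun x hx =>
        ⟨csInf_le hK.bddBelow hx, le_csSup hK.bddAbove hx⟩⟩
  have haeK : ∀ᵐ x ∂μ, x ∈ K := by
    rw [ae_iff]
    simpa [Set.compl_def] using hμK
  -- Integrability of log
  have hlogint : Integrable (fun x => Real.log x) μ := by
    refine Integrable.mono' (integrable_const (|Real.log a| + |Real.log b|))
      Real.measurable_log.aestronglyMeasurable ?_
    filter_upwards [haeK] with x hx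
    have h1 : Real.log a ≤ Real.log x := Real.log_le_log ha (hab hx).1
    have h2 : Real.log x ≤ Real.log b :=
      Real.log_le_log (lt_of_lt_of_le ha (hab hx).1) (hab hx).2
    have := neg_abs_le (Real.log a)
    have := le_abs_self (Real.log b)
    rw [Real.norm_eq_abs, abs_le]
    constructor <;> linarith [abs_nonneg (Real.log a), abs_nonneg (Real.log b)]
  have hint : ∀ c : ℝ, 0 ≤ c → Integrable (fun x => Real.log (c + x)) μ := by
    intro c hc
    refine Integrable.mono' (integrable_const (|Real.log a| + |Real.log (c + b)|))
      (Real.measurable_log.comp (measurable_const_add c)).aestronglyMeasurable ?_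
    filter_upwards [haeK] with x hx
    have hax : a ≤ c + x := le_add_of_nonneg_of_le hc (hab hx).1
    have h1 : Real.log a ≤ Real.log (c + x) := Real.log_le_log ha hax
    have h2 : Real.log (c + x) ≤ Real.log (c + b) :=
      Real.log_le_log (lt_of_lt_of_le ha hax) (by linarith [(hab hx).2])
    have := neg_abs_le (Real.log a)
    have := le_abs_self (Real.log (c + b))
    rw [Real.norm_eq_abs, abs_le]
    constructor <;> linarith [abs_nonneg (Real.log a), abs_nonneg (Real.log (c + b))]
  -- Fubini
  have hswap : ∀ c : ℝ, 0 ≤ c →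
      (∫ s in (0 : ℝ)..c, ∫ x, 1 / (s + x) ∂μ)
        = ∫ x, (Real.log (c + x) - Real.log x) ∂μ := by
    intro c hc
    rw [intervalIntegral.integral_of_le hc]
    haveI : IsFiniteMeasure (volume.restrict (Set.Ioc (0 : ℝ) c)) :=
      ⟨by rw [Measure.restrict_apply_univ]; exact measure_Ioc_lt_top⟩
    have hmeas : AEStronglyMeasurable (fun p : ℝ × ℝ => 1 / (p.1 + p.2))
        ((volume.restrict (Set.Ioc (0 : ℝ) c)).prod μ) := by
      simp only [one_div]
      exact (measurable_fst.add measurable_snd).inv.aestronglyMeasurable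
    have hae1 : ∀ᵐ p : ℝ × ℝ ∂((volume.restrict (Set.Ioc (0 : ℝ) c)).prod μ),
        p.1 ∈ Set.Ioc (0 : ℝ) c := by
      rw [ae_iff]
      have : {p : ℝ × ℝ | ¬ p.1 ∈ Set.Ioc (0 : ℝ) c} = (Set.Ioc (0 : ℝ) c)ᶜ ×ˢ Set.univ := by
        ext p; simp [Set.mem_prod]
      rw [this, Measure.prod_prod, Measure.restrict_apply' measurableSet_Ioc]
      simp
    have hae2 : ∀ᵐ p : ℝ × ℝ ∂((volume.restrict (Set.Ioc (0 : ℝ) c)).prod μ),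
        p.2 ∈ K := by
      rw [ae_iff]
      have : {p : ℝ × ℝ | ¬ p.2 ∈ K} = Set.univ ×ˢ Kᶜ := by
        ext p; simp [Set.mem_prod]
      rw [this, Measure.prod_prod, hμK, mul_zero]
    have hint2 : Integrable (fun p : ℝ × ℝ => 1 / (p.1 + p.2))
        ((volume.restrict (Set.Ioc (0 : ℝ) c)).prod μ) := by
      refine Integrable.mono' (integrable_const (1 / a)) hmeas ?_
      filter_upwards [hae1, hae2] with p hp1 hp2
      have hpa : a ≤ p.1 + p.2 := le_add_of_nonneg_of_le hp1.1.le (hab hp2).1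
      have hpos : 0 < p.1 + p.2 := lt_of_lt_of_le ha hpa
      rw [Real.norm_eq_abs, abs_of_pos (one_div_pos.mpr hpos)]
      exact one_div_le_one_div_of_le ha hpa
    rw [integral_integral_swap (f := fun s x => 1 / (s + x)) hint2]
    refine integral_congr_ae ?_
    filter_upwards [haeK] with x hx
    have hx0 : 0 < x := hKpos hx
    rw [← intervalIntegral.integral_of_le hc]
    have h1 : (∫ s in (0 : ℝ)..c, 1 / (s + x)) = ∫ u in (0 + x)..(c + x), 1 / u :=
      intervalIntegral.integral_comp_add_right (fun u => 1 / u) x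
    rw [h1, zero_add, integral_one_div
      (by
        intro hmem
        rcases Set.mem_uIcc.mp hmem with ⟨h, _⟩ | ⟨h, _⟩ <;> nlinarith),
      Real.log_div (by positivity) hx0.ne']
  -- the error term
  have hF : Tendsto (fun c : ℝ => ∫ x, (Real.log (c + x) - Real.log c) ∂μ)
      atTop (nhds 0) := by
    apply squeeze_zero_norm' (a := fun c : ℝ => (b * (μ Set.univ).toReal) * c⁻¹)
    · filter_upwards [eventually_ge_atTop (1 : ℝ)] with c hc
      have hc0 : (0 : ℝ) < c := lt_of_lt_of_le one_pos hc
      have hb : ‖∫ x, (Real.log (c + x) - Real.log c) ∂μ‖ ≤ (b / c) * (μ Set.univ).toReal := by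
        refine norm_integral_le_of_norm_le_const ?_
        filter_upwards [haeK] with x hx
        have hx0 : 0 < x := hKpos hx
        have hd : Real.log (c + x) - Real.log c = Real.log ((c + x) / c) := by
          rw [Real.log_div (by positivity) hc0.ne']
        have hub : Real.log ((c + x) / c) ≤ x / c := by
          have := Real.log_le_sub_one_of_pos (by positivity : (0 : ℝ) < (c + x) / c)
          have : Real.log ((c + x) / c) ≤ (c + x) / c - 1 := this
          have he : (c + x) / c - 1 = x / c := by field_simp; ring
          linarith [he ▸ this]
        have hnn : 0 ≤ Real.log ((c + x) / c) :=
          Real.log_nonneg (by rw [le_div_iff₀ hc0]; linarith)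
        rw [Real.norm_eq_abs, hd, abs_of_nonneg hnn]
        have : x / c ≤ b / c := by
          gcongr
          exact (hab hx).2
        linarith
      calc ‖∫ x, (Real.log (c + x) - Real.log c) ∂μ‖
          ≤ (b / c) * (μ Set.univ).toReal := hb
        _ = (b * (μ Set.univ).toReal) * c⁻¹ := by ring
    · have := tendsto_inv_atTop_zero.const_mul (b * (μ Set.univ).toReal) (f := fun c : ℝ => c⁻¹)
      simpa using this
  have heq : ∀ᶠ c in atTop,
      (∫ x, Real.log x ∂μ) - (∫ x, (Real.log (c + x) - Real.log c) ∂μ)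
        = (μ Set.univ).toReal * Real.log c - ∫ s in (0 : ℝ)..c, ∫ x, 1 / (s + x) ∂μ := by
    filter_upwards [eventually_ge_atTop (1 : ℝ)] with c hc
    have hc0 : (0 : ℝ) ≤ c := le_trans zero_le_one hc
    rw [hswap c hc0, integral_sub (hint c hc0) hlogint,
      integral_sub (hint c hc0) (integrable_const (Real.log c)), integral_const,
      smul_eq_mul]
    rw [measureReal_def]
    ring
  have hmain : Tendsto (fun c : ℝ =>
      (∫ x, Real.log x ∂μ) - (∫ x, (Real.log (c + x) - Real.log c) ∂μ))
      atTop (nhds ((∫ x, Real.log x ∂μ) - 0)) := tendsto_const_nhds.sub hF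
  rw [sub_zero] at hmain
  exact hmain.congr' heq
end

section
/- Let μ be a finite Borel measure on ℝ whose support is a compact subset of (0,∞), let t = μ(ℝ), and define ψ(z) = ∫ z·x/(1 − z·x) dμ(x) for z ≤ 0. Then for every A ∈ ℝ the improper integral ∫_{−∞}^A ψ(−e^v) dv converges absolutely, and ∫ log x dμ(x) = lim_{A→∞} [ −t·A − ∫_{−∞}^A ψ(−e^v) dv ]. -/
open Real MeasureTheory Filter Topology

/-- Let `μ` be a finite Borel measure on `ℝ` whose support is a compact subset `K` of `(0,∞)`,
let `t = μ(ℝ)`, and let `ψ(z) = ∫ z·x/(1 − z·x) dμ(x)` for `z ≤ 0`.  Then for every `A ∈ ℝ`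
the improper integral `∫_{−∞}^A ψ(−e^v) dv` converges absolutely, and
`∫ log x dμ(x) = lim_{A→∞} [ −t·A − ∫_{−∞}^A ψ(−e^v) dv ]`. -/
theorem stmt5 (μ : Measure ℝ) [IsFiniteMeasure μ]
    (K : Set ℝ) (hK : IsCompact K) (hKpos : K ⊆ Set.Ioi 0) (hμK : μ Kᶜ = 0) :
    (∀ A : ℝ,
      IntegrableOn
        (fun v : ℝ => ∫ x, (-Real.exp v) * x / (1 - (-Real.exp v) * x) ∂μ) (Set.Iic A)) ∧
    Tendsto
      (fun A : ℝ =>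
        -(μ Set.univ).toReal * A -
          ∫ v in Set.Iic A, ∫ x, (-Real.exp v) * x / (1 - (-Real.exp v) * x) ∂μ)
      atTop (nhds (∫ x, Real.log x ∂μ)) := by
  classical
  set t : ℝ := (μ Set.univ).toReal with ht
  -- bounds for K
  obtain ⟨a, b, ha0, hab, hKab⟩ :
      ∃ a b : ℝ, 0 < a ∧ a ≤ b ∧ ∀ x ∈ K, x ∈ Set.Icc a b := by
    by_cases hne : K.Nonempty
    · obtain ⟨a, haK, hamin⟩ := hK.exists_isLeast hne
      obtain ⟨b, hbK, hbmax⟩ := hK.exists_isGreatest hne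
      exact ⟨a, b, hKpos haK, hamin hbK, fun x hx => ⟨hamin hx, hbmax hx⟩⟩
    · exact ⟨1, 1, one_pos, le_rfl, fun x hx => absurd ⟨x, hx⟩ hne⟩
  have hb0 : 0 < b := lt_of_lt_of_le ha0 hab
  have hae : ∀ᵐ x ∂μ, x ∈ K := by
    rw [ae_iff]
    simpa [Set.compl_def] using hμK
  set F : ℝ → ℝ → ℝ := fun v x => (-Real.exp v) * x / (1 - (-Real.exp v) * x) with hF
  -- basic rewriting of F for positive x
  have hFval : ∀ v : ℝ, ∀ x : ℝ, 0 < x →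
      F v x = -(Real.exp v * x / (1 + Real.exp v * x)) := by
    intro v x hx
    have h1 : 1 - (-Real.exp v) * x = 1 + Real.exp v * x := by ring
    rw [hF]
    simp only
    rw [h1, neg_mul, neg_div]
  have hden : ∀ v x : ℝ, 0 < x → (0:ℝ) < 1 + Real.exp v * x := fun v x hx => by
    positivity
  -- measurability of F v
  have hFmeas : ∀ v : ℝ, AEStronglyMeasurable (F v) μ := by
    intro v
    exact ((measurable_const.mul measurable_id).div
      (measurable_const.sub (measurable_const.mul measurable_id))).aestronglyMeasurable
  -- norm bound for F
  have hFboundx : ∀ v x : ℝ, 0 < x → ‖F v x‖ ≤ Real.exp v * x := by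
    intro v x hx
    rw [hFval v x hx, norm_neg, Real.norm_eq_abs,
      abs_of_nonneg (by positivity : (0:ℝ) ≤ Real.exp v * x / (1 + Real.exp v * x))]
    exact div_le_self (by positivity) (by nlinarith [Real.exp_pos v])
  have hFbound : ∀ v : ℝ, ∀ x ∈ K, ‖F v x‖ ≤ Real.exp v * b := by
    intro v x hxK
    have hx : 0 < x := hKpos hxK
    have hxb : x ≤ b := (hKab x hxK).2
    calc ‖F v x‖ ≤ Real.exp v * x := hFboundx v x hx
      _ ≤ Real.exp v * b := by nlinarith [Real.exp_pos v]
  have hFbound1 : ∀ v : ℝ, ∀ x ∈ K, ‖F v x‖ ≤ 1 := by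
    intro v x hxK
    have hx : 0 < x := hKpos hxK
    rw [hFval v x hx, norm_neg, Real.norm_eq_abs,
      abs_of_nonneg (by positivity : (0:ℝ) ≤ Real.exp v * x / (1 + Real.exp v * x))]
    rw [div_le_one (hden v x hx)]
    linarith
  -- continuity of ψ∘(-exp)
  set ψ : ℝ → ℝ := fun v => ∫ x, F v x ∂μ with hψ
  have hψcont : Continuous ψ := by
    refine continuous_of_dominated hFmeas ?_ (integrable_const (1:ℝ)) ?_
    · intro v
      filter_upwards [hae] with x hxK using hFbound1 v x hxK
    · filter_upwards [hae] with x hxK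
      have hx : 0 < x := hKpos hxK
      apply Continuous.div
      · fun_prop
      · fun_prop
      · intro v
        have := hden v x hx
        intro h
        rw [show (1:ℝ) - -Real.exp v * x = 1 + Real.exp v * x by ring] at h
        linarith
  -- pointwise norm bound for ψ
  have hψbound : ∀ v : ℝ, ‖ψ v‖ ≤ Real.exp v * b * t := by
    intro v
    have : ‖ψ v‖ ≤ ∫ _x, Real.exp v * b ∂μ := by
      apply norm_integral_le_of_norm_le (integrable_const _)
      filter_upwards [hae] with x hxK using hFbound v x hxK
    rw [integral_const] at this
    calc ‖ψ v‖ ≤ (μ Set.univ).toReal • (Real.exp v * b) := this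
      _ = Real.exp v * b * t := by rw [smul_eq_mul, ht]; ring
  -- Part 1 : integrability on Iic A
  have part1 : ∀ A : ℝ, IntegrableOn ψ (Set.Iic A) := by
    intro A
    apply Integrable.mono' ((integrableOn_exp_Iic A).const_mul (b * t))
      hψcont.aestronglyMeasurable
    filter_upwards with v
    calc ‖ψ v‖ ≤ Real.exp v * b * t := hψbound v
      _ = b * t * Real.exp v := by ring
  refine ⟨part1, ?_⟩
  -- inner improper integral
  have hinner : ∀ A : ℝ, ∀ x : ℝ, 0 < x →
      ∫ v in Set.Iic A, F v x = -Real.log (1 + Real.exp A * x) := by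
    intro A x hx
    have hint : IntegrableOn (fun v => F v x) (Set.Iic A) := by
      apply Integrable.mono' ((integrableOn_exp_Iic A).const_mul x)
      · exact ((Real.measurable_exp.neg.mul_const x).div
          (measurable_const.sub (Real.measurable_exp.neg.mul_const x))).aestronglyMeasurable
      · filter_upwards with v
        calc ‖F v x‖ ≤ Real.exp v * x := hFboundx v x hx
          _ = x * Real.exp v := by ring
    have hderiv : ∀ v ∈ Set.Iio A,
        HasDerivAt (fun v => -Real.log (1 + Real.exp v * x)) (F v x) v := by
      intro v _
      have h1 : HasDerivAt (fun v => 1 + Real.exp v * x) (Real.exp v * x) v :=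
        ((Real.hasDerivAt_exp v).mul_const x).const_add 1
      have h2 := (h1.log (by positivity)).neg
      rw [hFval v x hx]
      exact h2
    have hcontA : ContinuousWithinAt (fun v => -Real.log (1 + Real.exp v * x))
        (Set.Iic A) A := by
      apply ContinuousAt.continuousWithinAt
      have h1 : HasDerivAt (fun v => 1 + Real.exp v * x) (Real.exp A * x) A :=
        ((Real.hasDerivAt_exp A).mul_const x).const_add 1
      exact ((h1.log (by positivity)).neg).continuousAt
    have htend : Tendsto (fun v => -Real.log (1 + Real.exp v * x)) atBot (𝓝 0) := by
      have h1 : Tendsto (fun v : ℝ => 1 + Real.exp v * x) atBot (𝓝 1) := by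
        have := (Real.tendsto_exp_atBot.mul_const x).const_add (1:ℝ)
        simpa using this
      have h2 := ((Real.continuousAt_log one_ne_zero).tendsto.comp h1).neg
      simpa using h2
    have := integral_Iic_of_hasDerivAt_of_tendsto hcontA hderiv hint htend
    rw [this, sub_zero]
  -- Fubini to swap the order of integration
  have hswap : ∀ A : ℝ,
      ∫ v in Set.Iic A, ψ v = ∫ x, (∫ v in Set.Iic A, F v x) ∂μ := by
    intro A
    have hker : ∀ᵐ p ∂((volume.restrict (Set.Iic A)).prod μ), p.2 ∈ K := by
      rw [ae_iff]
      have hset : {p : ℝ × ℝ | ¬ p.2 ∈ K} = Set.univ ×ˢ Kᶜ := by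
        ext p; simp [Set.mem_prod]
      rw [hset, Measure.prod_prod, hμK, mul_zero]
    have hprod : Integrable (Function.uncurry F) ((volume.restrict (Set.Iic A)).prod μ) := by
      apply Integrable.mono'
        (g := fun p : ℝ × ℝ => Real.exp p.1 * b)
        (((integrableOn_exp_Iic A).mul_prod (integrable_const b)))
      · exact (((Real.measurable_exp.comp measurable_fst).neg.mul measurable_snd).div
          (measurable_const.sub
            ((Real.measurable_exp.comp measurable_fst).neg.mul
              measurable_snd))).aestronglyMeasurable
      · filter_upwards [hker] with p hp
        exact hFbound p.1 p.2 hp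
    exact integral_integral_swap hprod
  -- integrability of log bounds
  have hlogmeas : ∀ c : ℝ, AEStronglyMeasurable (fun x => Real.log (c + x)) μ :=
    fun c => (Real.measurable_log.comp (measurable_const.add measurable_id)).aestronglyMeasurable
  have hlogint : ∀ A : ℝ, Integrable (fun x => Real.log (1 + Real.exp A * x)) μ := by
    intro A
    apply Integrable.mono' (integrable_const (Real.log (1 + Real.exp A * b)))
    · exact (Real.measurable_log.comp
        (measurable_const.add (measurable_const.mul measurable_id))).aestronglyMeasurable
    · filter_upwards [hae] with x hxK
      have hx : 0 < x := hKpos hxK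
      have hxb : x ≤ b := (hKab x hxK).2
      rw [Real.norm_eq_abs, abs_of_nonneg]
      · apply Real.log_le_log (by positivity)
        nlinarith [Real.exp_pos A]
      · apply Real.log_nonneg
        nlinarith [Real.exp_pos A]
  -- the key algebraic identity
  have hkey : ∀ A : ℝ,
      -t * A - ∫ v in Set.Iic A, ψ v = ∫ x, Real.log (Real.exp (-A) + x) ∂μ := by
    intro A
    rw [hswap A]
    have h1 : ∫ x, (∫ v in Set.Iic A, F v x) ∂μ
        = ∫ x, -Real.log (1 + Real.exp A * x) ∂μ := by
      apply integral_congr_ae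
      filter_upwards [hae] with x hxK
      exact hinner A x (hKpos hxK)
    rw [h1, integral_neg, sub_neg_eq_add]
    have h2 : ∀ x ∈ K, Real.log (1 + Real.exp A * x) =
        Real.log (Real.exp (-A) + x) + A := by
      intro x hxK
      have hx : 0 < x := hKpos hxK
      have hpos : (0:ℝ) < Real.exp (-A) + x := by positivity
      have : Real.log ((Real.exp (-A) + x) * Real.exp A)
          = Real.log (Real.exp (-A) + x) + A := by
        rw [Real.log_mul (ne_of_gt hpos) (Real.exp_ne_zero A), Real.log_exp]
      rw [← this]
      congr 1
      have hmul : Real.exp (-A) * Real.exp A = 1 := by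
        rw [← Real.exp_add]; simp
      linear_combination -hmul
    have h3 : ∫ x, Real.log (1 + Real.exp A * x) ∂μ
        = (∫ x, Real.log (Real.exp (-A) + x) ∂μ) + t * A := by
      have hcongr : ∫ x, Real.log (1 + Real.exp A * x) ∂μ
          = ∫ x, (Real.log (Real.exp (-A) + x) + A) ∂μ := by
        apply integral_congr_ae
        filter_upwards [hae] with x hxK
        exact h2 x hxK
      have hint2 : Integrable (fun x => Real.log (Real.exp (-A) + x)) μ := by
        have : Integrable (fun x => Real.log (1 + Real.exp A * x) - A) μ :=
          (hlogint A).sub (integrable_const A)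
        apply this.congr
        filter_upwards [hae] with x hxK
        rw [h2 x hxK]; ring
      rw [hcongr, integral_add hint2 (integrable_const A), integral_const,
        smul_eq_mul, ht]
      rfl
    rw [h3]
    ring
  -- final limit via dominated convergence
  have hlim : Tendsto (fun A : ℝ => ∫ x, Real.log (Real.exp (-A) + x) ∂μ) atTop
      (𝓝 (∫ x, Real.log x ∂μ)) := by
    set C : ℝ := max |Real.log a| |Real.log (1 + b)| with hC
    apply tendsto_integral_filter_of_dominated_convergence (fun _ => C)
    · filter_upwards with A using hlogmeas (Real.exp (-A))
    · filter_upwards [eventually_ge_atTop (0:ℝ)] with A hA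
      filter_upwards [hae] with x hxK
      have hx : 0 < x := hKpos hxK
      have hxa : a ≤ x := (hKab x hxK).1
      have hxb : x ≤ b := (hKab x hxK).2
      have hexp : Real.exp (-A) ≤ 1 := Real.exp_le_one_iff.mpr (by linarith)
      have hlo : Real.log a ≤ Real.log (Real.exp (-A) + x) := by
        apply Real.log_le_log ha0
        have := Real.exp_pos (-A)
        linarith
      have hhi : Real.log (Real.exp (-A) + x) ≤ Real.log (1 + b) := by
        apply Real.log_le_log (by positivity)
        linarith
      rw [Real.norm_eq_abs]
      exact abs_le_max_abs_abs hlo hhi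
    · exact integrable_const C
    · filter_upwards [hae] with x hxK
      have hx : 0 < x := hKpos hxK
      have h1 : Tendsto (fun A : ℝ => Real.exp (-A) + x) atTop (𝓝 x) := by
        have := Real.tendsto_exp_neg_atTop_nhds_zero.add_const x
        simpa using this
      have h2 := (Real.continuousAt_log (ne_of_gt hx)).tendsto.comp h1
      exact h2
  exact hlim.congr fun A => (hkey A).symm
end

section
/- Let μ be a nonzero finite Borel measure on ℝ whose support is a compact subset of (0,∞), let t = μ(ℝ) > 0, and define ψ(z) = ∫ z·x/(1 − z·x) dμ(x) for z < 0. Then ψ is a continuous, strictly increasing bijection from (−∞, 0) onto (−t, 0); in particular ψ(z) → 0 as z → 0⁻ and ψ(z) → −t as z → −∞. -/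
open Real MeasureTheory Filter

lemma aux_denom {z x : ℝ} (hz : z < 0) (hx : 0 < x) : 0 < 1 - z * x := by nlinarith

lemma aux_mem {z x : ℝ} (hz : z < 0) (hx : 0 < x) :
    z * x / (1 - z * x) ∈ Set.Ioo (-1 : ℝ) 0 := by
  have hd := aux_denom hz hx
  constructor
  · rw [lt_div_iff₀ hd]; nlinarith
  · exact div_neg_of_neg_of_pos (by nlinarith) hd

lemma aux_bound {z x : ℝ} (hz : z < 0) (hx : 0 < x) :
    ‖z * x / (1 - z * x)‖ ≤ 1 := by
  have h := aux_mem hz hx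
  rw [Real.norm_eq_abs, abs_le]
  exact ⟨h.1.le, h.2.le.trans zero_le_one⟩

lemma aux_strict {z1 z2 x : ℝ} (hx : 0 < x) (h12 : z1 < z2) (hz2 : z2 < 0) :
    z1 * x / (1 - z1 * x) < z2 * x / (1 - z2 * x) := by
  have h1 := aux_denom (h12.trans hz2) hx
  have h2 := aux_denom hz2 hx
  rw [div_lt_div_iff₀ h1 h2]
  nlinarith [mul_pos (sub_pos.mpr h12) hx]

lemma aux_meas (μ : Measure ℝ) (z : ℝ) :
    AEStronglyMeasurable (fun x => z * x / (1 - z * x)) μ :=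
  ((measurable_const.mul measurable_id).div
    (measurable_const.sub (measurable_const.mul measurable_id))).aestronglyMeasurable

lemma aux_int (μ : Measure ℝ) [IsFiniteMeasure μ] (hae : ∀ᵐ x ∂μ, 0 < x) {z : ℝ} (hz : z < 0) :
    Integrable (fun x => z * x / (1 - z * x)) μ := by
  refine (integrable_const (1:ℝ)).mono' (aux_meas μ z) ?_
  exact hae.mono fun x hx => aux_bound hz hx

lemma integral_pos_of_ae_pos (μ : Measure ℝ) [IsFiniteMeasure μ] (hμ : μ ≠ 0)
    {g : ℝ → ℝ} (hg : Integrable g μ) (h : ∀ᵐ x ∂μ, 0 < g x) : 0 < ∫ x, g x ∂μ := by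
  rw [integral_pos_iff_support_of_nonneg_ae (h.mono fun x hx => hx.le) hg]
  have h0 : μ (Function.support g)ᶜ = 0 := by
    refine measure_mono_null ?_ (ae_iff.mp h)
    intro x hx
    simp only [Set.mem_compl_iff, Function.mem_support, not_not] at hx
    simp [hx]
  have huniv : μ Set.univ ≤ μ (Function.support g) + μ (Function.support g)ᶜ := by
    rw [← Set.union_compl_self (Function.support g)]
    exact measure_union_le _ _
  rw [h0, add_zero] at huniv
  exact lt_of_lt_of_le (Measure.measure_univ_pos.mpr hμ) huniv

/-- Let `μ` be a nonzero finite Borel measure on `ℝ` whose support is a compact subset `K`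
of `(0,∞)`, let `t = μ(ℝ) > 0`, and let `ψ(z) = ∫ z·x/(1 − z·x) dμ(x)` for `z < 0`.  Then
`ψ` is a continuous, strictly increasing bijection from `(−∞, 0)` onto `(−t, 0)`; in
particular `ψ(z) → 0` as `z → 0⁻` and `ψ(z) → −t` as `z → −∞`. -/
theorem stmt6 (μ : Measure ℝ) [IsFiniteMeasure μ] (hμ : μ ≠ 0)
    (K : Set ℝ) (hK : IsCompact K) (hKpos : K ⊆ Set.Ioi 0) (hμK : μ Kᶜ = 0) :
    ContinuousOn (fun z : ℝ => ∫ x, z * x / (1 - z * x) ∂μ) (Set.Iio 0) ∧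
    StrictMonoOn (fun z : ℝ => ∫ x, z * x / (1 - z * x) ∂μ) (Set.Iio 0) ∧
    Set.BijOn (fun z : ℝ => ∫ x, z * x / (1 - z * x) ∂μ) (Set.Iio 0)
      (Set.Ioo (-(μ Set.univ).toReal) 0) ∧
    Tendsto (fun z : ℝ => ∫ x, z * x / (1 - z * x) ∂μ)
      (nhdsWithin 0 (Set.Iio 0)) (nhds 0) ∧
    Tendsto (fun z : ℝ => ∫ x, z * x / (1 - z * x) ∂μ)
      atBot (nhds (-(μ Set.univ).toReal)) := by
  set t : ℝ := (μ Set.univ).toReal with ht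
  set ψ : ℝ → ℝ := fun z : ℝ => ∫ x, z * x / (1 - z * x) ∂μ with hψ
  have hae : ∀ᵐ x ∂μ, 0 < x := by
    have hK' : ∀ᵐ x ∂μ, x ∈ K := by
      rw [ae_iff]
      simpa [Set.compl_def] using hμK
    exact hK'.mono fun x hx => hKpos hx
  have htpos : 0 < t :=
    ENNReal.toReal_pos (Measure.measure_univ_ne_zero.mpr hμ) (measure_ne_top μ _)
  -- strict monotonicity
  have hmono : StrictMonoOn ψ (Set.Iio 0) := by
    intro z1 hz1 z2 hz2 h12
    have hdiff : 0 < ∫ x, (z2 * x / (1 - z2 * x) - z1 * x / (1 - z1 * x)) ∂μ := by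
      apply integral_pos_of_ae_pos μ hμ ((aux_int μ hae hz2).sub (aux_int μ hae hz1))
      exact hae.mono fun x hx => sub_pos.mpr (aux_strict hx h12 hz2)
    rw [integral_sub (aux_int μ hae hz2) (aux_int μ hae hz1)] at hdiff
    simpa [hψ] using sub_pos.mp (by simpa using hdiff)
  -- continuity at each point
  have hcontAt : ∀ z0 ∈ Set.Iio (0:ℝ), ContinuousAt ψ z0 := by
    intro z0 hz0
    apply continuousAt_of_dominated (bound := fun _ => (1:ℝ))
    · exact Filter.Eventually.of_forall fun z => aux_meas μ z
    · filter_upwards [Iio_mem_nhds hz0] with z hz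
      exact hae.mono fun x hx => aux_bound hz hx
    · exact integrable_const 1
    · refine hae.mono fun x hx => ?_
      have hd := aux_denom hz0 hx
      exact ContinuousAt.div (continuousAt_id.mul continuousAt_const)
        (continuousAt_const.sub (continuousAt_id.mul continuousAt_const)) (ne_of_gt hd)
  have hcont : ContinuousOn ψ (Set.Iio 0) :=
    fun z hz => (hcontAt z hz).continuousWithinAt
  -- ψ maps into Ioo (-t) 0
  have hmaps : ∀ z < (0:ℝ), ψ z ∈ Set.Ioo (-t) 0 := by
    intro z hz
    constructor
    · have h1 : 0 < ∫ x, (z * x / (1 - z * x) + 1) ∂μ := by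
        apply integral_pos_of_ae_pos μ hμ ((aux_int μ hae hz).add (integrable_const 1))
        exact hae.mono fun x hx => by simp only [Pi.add_apply]; linarith [(aux_mem hz hx).1]
      rw [integral_add (aux_int μ hae hz) (integrable_const 1), integral_const] at h1
      simp only [smul_eq_mul, mul_one] at h1
      simp only [hψ]
      linarith [show μ.real Set.univ = t from rfl]
    · have h1 : 0 < ∫ x, (-(z * x / (1 - z * x))) ∂μ := by
        apply integral_pos_of_ae_pos μ hμ (aux_int μ hae hz).neg
        exact hae.mono fun x hx => by simp only [Pi.neg_apply]; linarith [(aux_mem hz hx).2]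
      rw [integral_neg] at h1
      simp only [hψ]
      linarith
  -- limit at 0⁻
  have h0 : Tendsto ψ (nhdsWithin 0 (Set.Iio 0)) (nhds 0) := by
    have h : Tendsto ψ (nhdsWithin 0 (Set.Iio 0)) (nhds (∫ x, (0:ℝ) ∂μ)) := by
      apply tendsto_integral_filter_of_dominated_convergence (fun _ => (1:ℝ))
      · exact Filter.Eventually.of_forall fun z => aux_meas μ z
      · filter_upwards [self_mem_nhdsWithin] with z hz
        exact hae.mono fun x hx => aux_bound hz hx
      · exact integrable_const 1
      · refine hae.mono fun x hx => ?_
        have hc : ContinuousAt (fun z : ℝ => z * x / (1 - z * x)) 0 := by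
          apply ContinuousAt.div (continuousAt_id.mul continuousAt_const)
            (continuousAt_const.sub (continuousAt_id.mul continuousAt_const))
          simp
        have := hc.tendsto.mono_left (nhdsWithin_le_nhds (s := Set.Iio 0))
        simpa using this
    simpa using h
  -- limit at -∞
  have hbot : Tendsto ψ atBot (nhds (-t)) := by
    have h : Tendsto ψ atBot (nhds (∫ x, (-1:ℝ) ∂μ)) := by
      apply tendsto_integral_filter_of_dominated_convergence (fun _ => (1:ℝ))
      · exact Filter.Eventually.of_forall fun z => aux_meas μ z
      · filter_upwards [Iio_mem_atBot 0] with z hz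
        exact hae.mono fun x hx => aux_bound hz hx
      · exact integrable_const 1
      · refine hae.mono fun x hx => ?_
        have h1 : Tendsto (fun z : ℝ => 1 - z * x) atBot atTop := by
          have h2 : Tendsto (fun z : ℝ => z * x) atBot atBot :=
            tendsto_id.atBot_mul_const hx
          have h3 : Tendsto (fun z : ℝ => -(z * x)) atBot atTop :=
            tendsto_neg_atBot_atTop.comp h2
          have h4 := tendsto_atTop_add_const_left atBot (1:ℝ) h3
          simpa [sub_eq_add_neg] using h4
        have h2 : Tendsto (fun z : ℝ => (1 - z * x)⁻¹) atBot (nhds 0) :=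
          h1.inv_tendsto_atTop
        have h3 : Tendsto (fun z : ℝ => -1 + (1 - z * x)⁻¹) atBot (nhds (-1)) := by
          simpa using tendsto_const_nhds.add h2
        apply h3.congr'
        filter_upwards [Iio_mem_atBot 0] with z hz
        have hd := aux_denom hz hx
        field_simp
        ring
    rw [integral_const] at h
    simpa [show t = μ.real Set.univ from rfl] using h
  -- bijectivity
  have hbij : Set.BijOn ψ (Set.Iio 0) (Set.Ioo (-t) 0) := by
    refine ⟨fun z hz => hmaps z hz, hmono.injOn, ?_⟩
    intro y hy
    obtain ⟨hy1, hy2⟩ := hy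
    have h1 : ∀ᶠ z in nhdsWithin (0:ℝ) (Set.Iio 0), y < ψ z ∧ z < 0 :=
      (h0.eventually (eventually_gt_nhds hy2)).and
        (eventually_mem_nhdsWithin.mono fun z hz => hz)
    obtain ⟨z1, hyz1, hz1⟩ := h1.exists
    have h2 : ∀ᶠ z in atBot, ψ z < y ∧ z < z1 :=
      (hbot.eventually (eventually_lt_nhds hy1)).and (eventually_lt_atBot z1)
    obtain ⟨z2, hz2y, hz21⟩ := h2.exists
    have hsub : Set.Icc z2 z1 ⊆ Set.Iio 0 := fun w hw => lt_of_le_of_lt hw.2 hz1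
    have hcI : ContinuousOn ψ (Set.Icc z2 z1) :=
      fun w hw => (hcontAt w (hsub hw)).continuousWithinAt
    obtain ⟨z, hzmem, hzeq⟩ := intermediate_value_Icc hz21.le hcI ⟨hz2y.le, hyz1.le⟩
    exact ⟨z, hsub hzmem, hzeq⟩
  exact ⟨hcont, hmono, hbij, h0, hbot⟩
end

section
/- Let μ be a nonzero finite Borel measure on ℝ whose support is a compact subset of (0,∞), let t = μ(ℝ) > 0, let ψ(z) = ∫ z·x/(1 − z·x) dμ(x) for z < 0, and let ψ^{(−1)} : (−t, 0) → (−∞, 0) denote the inverse of the bijection ψ : (−∞,0) → (−t,0). Then the improper integral ∫_{−t}^0 log(−ψ^{(−1)}(u)) du converges, and ∫ log x dμ(x) = −∫_{−t}^0 log(−ψ^{(−1)}(u)) du. -/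
open Real MeasureTheory Filter
open Set

lemma ftc_Ioi {f F : ℝ → ℝ} {l m : ℝ}
    (hF : ∀ z ∈ Ioi (0:ℝ), HasDerivAt F (f z) z)
    (hfi : IntegrableOn f (Ioi (0:ℝ)))
    (h0 : Tendsto F (nhdsWithin 0 (Ioi 0)) (nhds l))
    (htop : Tendsto F atTop (nhds m)) :
    ∫ z in Ioi (0:ℝ), f z = m - l := by
  set s : ℕ → Set ℝ := fun n => Ioc (1/(n+1) : ℝ) (n+1) with hs
  have hpos : ∀ n : ℕ, (0:ℝ) < 1/(n+1) := by
    intro n; positivity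
  have hle : ∀ n : ℕ, (1/(n+1) : ℝ) ≤ n+1 := by
    intro n
    have h1 : (1:ℝ) ≤ n+1 := by
      have : (0:ℝ) ≤ n := Nat.cast_nonneg n
      linarith
    calc (1/(n+1) : ℝ) ≤ 1 := by
          rw [div_le_one (by positivity)]; exact h1
      _ ≤ n+1 := h1
  have hsub : ∀ n : ℕ, s n ⊆ Ioi (0:ℝ) := by
    intro n z hz
    exact lt_trans (hpos n) hz.1
  have hmono : Monotone s := by
    intro i j hij
    apply Ioc_subset_Ioc
    · apply one_div_le_one_div_of_le (by positivity)
      have : (i:ℝ) ≤ j := Nat.cast_le.2 hij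
      linarith
    · have : (i:ℝ) ≤ j := Nat.cast_le.2 hij
      linarith
  have hunion : (⋃ n, s n) = Ioi (0:ℝ) := by
    ext z
    simp only [mem_iUnion, mem_Ioc, mem_Ioi]
    constructor
    · rintro ⟨n, h1, _⟩; exact lt_trans (hpos n) h1
    · intro hz
      obtain ⟨n, hn⟩ := exists_nat_ge (max z (1/z))
      refine ⟨n, ?_, ?_⟩
      · have h1 : 1/z ≤ n := le_trans (le_max_right _ _) hn
        have h2 : 1/z < n+1 := lt_of_le_of_lt h1 (by linarith)
        calc (1/(n+1) : ℝ) < 1/(1/z) := by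
              apply one_div_lt_one_div_of_lt (by positivity) h2
          _ = z := one_div_one_div z
      · have : z ≤ n := le_trans (le_max_left _ _) hn
        linarith
  have hmeas : ∀ n, MeasurableSet (s n) := fun n => measurableSet_Ioc
  have hlim := tendsto_setIntegral_of_monotone hmeas hmono (hunion ▸ hfi)
  rw [hunion] at hlim
  have heval : ∀ n : ℕ, ∫ z in s n, f z = F (n+1) - F (1/(n+1)) := by
    intro n
    rw [← intervalIntegral.integral_of_le (hle n)]
    apply intervalIntegral.integral_eq_sub_of_hasDerivAt
    · intro x hx
      rw [uIcc_of_le (hle n)] at hx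
      exact hF x (lt_of_lt_of_le (hpos n) hx.1)
    · rw [intervalIntegrable_iff_integrableOn_Ioc_of_le (hle n)]
      exact hfi.mono (hsub n) le_rfl
  have h1 : Tendsto (fun n : ℕ => F ((n:ℝ)+1)) atTop (nhds m) := by
    apply htop.comp
    exact tendsto_atTop_add_const_right _ 1 tendsto_natCast_atTop_atTop
  have h2 : Tendsto (fun n : ℕ => F (1/((n:ℝ)+1))) atTop (nhds l) := by
    apply h0.comp
    rw [tendsto_nhdsWithin_iff]
    exact ⟨tendsto_one_div_add_atTop_nhds_zero_nat, Eventually.of_forall fun n => hpos n⟩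
  have h3 : Tendsto (fun n : ℕ => ∫ z in s n, f z) atTop (nhds (m - l)) := by
    simp_rw [heval]
    exact h1.sub h2
  exact tendsto_nhds_unique hlim h3

lemma integrableOn_neg_log_Ioc : IntegrableOn (fun w : ℝ => -Real.log w) (Ioc (0:ℝ) 1) := by
  apply intervalIntegral.integrableOn_deriv_of_nonneg
    (g := fun w => w - w * Real.log w)
  · exact (continuous_id.sub Real.continuous_mul_log).continuousOn
  · intro x hx
    have hx0 : x ≠ 0 := ne_of_gt hx.1
    have h1 : HasDerivAt (fun w : ℝ => w - w * Real.log w) (1 - (1 * Real.log x + x * x⁻¹)) x :=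
      (hasDerivAt_id x).sub ((hasDerivAt_id x).mul (Real.hasDerivAt_log hx0))
    convert h1 using 1
    field_simp
    ring
  · intro x hx
    simp only [neg_nonneg]
    exact Real.log_nonpos hx.1.le hx.2.le

lemma integrableOn_log_div_sq : IntegrableOn (fun w : ℝ => Real.log w / w^2) (Ioi (1:ℝ)) := by
  apply integrableOn_Ioi_deriv_of_nonneg' (g := fun w => -(Real.log w + 1)/w) (l := 0)
  · intro x hx
    have hx0 : (0:ℝ) < x := lt_of_lt_of_le one_pos hx
    have h1 : HasDerivAt (fun w : ℝ => -(Real.log w + 1)/w)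
        ((-x⁻¹ * x - (-(Real.log x + 1)) * 1) / x^2) x :=
      (((Real.hasDerivAt_log (ne_of_gt hx0)).add_const 1).neg).div (hasDerivAt_id x)
        (ne_of_gt hx0)
    convert h1 using 1
    field_simp
    ring
  · intro x hx
    have hx1 : (1:ℝ) < x := hx
    have : 0 ≤ Real.log x := Real.log_nonneg hx1.le
    positivity
  · have h1 : Tendsto (fun w : ℝ => Real.log w / w) atTop (nhds 0) :=
      Real.isLittleO_log_id_atTop.tendsto_div_nhds_zero
    have h2 : Tendsto (fun w : ℝ => (1:ℝ)/w) atTop (nhds (0:ℝ)) := by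
      simpa using tendsto_inv_atTop_zero (𝕜 := ℝ)
    have h3 : Tendsto (fun w : ℝ => -(Real.log w / w + 1/w)) atTop (nhds (-(0+0))) :=
      (h1.add h2).neg
    simp only [add_zero, neg_zero] at h3
    apply h3.congr'
    filter_upwards [eventually_gt_atTop (0:ℝ)] with w hw
    field_simp

lemma inner_meas (x : ℝ) : Measurable (fun w : ℝ => Real.log w * (x / (1+w*x)^2)) := by
  exact Real.measurable_log.mul
    (measurable_const.div ((measurable_const.add (measurable_id.mul_const x)).pow_const 2))

lemma inner_integrable {a b x : ℝ} (ha : 0 < a) (hx : x ∈ Icc a b) :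
    IntegrableOn (fun w : ℝ => Real.log w * (x/(1+w*x)^2)) (Ioi (0:ℝ)) := by
  have hx0 : 0 < x := lt_of_lt_of_le ha hx.1
  have hmeas : AEStronglyMeasurable (fun w : ℝ => Real.log w * (x/(1+w*x)^2)) volume :=
    (inner_meas x).aestronglyMeasurable
  have key : ∀ w : ℝ, 0 < w → ‖Real.log w * (x/(1+w*x)^2)‖
      = |Real.log w| * (x/(1+w*x)^2) := by
    intro w hw
    have hd : (0:ℝ) < (1+w*x)^2 := by positivity
    rw [Real.norm_eq_abs, abs_mul, abs_of_nonneg (by positivity : (0:ℝ) ≤ x/(1+w*x)^2)]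
  rw [← Ioc_union_Ioi_eq_Ioi (zero_le_one : (0:ℝ) ≤ 1)]
  apply IntegrableOn.union
  · apply Integrable.mono' (integrableOn_neg_log_Ioc.const_mul b)
    · exact hmeas.restrict
    · filter_upwards [ae_restrict_mem measurableSet_Ioc] with w hw
      rw [key w hw.1]
      have hlog : Real.log w ≤ 0 := Real.log_nonpos hw.1.le hw.2
      have h1 : x/(1+w*x)^2 ≤ b := by
        have h2 : (1:ℝ) ≤ (1+w*x)^2 := by nlinarith [mul_nonneg hw.1.le hx0.le, sq_nonneg (w*x)]
        calc x/(1+w*x)^2 ≤ x/1 := by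
              apply div_le_div_of_nonneg_left hx0.le one_pos h2
          _ = x := div_one x
          _ ≤ b := hx.2
      rw [abs_of_nonpos hlog]
      have hbnn : 0 ≤ -Real.log w := by linarith
      calc -Real.log w * (x/(1+w*x)^2) ≤ -Real.log w * b := by
            apply mul_le_mul_of_nonneg_left h1 hbnn
        _ = b * -Real.log w := mul_comm _ _
  · apply Integrable.mono' (integrableOn_log_div_sq.const_mul a⁻¹)
    · exact hmeas.restrict
    · filter_upwards [ae_restrict_mem measurableSet_Ioi] with w hw
      have hw0 : (0:ℝ) < w := lt_trans one_pos hw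
      rw [key w hw0]
      have hlog : 0 ≤ Real.log w := Real.log_nonneg (le_of_lt hw)
      rw [abs_of_nonneg hlog]
      have h1 : x/(1+w*x)^2 ≤ 1/(a*w^2) := by
        have hwx : (0:ℝ) < (w*x)^2 := by positivity
        have h2 : (w*x)^2 ≤ (1+w*x)^2 := by nlinarith [hw0.le, hx0.le]
        calc x/(1+w*x)^2 ≤ x/(w*x)^2 := div_le_div_of_nonneg_left hx0.le hwx h2
          _ = 1/(x*w^2) := by field_simp
          _ ≤ 1/(a*w^2) := by
              apply div_le_div_of_nonneg_left one_pos.le (by positivity)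
              nlinarith [hx.1, hw0]
      calc Real.log w * (x/(1+w*x)^2) ≤ Real.log w * (1/(a*w^2)) :=
            mul_le_mul_of_nonneg_left h1 hlog
        _ = a⁻¹ * (Real.log w / w^2) := by field_simp

lemma inner_value {a b x : ℝ} (ha : 0 < a) (hx : x ∈ Icc a b) :
    ∫ w in Ioi (0:ℝ), Real.log w * (x/(1+w*x)^2) = -Real.log x := by
  have hx0 : 0 < x := lt_of_lt_of_le ha hx.1
  have := ftc_Ioi (F := fun w => Real.log w * (w*x/(1+w*x)) - Real.log (1+w*x))
    (f := fun w => Real.log w * (x/(1+w*x)^2)) (l := 0) (m := -Real.log x) ?_ ?_ ?_ ?_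
  · rw [this, sub_zero]
  · intro w hw
    have hw0 : (0:ℝ) < w := hw
    have hden : (0:ℝ) < 1 + w*x := by positivity
    have hden' : (1:ℝ) + w*x ≠ 0 := ne_of_gt hden
    have h1 : HasDerivAt (fun w : ℝ => w*x/(1+w*x))
        ((x*(1+w*x) - w*x*x)/(1+w*x)^2) w := by
      have := ((hasDerivAt_id w).mul_const x).div
        (((hasDerivAt_id w).mul_const x).const_add 1) hden'
      simpa [Pi.div_def] using this
    have h2 : HasDerivAt (fun w : ℝ => Real.log w * (w*x/(1+w*x)))
        (w⁻¹ * (w*x/(1+w*x)) + Real.log w * ((x*(1+w*x) - w*x*x)/(1+w*x)^2)) w :=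
      (Real.hasDerivAt_log (ne_of_gt hw0)).mul h1
    have h3 : HasDerivAt (fun w : ℝ => Real.log (1+w*x)) ((1+w*x)⁻¹ * x) w := by
      have h4 : HasDerivAt (fun w : ℝ => 1+w*x) x w := by
        simpa using ((hasDerivAt_id w).mul_const x).const_add 1
      exact (Real.hasDerivAt_log hden').comp w h4
    have h5 := h2.sub h3
    refine h5.congr_deriv ?_
    field_simp
    ring
  · exact (inner_integrable ha hx)
  · -- limit at 0⁺
    have e1 : ∀ w : ℝ, Real.log w * (w*x/(1+w*x)) = (w * Real.log w) * (x/(1+w*x)) := by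
      intro w; ring
    have t1 : Tendsto (fun w : ℝ => w * Real.log w) (nhds 0) (nhds 0) := by
      have := Real.continuous_mul_log.tendsto 0
      simpa using this
    have t2 : Tendsto (fun w : ℝ => x/(1+w*x)) (nhds 0) (nhds x) := by
      have t3 : Tendsto (fun w : ℝ => 1+w*x) (nhds 0) (nhds 1) := by
        have hc : Continuous (fun w : ℝ => 1+w*x) := by continuity
        simpa using hc.tendsto 0
      have := (tendsto_const_nhds (x := x)).div t3 one_ne_zero
      simpa [Pi.div_def] using this
    have t4 : Tendsto (fun w : ℝ => Real.log (1+w*x)) (nhds 0) (nhds 0) := by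
      have t3 : Tendsto (fun w : ℝ => 1+w*x) (nhds 0) (nhds 1) := by
        have hc : Continuous (fun w : ℝ => 1+w*x) := by continuity
        simpa using hc.tendsto 0
      have := (Real.continuousAt_log one_ne_zero).tendsto.comp t3
      simpa [Function.comp_def] using this
    have : Tendsto (fun w : ℝ => Real.log w * (w*x/(1+w*x)) - Real.log (1+w*x))
        (nhds 0) (nhds (0*x - 0)) := by
      simp_rw [e1]
      exact (t1.mul t2).sub t4
    simp only [zero_mul, sub_zero] at this
    exact this.mono_left nhdsWithin_le_nhds
  · -- limit at atTop
    have e1 : ∀ᶠ w : ℝ in atTop, Real.log w * (w*x/(1+w*x)) - Real.log (1+w*x)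
        = Real.log (w/(1+w*x)) - Real.log w / (1+w*x) := by
      filter_upwards [eventually_gt_atTop (0:ℝ)] with w hw
      have hden : (0:ℝ) < 1 + w*x := by positivity
      rw [Real.log_div (ne_of_gt hw) (ne_of_gt hden)]
      field_simp
      ring
    have t1 : Tendsto (fun w : ℝ => Real.log (w/(1+w*x))) atTop (nhds (-Real.log x)) := by
      have h1 : Tendsto (fun w : ℝ => w/(1+w*x)) atTop (nhds x⁻¹) := by
        have e2 : ∀ᶠ w : ℝ in atTop, w/(1+w*x) = (1/w + x)⁻¹ := by
          filter_upwards [eventually_gt_atTop (0:ℝ)] with w hw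
          have hden : (0:ℝ) < 1 + w*x := by positivity
          field_simp
        have h2 : Tendsto (fun w : ℝ => 1/w + x) atTop (nhds (0 + x)) := by
          apply Tendsto.add_const
          exact tendsto_inv_atTop_zero.congr (fun w => (one_div w).symm)
        rw [zero_add] at h2
        have h3 := (h2.inv₀ (ne_of_gt hx0))
        exact Tendsto.congr' (e2.mono fun _ h => h.symm) h3
      have h4 := (Real.continuousAt_log (by positivity : x⁻¹ ≠ 0)).tendsto.comp h1
      simpa [Real.log_inv, Function.comp_def] using h4
    have t2 : Tendsto (fun w : ℝ => Real.log w / (1+w*x)) atTop (nhds 0) := by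
      have hup := (Real.isLittleO_log_id_atTop.tendsto_div_nhds_zero).mul_const x⁻¹
      rw [zero_mul] at hup
      apply tendsto_of_tendsto_of_tendsto_of_le_of_le' tendsto_const_nhds hup
      · filter_upwards [eventually_ge_atTop (1:ℝ)] with w hw
        have : 0 ≤ Real.log w := Real.log_nonneg hw
        have hden : (0:ℝ) < 1 + w*x := by positivity
        positivity
      · filter_upwards [eventually_ge_atTop (1:ℝ)] with w hw
        have hw0 : (0:ℝ) < w := lt_of_lt_of_le one_pos hw
        have hlog : 0 ≤ Real.log w := Real.log_nonneg hw
        have hwx : (0:ℝ) < w*x := by positivity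
        have h5 : Real.log w / (1+w*x) ≤ Real.log w / (w*x) := by
          apply div_le_div_of_nonneg_left hlog hwx (by linarith)
        calc Real.log w / (1+w*x) ≤ Real.log w / (w*x) := h5
          _ = Real.log w / w * x⁻¹ := by field_simp
    have : Tendsto (fun w : ℝ => Real.log (w/(1+w*x)) - Real.log w / (1+w*x)) atTop
        (nhds (-Real.log x - 0)) := t1.sub t2
    rw [sub_zero] at this
    exact Tendsto.congr' (e1.mono fun _ h => h.symm) this

set_option maxHeartbeats 1000000 in
/-- Let `μ` be a nonzero finite Borel measure on `ℝ` whose support is a compact subset `K`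
of `(0,∞)`, let `t = μ(ℝ) > 0`, let `ψ(z) = ∫ z·x/(1 − z·x) dμ(x)` for `z < 0`, and let
`χ : (−t, 0) → (−∞, 0)` denote the inverse of the bijection `ψ : (−∞,0) → (−t,0)`.
Then the improper integral `∫_{−t}^0 log(−χ(u)) du` converges, and
`∫ log x dμ(x) = −∫_{−t}^0 log(−χ(u)) du`. -/
theorem stmt7 (μ : Measure ℝ) [IsFiniteMeasure μ] (hμ : μ ≠ 0)
    (K : Set ℝ) (hK : IsCompact K) (hKpos : K ⊆ Set.Ioi 0) (hμK : μ Kᶜ = 0)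
    (χ : ℝ → ℝ)
    (hχneg : ∀ u ∈ Set.Ioo (-(μ Set.univ).toReal) 0, χ u < 0)
    (hχright : ∀ u ∈ Set.Ioo (-(μ Set.univ).toReal) 0,
      ∫ x, (χ u) * x / (1 - (χ u) * x) ∂μ = u)
    (hχleft : ∀ z < (0 : ℝ), χ (∫ x, z * x / (1 - z * x) ∂μ) = z) :
    IntegrableOn (fun u : ℝ => Real.log (-(χ u)))
      (Set.Ioo (-(μ Set.univ).toReal) 0) ∧
    ∫ x, Real.log x ∂μ =
      -∫ u in Set.Ioo (-(μ Set.univ).toReal) 0, Real.log (-(χ u)) := by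
  classical
  -- basic setup
  have hKne : K.Nonempty := by
    rcases K.eq_empty_or_nonempty with h | h
    · exfalso
      apply hμ
      apply Measure.measure_univ_eq_zero.mp
      have := hμK
      rw [h] at this
      simpa using this
    · exact h
  set a := sInf K with hadef
  set b := sSup K with hbdef
  have haK : a ∈ K := hK.sInf_mem hKne
  have hbK : b ∈ K := hK.sSup_mem hKne
  have ha : 0 < a := hKpos haK
  have hKab : K ⊆ Icc a b := fun x hx => ⟨csInf_le hK.bddBelow hx, le_csSup hK.bddAbove hx⟩
  have hab : a ≤ b := (hKab haK).2
  have haemem : ∀ᵐ x ∂μ, x ∈ K := by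
    rw [ae_iff]
    exact hμK
  have hae : ∀ᵐ x ∂μ, x ∈ Icc a b := haemem.mono fun x hx => hKab hx
  set t := (μ Set.univ).toReal with htdef
  have ht : 0 < t := ENNReal.toReal_pos (Measure.measure_univ_ne_zero.mpr hμ) (measure_ne_top μ _)
  set ψ : ℝ → ℝ := fun z => ∫ x, z * x / (1 - z * x) ∂μ with hψdef
  set φ : ℝ → ℝ := fun z => ∫ x, x / (1 - z * x)^2 ∂μ with hφdef
  have hψmeas : ∀ z : ℝ, Measurable (fun x : ℝ => z * x / (1 - z * x)) := fun z =>
    (measurable_const.mul measurable_id).div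
      (measurable_const.sub (measurable_const.mul measurable_id))
  have hint : ∀ z < (0:ℝ), Integrable (fun x : ℝ => z * x / (1 - z * x)) μ := by
    intro z hz
    apply Integrable.mono' (integrable_const (1:ℝ)) ((hψmeas z).aestronglyMeasurable)
    filter_upwards [haemem] with x hx
    have hx0 : 0 < x := hKpos hx
    have h1 : z * x < 0 := mul_neg_of_neg_of_pos hz hx0
    have h2 : (1:ℝ) < 1 - z * x := by linarith
    rw [Real.norm_eq_abs, abs_div, abs_of_pos (by linarith : (0:ℝ) < 1 - z * x), abs_of_neg h1]
    rw [div_le_one (by linarith)]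
    linarith
  -- pointwise monotone bounds
  have hub : ∀ z < (0:ℝ), ψ z ≤ t * (z * a / (1 - z * a)) := by
    intro z hz
    have hza : z * a < 0 := mul_neg_of_neg_of_pos hz ha
    have hda : (0:ℝ) < 1 - z * a := by linarith
    have hb : ∀ᵐ x ∂μ, z * x / (1 - z * x) ≤ z * a / (1 - z * a) := by
      filter_upwards [haemem] with x hx
      have hx0 : 0 < x := hKpos hx
      have hxa : a ≤ x := (hKab hx).1
      have h1 : z * x < 0 := mul_neg_of_neg_of_pos hz hx0
      have hdx : (0:ℝ) < 1 - z * x := by linarith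
      rw [div_le_div_iff₀ hdx hda]
      have h3 : z * x ≤ z * a := mul_le_mul_of_nonpos_left hxa hz.le
      nlinarith
    calc ψ z ≤ ∫ _x, z * a / (1 - z * a) ∂μ :=
          integral_mono_ae (hint z hz) (integrable_const _) hb
      _ = t * (z * a / (1 - z * a)) := by rw [integral_const, smul_eq_mul]; rfl
  have hlb : ∀ z < (0:ℝ), t * (z * b / (1 - z * b)) ≤ ψ z := by
    intro z hz
    have hb0 : 0 < b := lt_of_lt_of_le ha hab
    have hzb : z * b < 0 := mul_neg_of_neg_of_pos hz hb0
    have hdb : (0:ℝ) < 1 - z * b := by linarith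
    have hbnd : ∀ᵐ x ∂μ, z * b / (1 - z * b) ≤ z * x / (1 - z * x) := by
      filter_upwards [haemem] with x hx
      have hx0 : 0 < x := hKpos hx
      have hxb : x ≤ b := (hKab hx).2
      have h1 : z * x < 0 := mul_neg_of_neg_of_pos hz hx0
      have hdx : (0:ℝ) < 1 - z * x := by linarith
      rw [div_le_div_iff₀ hdb hdx]
      have h3 : z * b ≤ z * x := mul_le_mul_of_nonpos_left hxb hz.le
      nlinarith
    calc t * (z * b / (1 - z * b)) = ∫ _x, z * b / (1 - z * b) ∂μ := by
          rw [integral_const, smul_eq_mul]; rfl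
      _ ≤ ψ z := integral_mono_ae (integrable_const _) (hint z hz) hbnd
  have hmaps : ∀ z < (0:ℝ), ψ z ∈ Ioo (-t) 0 := by
    intro z hz
    have hb0 : 0 < b := lt_of_lt_of_le ha hab
    have hzb : z * b < 0 := mul_neg_of_neg_of_pos hz hb0
    have hdb : (0:ℝ) < 1 - z * b := by linarith
    have hza : z * a < 0 := mul_neg_of_neg_of_pos hz ha
    have hda : (0:ℝ) < 1 - z * a := by linarith
    constructor
    · have h1 : -1 < z * b / (1 - z * b) := by
        rw [lt_div_iff₀ hdb]
        linarith
      have := mul_lt_mul_of_pos_left h1 ht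
      have h2 := hlb z hz
      nlinarith
    · have h2 := hub z hz
      have h3 : z * a / (1 - z * a) < 0 := div_neg_of_neg_of_pos hza hda
      nlinarith
  have himg : ψ '' (Iio 0) = Ioo (-t) 0 := by
    apply Subset.antisymm
    · rintro _ ⟨z, hz, rfl⟩
      exact hmaps z hz
    · rintro u hu
      exact ⟨χ u, hχneg u hu, hχright u hu⟩
  have hinj : InjOn ψ (Iio 0) := by
    intro z1 hz1 z2 hz2 h
    have h2 := congrArg χ h
    have e1 : χ (ψ z1) = z1 := hχleft z1 hz1
    have e2 : χ (ψ z2) = z2 := hχleft z2 hz2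
    rw [e1, e2] at h2
    exact h2
  -- derivative of ψ
  have hφmeas : ∀ z : ℝ, Measurable (fun x : ℝ => x / (1 - z * x)^2) := fun z =>
    measurable_id.div ((measurable_const.sub (measurable_const.mul measurable_id)).pow_const 2)
  have hder : ∀ z ∈ Iio (0:ℝ), HasDerivAt ψ (φ z) z := by
    intro z hz
    have hz0 : z < 0 := hz
    have hε : (0:ℝ) < -z/2 := by linarith
    have hball : ∀ n ∈ Metric.ball z (-z/2), n < 0 := by
      intro n hn
      rw [Metric.mem_ball, Real.dist_eq] at hn
      have := abs_lt.mp hn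
      linarith [this.1, this.2]
    have H := hasDerivAt_integral_of_dominated_loc_of_deriv_le (Metric.ball_mem_nhds z hε)
      (F := fun n x => n * x / (1 - n * x)) (F' := fun n x => x / (1 - n * x)^2)
      (bound := fun _ => b)
      (Eventually.of_forall fun n => (hψmeas n).aestronglyMeasurable)
      (hint z hz0)
      ((hφmeas z).aestronglyMeasurable)
      ?hbound (integrable_const b) ?hdiff
    · exact H.2
    case hbound =>
      filter_upwards [haemem] with x hx
      intro n hn
      have hn0 := hball n hn
      have hx0 : 0 < x := hKpos hx
      have h1 : n * x < 0 := mul_neg_of_neg_of_pos hn0 hx0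
      have h2 : (1:ℝ) ≤ (1 - n * x)^2 := by nlinarith
      rw [Real.norm_eq_abs, abs_of_nonneg (by positivity : (0:ℝ) ≤ x / (1 - n * x)^2)]
      calc x / (1 - n * x)^2 ≤ x / 1 := div_le_div_of_nonneg_left hx0.le one_pos h2
        _ = x := div_one x
        _ ≤ b := (hKab hx).2
    case hdiff =>
      filter_upwards [haemem] with x hx
      intro n hn
      have hn0 := hball n hn
      have hx0 : 0 < x := hKpos hx
      have h1 : n * x < 0 := mul_neg_of_neg_of_pos hn0 hx0
      have hden : (1:ℝ) - n * x ≠ 0 := ne_of_gt (by linarith)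
      have ha1 : HasDerivAt (fun n : ℝ => n * x) x n := by
        simpa using (hasDerivAt_id n).mul_const x
      have ha2 : HasDerivAt (fun n : ℝ => 1 - n * x) (-x) n := by
        simpa using ha1.const_sub 1
      have h2 := ha1.div ha2 hden
      refine h2.congr_deriv ?_
      field_simp
      ring
  have hφnn : ∀ z < (0:ℝ), 0 ≤ φ z := by
    intro z hz
    apply integral_nonneg_of_ae
    filter_upwards [haemem] with x hx
    have hx0 : 0 < x := hKpos hx
    positivity
  have hderW : ∀ z ∈ Iio (0:ℝ), HasDerivWithinAt ψ (φ z) (Iio 0) z :=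
    fun z hz => (hder z hz).hasDerivWithinAt
  have hptwise : ∀ z ∈ Iio (0:ℝ), |φ z| • Real.log (-(χ (ψ z))) = φ z * Real.log (-z) := by
    intro z hz
    have hz0 : z < 0 := hz
    rw [smul_eq_mul, abs_of_nonneg (hφnn z hz0), hχleft z hz0]
  -- change of variables
  have cov : ∫ u in Ioo (-t) 0, Real.log (-(χ u)) = ∫ z in Iio (0:ℝ), φ z * Real.log (-z) := by
    rw [← himg]
    rw [integral_image_eq_integral_abs_deriv_smul measurableSet_Iio hderW hinj]
    exact setIntegral_congr_fun measurableSet_Iio hptwise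
  -- reflect to Ioi 0
  have negstep : ∫ z in Iio (0:ℝ), φ z * Real.log (-z)
      = ∫ w in Ioi (0:ℝ), φ (-w) * Real.log w := by
    have h1 := integral_comp_neg_Ioi (0:ℝ) (fun z => φ z * Real.log (-z))
    simp only [neg_neg, neg_zero] at h1
    rw [show (volume : Measure ℝ).restrict (Iio 0)
      = (volume : Measure ℝ).restrict (Iic 0) from restrict_Iio_eq_restrict_Iic]
    exact h1.symm
  -- Fubini setup
  set f2 : ℝ × ℝ → ℝ := fun p => Real.log p.1 * (p.2 / (1 + p.1 * p.2)^2) with hf2def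
  have hf2m : Measurable f2 :=
    (Real.measurable_log.comp measurable_fst).mul
      (measurable_snd.div ((measurable_const.add (measurable_fst.mul measurable_snd)).pow_const 2))
  have hfmeasx : ∀ w : ℝ, Measurable (fun x : ℝ => Real.log w * (x / (1 + w * x)^2)) := fun w =>
    (measurable_id.div
      ((measurable_const.add (measurable_const.mul measurable_id)).pow_const 2)).const_mul _
  have hbnd : ∀ w x : ℝ, 0 < w → x ∈ Icc a b → 0 < x →
      ‖Real.log w * (x / (1 + w * x)^2)‖ ≤ |Real.log w| * b := by
    intro w x hw hx hx0
    have h2 : (1:ℝ) ≤ (1 + w * x)^2 := by nlinarith [mul_nonneg hw.le hx0.le, sq_nonneg (w*x)]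
    rw [Real.norm_eq_abs, abs_mul, abs_of_nonneg (by positivity : (0:ℝ) ≤ x / (1 + w * x)^2)]
    apply mul_le_mul_of_nonneg_left ?_ (abs_nonneg _)
    calc x / (1 + w * x)^2 ≤ x / 1 := div_le_div_of_nonneg_left hx0.le one_pos h2
      _ = x := div_one x
      _ ≤ b := hx.2
  have hbnd2 : ∀ w x : ℝ, 1 < w → x ∈ Icc a b → 0 < x →
      ‖Real.log w * (x / (1 + w * x)^2)‖ ≤ a⁻¹ * (Real.log w / w^2) := by
    intro w x hw hx hx0
    have hw0 : (0:ℝ) < w := lt_trans one_pos hw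
    have hlog : 0 ≤ Real.log w := Real.log_nonneg hw.le
    rw [Real.norm_eq_abs, abs_mul, abs_of_nonneg (by positivity : (0:ℝ) ≤ x / (1 + w * x)^2),
      abs_of_nonneg hlog]
    have h1 : x / (1 + w * x)^2 ≤ 1 / (a * w^2) := by
      have hwx : (0:ℝ) < (w * x)^2 := by positivity
      have h2 : (w * x)^2 ≤ (1 + w * x)^2 := by nlinarith [hw0.le, hx0.le]
      calc x / (1 + w * x)^2 ≤ x / (w * x)^2 := div_le_div_of_nonneg_left hx0.le hwx h2
        _ = 1 / (x * w^2) := by field_simp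
        _ ≤ 1 / (a * w^2) := by
            apply div_le_div_of_nonneg_left one_pos.le (by positivity)
            nlinarith [hx.1, hw0]
    calc Real.log w * (x / (1 + w * x)^2) ≤ Real.log w * (1 / (a * w^2)) :=
          mul_le_mul_of_nonneg_left h1 hlog
      _ = a⁻¹ * (Real.log w / w^2) := by field_simp
  have hcond1 : ∀ w : ℝ, 0 < w → Integrable (fun x : ℝ => Real.log w * (x / (1 + w * x)^2)) μ := by
    intro w hw
    apply Integrable.mono' (integrable_const (|Real.log w| * b))
      ((hfmeasx w).aestronglyMeasurable)
    filter_upwards [haemem] with x hx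
    exact hbnd w x hw (hKab hx) (hKpos hx)
  -- integrability of f2 on each product piece
  have piece1 : Integrable f2 ((volume.restrict (Ioc (0:ℝ) 1)).prod μ) := by
    rw [integrable_prod_iff (hf2m.aestronglyMeasurable)]
    constructor
    · filter_upwards [ae_restrict_mem measurableSet_Ioc] with w hw
      exact hcond1 w hw.1
    · apply Integrable.mono' (((integrableOn_neg_log_Ioc.const_mul b).const_mul t))
        ((hf2m.aestronglyMeasurable.norm.integral_prod_right'))
      filter_upwards [ae_restrict_mem measurableSet_Ioc] with w hw
      have hlog : Real.log w ≤ 0 := Real.log_nonpos hw.1.le hw.2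
      have hb1 : ‖∫ x, ‖f2 (w, x)‖ ∂μ‖ ≤ ∫ _x, |Real.log w| * b ∂μ := by
        apply norm_integral_le_of_norm_le (integrable_const _)
        filter_upwards [haemem] with x hx
        rw [norm_norm]
        exact hbnd w x hw.1 (hKab hx) (hKpos hx)
      rw [integral_const, smul_eq_mul] at hb1
      calc ‖∫ x, ‖f2 (w, x)‖ ∂μ‖ ≤ t * (|Real.log w| * b) := hb1
        _ = t * (b * -Real.log w) := by rw [abs_of_nonpos hlog]; ring
  have piece2 : Integrable f2 ((volume.restrict (Ioi (1:ℝ))).prod μ) := by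
    rw [integrable_prod_iff (hf2m.aestronglyMeasurable)]
    constructor
    · filter_upwards [ae_restrict_mem measurableSet_Ioi] with w hw
      exact hcond1 w (lt_trans one_pos hw)
    · apply Integrable.mono' (((integrableOn_log_div_sq.const_mul a⁻¹).const_mul t))
        ((hf2m.aestronglyMeasurable.norm.integral_prod_right'))
      filter_upwards [ae_restrict_mem measurableSet_Ioi] with w hw
      have hb1 : ‖∫ x, ‖f2 (w, x)‖ ∂μ‖ ≤ ∫ _x, a⁻¹ * (Real.log w / w^2) ∂μ := by
        apply norm_integral_le_of_norm_le (integrable_const _)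
        filter_upwards [haemem] with x hx
        rw [norm_norm]
        exact hbnd2 w x hw (hKab hx) (hKpos hx)
      rw [integral_const, smul_eq_mul] at hb1
      exact hb1
  have hsplit : (volume : Measure ℝ).restrict (Ioi 0)
      = (volume.restrict (Ioc (0:ℝ) 1)) + (volume.restrict (Ioi (1:ℝ))) := by
    rw [← Measure.restrict_union (Ioc_disjoint_Ioi le_rfl) measurableSet_Ioi,
      Ioc_union_Ioi_eq_Ioi zero_le_one]
  have hprodint : Integrable f2 (((volume : Measure ℝ).restrict (Ioi 0)).prod μ) := by
    rw [hsplit, Measure.add_prod]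
    exact piece1.add_measure piece2
  -- pointwise identification on Ioi 0
  have hstep3 : ∀ w ∈ Ioi (0:ℝ), φ (-w) * Real.log w
      = ∫ x, Real.log w * (x / (1 + w * x)^2) ∂μ := by
    intro w hw
    have e1 : φ (-w) = ∫ x, x / (1 + w * x)^2 ∂μ := by
      have h : (fun x : ℝ => x / (1 - (-w) * x)^2) = (fun x : ℝ => x / (1 + w * x)^2) := by
        funext x
        ring_nf
      simp only [hφdef]
      rw [h]
    rw [e1, integral_const_mul, mul_comm]
  -- Fubini
  have hswap := integral_integral_swap (μ := (volume : Measure ℝ).restrict (Ioi 0)) (ν := μ)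
    (f := fun w x => Real.log w * (x / (1 + w * x)^2)) hprodint
  have hstep5 : ∫ x, (∫ w in Ioi (0:ℝ), Real.log w * (x / (1 + w * x)^2)) ∂μ
      = ∫ x, -Real.log x ∂μ := by
    apply integral_congr_ae
    filter_upwards [hae] with x hx
    exact inner_value ha hx
  have hmain : ∫ u in Ioo (-t) 0, Real.log (-(χ u)) = -∫ x, Real.log x ∂μ := by
    rw [cov, negstep, setIntegral_congr_fun measurableSet_Ioi hstep3, hswap, hstep5,
      integral_neg]
  -- integrability
  have base : IntegrableOn (fun w : ℝ => φ (-w) * Real.log w) (Ioi (0:ℝ)) := by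
    have h1 : Integrable (fun w : ℝ => ∫ x, Real.log w * (x / (1 + w * x)^2) ∂μ)
        ((volume : Measure ℝ).restrict (Ioi 0)) := hprodint.integral_prod_left
    apply h1.congr
    filter_upwards [ae_restrict_mem measurableSet_Ioi] with w hw
    exact (hstep3 w hw).symm
  have hnegint : IntegrableOn (fun z : ℝ => φ z * Real.log (-z)) (Iio (0:ℝ)) := by
    have A : MeasurableEmbedding (fun x : ℝ => -x) :=
      (Homeomorph.neg ℝ).measurableEmbedding
    rw [IntegrableOn, ← Measure.map_neg_eq_self (volume : Measure ℝ)]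
    rw [← IntegrableOn, A.integrableOn_map_iff]
    simp_rw [Function.comp_def, neg_preimage, neg_Iio, neg_zero, neg_neg]
    exact base
  have hIOn : IntegrableOn (fun u : ℝ => Real.log (-(χ u))) (Ioo (-t) 0) := by
    rw [← himg]
    rw [integrableOn_image_iff_integrableOn_abs_deriv_smul measurableSet_Iio hderW hinj]
    apply hnegint.congr_fun ?_ measurableSet_Iio
    intro z hz
    exact (hptwise z hz).symm
  exact ⟨hIOn, by rw [hmain, neg_neg]⟩
end

section
/- Let μ be a Borel probability measure on ℝ whose support is a compact subset of (0,∞), let ψ(z) = ∫ z·x/(1 − z·x) dμ(x) for z < 0, let χ : (−1,0) → (−∞,0) denote the inverse of the bijection ψ : (−∞,0) → (−1,0), and define the S-transform S(z) = ((1+z)/z)·χ(z) for z ∈ (−1,0). Then the improper integral ∫₀^1 log S(−t) dt converges, and ∫ log x dμ(x) = −∫₀^1 log S(−t) dt. -/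
open Real MeasureTheory Filter
open Set Topology

noncomputable def psiF (μ : Measure ℝ) (z : ℝ) : ℝ := ∫ x, z * x / (1 - z * x) ∂μ
noncomputable def aF (μ : Measure ℝ) (z : ℝ) : ℝ := ∫ x, 1 / (1 - z * x) ∂μ
noncomputable def bF (μ : Measure ℝ) (z : ℝ) : ℝ := ∫ x, x / (1 - z * x) ∂μ
noncomputable def lF (μ : Measure ℝ) (z : ℝ) : ℝ := ∫ x, Real.log (1 - z * x) ∂μ
noncomputable def pF (μ : Measure ℝ) (z : ℝ) : ℝ := ∫ x, x / (1 - z * x) ^ 2 ∂μ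
noncomputable def qF (μ : Measure ℝ) (z : ℝ) : ℝ := ∫ x, x ^ 2 / (1 - z * x) ^ 2 ∂μ
noncomputable def fF (μ : Measure ℝ) (z : ℝ) : ℝ :=
  (1 + psiF μ z) * Real.log (1 + psiF μ z) - psiF μ z * Real.log (bF μ z) + lF μ z
noncomputable def gF (μ : Measure ℝ) (z : ℝ) : ℝ :=
  pF μ z * (Real.log (1 + psiF μ z) - Real.log (bF μ z))

lemma st8_den_pos {a b z x : ℝ} (ha : 0 < a) (hz : z ≤ 0) (hx : x ∈ Set.Icc a b) :
    0 < 1 - z * x := by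
  have hx0 : 0 < x := lt_of_lt_of_le ha hx.1
  nlinarith [mul_nonneg (neg_nonneg.2 hz) hx0.le]

lemma st8_den_half {a b z x : ℝ} (ha : 0 < a) (hb : 0 < b) (hz : z < 1 / (2 * b))
    (hx : x ∈ Set.Icc a b) : 1 / 2 < 1 - z * x := by
  have hx0 : 0 < x := lt_of_lt_of_le ha hx.1
  rcases le_or_gt z 0 with h | h
  · nlinarith [mul_nonneg (neg_nonneg.2 h) hx0.le]
  · have h2 := (lt_div_iff₀ (by positivity : (0:ℝ) < 2 * b)).1 hz
    nlinarith [hx.2, mul_le_mul_of_nonneg_left hx.2 h.le]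

lemma st8_abs_div_le {n d m : ℝ} (hd : 1 / 2 < d) (hn : |n| ≤ m) : |n / d| ≤ 2 * m := by
  have hd0 : 0 < d := by linarith
  rw [abs_div, abs_of_pos hd0, div_le_iff₀ hd0]
  nlinarith [abs_nonneg n]

section

variable {μ : Measure ℝ} [IsProbabilityMeasure μ] {a b : ℝ}

lemma st8_int_bdd (hs : ∀ᵐ x ∂μ, x ∈ Set.Icc a b) {g : ℝ → ℝ}
    (hm : AEStronglyMeasurable g μ) {C : ℝ} (h : ∀ x ∈ Set.Icc a b, |g x| ≤ C) :
    Integrable g μ :=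
  (integrable_const C).mono' hm (hs.mono fun x hx => by simpa using h x hx)

lemma st8_int_le (hs : ∀ᵐ x ∂μ, x ∈ Set.Icc a b) {g : ℝ → ℝ} {c : ℝ}
    (hg : Integrable g μ) (h : ∀ x ∈ Set.Icc a b, g x ≤ c) : ∫ x, g x ∂μ ≤ c := by
  calc ∫ x, g x ∂μ ≤ ∫ _x, c ∂μ :=
        integral_mono_ae hg (integrable_const c) (hs.mono fun x hx => h x hx)
    _ = c := by simp

lemma st8_le_int (hs : ∀ᵐ x ∂μ, x ∈ Set.Icc a b) {g : ℝ → ℝ} {c : ℝ}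
    (hg : Integrable g μ) (h : ∀ x ∈ Set.Icc a b, c ≤ g x) : c ≤ ∫ x, g x ∂μ := by
  calc c = ∫ _x, c ∂μ := by simp
    _ ≤ ∫ x, g x ∂μ :=
        integral_mono_ae (integrable_const c) hg (hs.mono fun x hx => h x hx)

lemma st8_hasDerivAt_integral (hs : ∀ᵐ x ∂μ, x ∈ Set.Icc a b)
    {f f' : ℝ → ℝ → ℝ} {z₀ ε C : ℝ} (hε : 0 < ε)
    (hmeas : ∀ z, AEStronglyMeasurable (fun x => f z x) μ)
    (hmeas' : AEStronglyMeasurable (fun x => f' z₀ x) μ)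
    (hint : Integrable (fun x => f z₀ x) μ)
    (hC : ∀ x ∈ Set.Icc a b, ∀ z ∈ Metric.ball z₀ ε, |f' z x| ≤ C)
    (hd : ∀ x ∈ Set.Icc a b, ∀ z ∈ Metric.ball z₀ ε, HasDerivAt (fun w => f w x) (f' z x) z) :
    HasDerivAt (fun z => ∫ x, f z x ∂μ) (∫ x, f' z₀ x ∂μ) z₀ :=
  (hasDerivAt_integral_of_dominated_loc_of_deriv_le (Metric.ball_mem_nhds z₀ hε) (.of_forall hmeas) hint hmeas'
    (hs.mono fun x hx z hz => by simpa [Real.norm_eq_abs] using hC x hx z hz)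
    (integrable_const C) (hs.mono fun x hx z hz => hd x hx z hz)).2

end
section
variable {μ : Measure ℝ} [IsProbabilityMeasure μ] {a b : ℝ}

-- ball facts
lemma st8_ball_facts {b z₀ : ℝ} (hb : 0 < b) (hz : z₀ ≤ 0) {z : ℝ}
    (hz' : z ∈ Metric.ball z₀ (min ((1 / (2 * b) - z₀) / 2) 1)) :
    z < 1 / (2 * b) ∧ |z| ≤ |z₀| + 1 := by
  rw [Metric.mem_ball, Real.dist_eq] at hz'
  have h1 := (abs_lt.1 hz').2
  have h2 := (abs_lt.1 hz').1
  have hδ : (0:ℝ) < 1 / (2 * b) := by positivity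
  have hm1 : min ((1 / (2 * b) - z₀) / 2) 1 ≤ (1 / (2 * b) - z₀) / 2 := min_le_left _ _
  have hm2 : min ((1 / (2 * b) - z₀) / 2) 1 ≤ 1 := min_le_right _ _
  constructor
  · linarith
  · have := abs_sub_abs_le_abs_sub z z₀
    have habs : |z - z₀| ≤ 1 := le_trans hz'.le hm2
    linarith

lemma st8_hasDerivAt_psiF (ha : 0 < a) (hab : a ≤ b) (hs : ∀ᵐ x ∂μ, x ∈ Set.Icc a b)
    {z₀ : ℝ} (hz : z₀ ≤ 0) : HasDerivAt (psiF μ) (pF μ z₀) z₀ := by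
  have hb : 0 < b := lt_of_lt_of_le ha hab
  have hδ : (0:ℝ) < 1 / (2 * b) := by positivity
  have hε : (0:ℝ) < min ((1 / (2 * b) - z₀) / 2) 1 := lt_min (by linarith) one_pos
  unfold psiF pF
  apply st8_hasDerivAt_integral (f := fun z x => z * x / (1 - z * x))
    (f' := fun z x => x / (1 - z * x) ^ 2) hs hε (C := 4 * b)
  · intro z
    exact ((measurable_const.mul measurable_id).div
      (measurable_const.sub (measurable_const.mul measurable_id))).aestronglyMeasurable
  · exact ((measurable_id.div
      ((measurable_const.sub (measurable_const.mul measurable_id)).pow_const 2))).aestronglyMeasurable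
  · refine st8_int_bdd hs (C := 2 * (|z₀| * b))
      ((measurable_const.mul measurable_id).div
        (measurable_const.sub (measurable_const.mul measurable_id))).aestronglyMeasurable ?_
    intro x hx
    have hden := st8_den_pos ha hz hx
    have hden1 : 1 ≤ 1 - z₀ * x := by
      have hx0 : 0 < x := lt_of_lt_of_le ha hx.1
      nlinarith [mul_nonneg (neg_nonneg.2 hz) hx0.le]
    refine st8_abs_div_le (by linarith) ?_
    have hx0 : 0 < x := lt_of_lt_of_le ha hx.1
    rw [abs_mul, abs_of_pos hx0]
    exact mul_le_mul_of_nonneg_left hx.2 (abs_nonneg _)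
  · intro x hx z hz'
    obtain ⟨hzδ, _⟩ := st8_ball_facts hb hz hz'
    have hden := st8_den_half ha hb hzδ hx
    have hx0 : 0 < x := lt_of_lt_of_le ha hx.1
    have hden0 : 0 < 1 - z * x := by linarith
    rw [abs_of_pos (by positivity), div_le_iff₀ (by positivity)]
    have h4 : 1/4 < (1 - z * x)^2 := by nlinarith
    nlinarith [hx.2, h4, hb]
  · intro x hx z hz'
    obtain ⟨hzδ, _⟩ := st8_ball_facts hb hz hz'
    have hden := st8_den_half ha hb hzδ hx
    have hden0 : (1 : ℝ) - z * x ≠ 0 := by intro h; rw [h] at hden; norm_num at hden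
    have h1 : HasDerivAt (fun w : ℝ => w * x) x z := by
      simpa using (hasDerivAt_id z).mul_const x
    have h2 : HasDerivAt (fun w : ℝ => 1 - w * x) (-x) z := by
      simpa using h1.const_sub 1
    have := h1.div h2 hden0
    replace this : HasDerivAt (fun w => w * x / (1 - w * x)) _ z := this
    convert this using 1
    field_simp
    ring
end

section
variable {μ : Measure ℝ} [IsProbabilityMeasure μ] {a b : ℝ}

lemma st8_hasDerivAt_bF (ha : 0 < a) (hab : a ≤ b) (hs : ∀ᵐ x ∂μ, x ∈ Set.Icc a b)
    {z₀ : ℝ} (hz : z₀ ≤ 0) : HasDerivAt (bF μ) (qF μ z₀) z₀ := by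
  have hb : 0 < b := lt_of_lt_of_le ha hab
  have hδ : (0:ℝ) < 1 / (2 * b) := by positivity
  have hε : (0:ℝ) < min ((1 / (2 * b) - z₀) / 2) 1 := lt_min (by linarith) one_pos
  unfold bF qF
  apply st8_hasDerivAt_integral (f := fun z x => x / (1 - z * x))
    (f' := fun z x => x ^ 2 / (1 - z * x) ^ 2) hs hε (C := 16 * b ^ 2)
  · intro z
    exact (measurable_id.div
      (measurable_const.sub (measurable_const.mul measurable_id))).aestronglyMeasurable
  · exact ((measurable_id.pow_const 2).div
      ((measurable_const.sub (measurable_const.mul measurable_id)).pow_const 2)).aestronglyMeasurable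
  · refine st8_int_bdd hs (C := 2 * b)
      (measurable_id.div
        (measurable_const.sub (measurable_const.mul measurable_id))).aestronglyMeasurable ?_
    intro x hx
    have hden := st8_den_pos ha hz hx
    have hx0 : 0 < x := lt_of_lt_of_le ha hx.1
    have hden1 : 1 ≤ 1 - z₀ * x := by
      nlinarith [mul_nonneg (neg_nonneg.2 hz) hx0.le]
    refine st8_abs_div_le (by linarith) ?_
    rw [abs_of_pos hx0]; exact hx.2
  · intro x hx z hz'
    obtain ⟨hzδ, _⟩ := st8_ball_facts hb hz hz'
    have hden := st8_den_half ha hb hzδ hx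
    have hx0 : 0 < x := lt_of_lt_of_le ha hx.1
    have hden0 : 0 < 1 - z * x := by linarith
    rw [abs_of_pos (by positivity), div_le_iff₀ (by positivity)]
    have h4 : 1/4 < (1 - z * x)^2 := by nlinarith
    nlinarith [hx.2, h4, hb, mul_le_mul hx.2 hx.2 hx0.le hb.le]
  · intro x hx z hz'
    obtain ⟨hzδ, _⟩ := st8_ball_facts hb hz hz'
    have hden := st8_den_half ha hb hzδ hx
    have hden0 : (1 : ℝ) - z * x ≠ 0 := by intro h; rw [h] at hden; norm_num at hden
    have h1 : HasDerivAt (fun w : ℝ => w * x) x z := by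
      simpa using (hasDerivAt_id z).mul_const x
    have h2 : HasDerivAt (fun w : ℝ => 1 - w * x) (-x) z := by
      simpa using h1.const_sub 1
    have := (hasDerivAt_const z x).div h2 hden0
    replace this : HasDerivAt (fun w => x / (1 - w * x)) _ z := this
    convert this using 1
    field_simp
    ring

lemma st8_hasDerivAt_lF (ha : 0 < a) (hab : a ≤ b) (hs : ∀ᵐ x ∂μ, x ∈ Set.Icc a b)
    {z₀ : ℝ} (hz : z₀ ≤ 0) : HasDerivAt (lF μ) (-(bF μ z₀)) z₀ := by
  have hb : 0 < b := lt_of_lt_of_le ha hab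
  have hδ : (0:ℝ) < 1 / (2 * b) := by positivity
  have hε : (0:ℝ) < min ((1 / (2 * b) - z₀) / 2) 1 := lt_min (by linarith) one_pos
  have h : HasDerivAt (fun z => ∫ x, Real.log (1 - z * x) ∂μ)
      (∫ x, -(x / (1 - z₀ * x)) ∂μ) z₀ := by
    apply st8_hasDerivAt_integral (f := fun z x => Real.log (1 - z * x))
      (f' := fun z x => -(x / (1 - z * x))) hs hε (C := 4 * b)
    · intro z
      exact (Real.measurable_log.comp
        (measurable_const.sub (measurable_const.mul measurable_id))).aestronglyMeasurable
    · exact (measurable_id.div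
        (measurable_const.sub (measurable_const.mul measurable_id))).neg.aestronglyMeasurable
    · refine st8_int_bdd hs (C := Real.log (1 + |z₀| * b))
        (Real.measurable_log.comp
          (measurable_const.sub (measurable_const.mul measurable_id))).aestronglyMeasurable ?_
      intro x hx
      have hx0 : 0 < x := lt_of_lt_of_le ha hx.1
      have hden1 : 1 ≤ 1 - z₀ * x := by
        nlinarith [mul_nonneg (neg_nonneg.2 hz) hx0.le]
      have hupper : 1 - z₀ * x ≤ 1 + |z₀| * b := by
        nlinarith [neg_abs_le z₀, abs_nonneg z₀, hx.1, hx.2,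
          mul_le_mul_of_nonneg_right (neg_abs_le z₀) hx0.le,
          mul_le_mul_of_nonneg_left hx.2 (abs_nonneg z₀)]
      rw [abs_of_nonneg (Real.log_nonneg hden1)]
      exact (Real.log_le_log_iff (by linarith) (by nlinarith [abs_nonneg z₀])).2 hupper
    · intro x hx z hz'
      obtain ⟨hzδ, _⟩ := st8_ball_facts hb hz hz'
      have hden := st8_den_half ha hb hzδ hx
      have hx0 : 0 < x := lt_of_lt_of_le ha hx.1
      rw [abs_neg]
      have := st8_abs_div_le (n := x) hden (by rw [abs_of_pos hx0])
      linarith [this, hx.2]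
    · intro x hx z hz'
      obtain ⟨hzδ, _⟩ := st8_ball_facts hb hz hz'
      have hden := st8_den_half ha hb hzδ hx
      have hden0 : (1 : ℝ) - z * x ≠ 0 := by intro h; rw [h] at hden; norm_num at hden
      have h1 : HasDerivAt (fun w : ℝ => w * x) x z := by
        simpa using (hasDerivAt_id z).mul_const x
      have h2 : HasDerivAt (fun w : ℝ => 1 - w * x) (-x) z := by
        simpa using h1.const_sub 1
      have := h2.log hden0
      convert this using 1
      rw [neg_div]
  rw [integral_neg] at h
  exact h

lemma st8_continuousAt_pF (ha : 0 < a) (hab : a ≤ b) (hs : ∀ᵐ x ∂μ, x ∈ Set.Icc a b)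
    {z₀ : ℝ} (hz : z₀ ≤ 0) : ContinuousAt (pF μ) z₀ := by
  have hb : 0 < b := lt_of_lt_of_le ha hab
  have hδ : (0:ℝ) < 1 / (2 * b) := by positivity
  have hε : (0:ℝ) < min ((1 / (2 * b) - z₀) / 2) 1 := lt_min (by linarith) one_pos
  have h : HasDerivAt (fun z => ∫ x, x / (1 - z * x) ^ 2 ∂μ)
      (∫ x, 2 * x ^ 2 / (1 - z₀ * x) ^ 3 ∂μ) z₀ := by
    apply st8_hasDerivAt_integral (f := fun z x => x / (1 - z * x) ^ 2)
      (f' := fun z x => 2 * x ^ 2 / (1 - z * x) ^ 3) hs hε (C := 16 * b ^ 2)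
    · intro z
      exact (measurable_id.div
        ((measurable_const.sub (measurable_const.mul measurable_id)).pow_const 2)).aestronglyMeasurable
    · exact ((measurable_const.mul (measurable_id.pow_const 2)).div
        ((measurable_const.sub (measurable_const.mul measurable_id)).pow_const 3)).aestronglyMeasurable
    · refine st8_int_bdd hs (C := b)
        (measurable_id.div
          ((measurable_const.sub (measurable_const.mul measurable_id)).pow_const 2)).aestronglyMeasurable ?_
      intro x hx
      have hx0 : 0 < x := lt_of_lt_of_le ha hx.1
      have hden1 : 1 ≤ 1 - z₀ * x := by
        nlinarith [mul_nonneg (neg_nonneg.2 hz) hx0.le]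
      rw [abs_of_pos (by positivity), div_le_iff₀ (by positivity)]
      have h1 : 1 ≤ (1 - z₀*x)^2 := by nlinarith
      nlinarith [hx.2, hb, mul_le_mul_of_nonneg_left h1 hb.le]
    · intro x hx z hz'
      obtain ⟨hzδ, _⟩ := st8_ball_facts hb hz hz'
      have hden := st8_den_half ha hb hzδ hx
      have hx0 : 0 < x := lt_of_lt_of_le ha hx.1
      have hden0 : 0 < 1 - z * x := by linarith
      rw [abs_of_pos (by positivity), div_le_iff₀ (by positivity)]
      have h4 : 1/4 < (1 - z * x)^2 := by nlinarith
      have h8 : 1/8 < (1 - z * x)^3 := by nlinarith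
      nlinarith [hx.2, h8, hb, mul_le_mul hx.2 hx.2 hx0.le hb.le]
    · intro x hx z hz'
      obtain ⟨hzδ, _⟩ := st8_ball_facts hb hz hz'
      have hden := st8_den_half ha hb hzδ hx
      have hden0 : (0:ℝ) < 1 - z * x := by linarith
      have hden0' : (1 : ℝ) - z * x ≠ 0 := ne_of_gt hden0
      have h1 : HasDerivAt (fun w : ℝ => w * x) x z := by
        simpa using (hasDerivAt_id z).mul_const x
      have h2 : HasDerivAt (fun w : ℝ => 1 - w * x) (-x) z := by
        simpa using h1.const_sub 1
      have h3 := h2.pow 2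
      have := (hasDerivAt_const z x).div h3 (pow_ne_zero 2 hden0')
      replace this : HasDerivAt (fun w => x / (1 - w * x) ^ 2)
          ((0 * (1 - z * x) ^ 2 - x * (((2:ℕ):ℝ) * (1 - z * x) ^ 1 * -x)) / ((1 - z * x) ^ 2) ^ 2) z := this
      convert this using 1
      rw [div_eq_div_iff (pow_ne_zero 3 hden0') (pow_ne_zero 2 (pow_ne_zero 2 hden0'))]
      push_cast
      ring
  exact h.continuousAt
end

section
variable {μ : Measure ℝ} [IsProbabilityMeasure μ] {a b z : ℝ}

lemma st8_den1 (ha : 0 < a) (hz : z ≤ 0) {x : ℝ} (hx : x ∈ Set.Icc a b) :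
    1 ≤ 1 - z * x := by
  have hx0 : 0 < x := lt_of_lt_of_le ha hx.1
  nlinarith [mul_nonneg (neg_nonneg.2 hz) hx0.le]

lemma st8_intPsi (ha : 0 < a) (hs : ∀ᵐ x ∂μ, x ∈ Set.Icc a b) (hz : z ≤ 0) :
    Integrable (fun x => z * x / (1 - z * x)) μ := by
  refine st8_int_bdd hs (C := |z| * b)
    ((measurable_const.mul measurable_id).div
      (measurable_const.sub (measurable_const.mul measurable_id))).aestronglyMeasurable ?_
  intro x hx
  have hden1 := st8_den1 ha hz hx
  have hx0 : 0 < x := lt_of_lt_of_le ha hx.1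
  rw [abs_div, abs_of_pos (by linarith : (0:ℝ) < 1 - z * x)]
  calc |z * x| / (1 - z * x) ≤ |z * x| / 1 := by
        apply div_le_div_of_nonneg_left (abs_nonneg _) one_pos hden1
    _ = |z| * |x| := by rw [div_one, abs_mul]
    _ ≤ |z| * b := by rw [abs_of_pos hx0]; exact mul_le_mul_of_nonneg_left hx.2 (abs_nonneg _)

lemma st8_intB (ha : 0 < a) (hs : ∀ᵐ x ∂μ, x ∈ Set.Icc a b) (hz : z ≤ 0) :
    Integrable (fun x => x / (1 - z * x)) μ := by
  refine st8_int_bdd hs (C := b)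
    (measurable_id.div
      (measurable_const.sub (measurable_const.mul measurable_id))).aestronglyMeasurable ?_
  intro x hx
  have hden1 := st8_den1 ha hz hx
  have hx0 : 0 < x := lt_of_lt_of_le ha hx.1
  rw [abs_of_pos (by positivity), div_le_iff₀ (by linarith)]
  nlinarith [hx.2, hx0.le]

lemma st8_intA (ha : 0 < a) (hs : ∀ᵐ x ∂μ, x ∈ Set.Icc a b) (hz : z ≤ 0) :
    Integrable (fun x => 1 / (1 - z * x)) μ := by
  refine st8_int_bdd hs (C := 1)
    (measurable_const.div
      (measurable_const.sub (measurable_const.mul measurable_id))).aestronglyMeasurable ?_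
  intro x hx
  have hden1 := st8_den1 ha hz hx
  rw [abs_of_pos (by positivity), div_le_iff₀ (by linarith)]
  linarith

lemma st8_intQ (ha : 0 < a) (hs : ∀ᵐ x ∂μ, x ∈ Set.Icc a b) (hz : z ≤ 0) :
    Integrable (fun x => x ^ 2 / (1 - z * x) ^ 2) μ := by
  refine st8_int_bdd hs (C := b ^ 2)
    ((measurable_id.pow_const 2).div
      ((measurable_const.sub (measurable_const.mul measurable_id)).pow_const 2)).aestronglyMeasurable ?_
  intro x hx
  have hden1 := st8_den1 ha hz hx
  have hx0 : 0 < x := lt_of_lt_of_le ha hx.1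
  rw [abs_of_pos (by positivity), div_le_iff₀ (by positivity)]
  have h1 : 1 ≤ (1 - z * x)^2 := by nlinarith
  nlinarith [mul_le_mul hx.2 hx.2 hx0.le (le_trans hx0.le hx.2),
    mul_le_mul_of_nonneg_left h1 (by positivity : (0:ℝ) ≤ b ^ 2)]

lemma st8_intLogx (ha : 0 < a) (hab : a ≤ b) (hs : ∀ᵐ x ∂μ, x ∈ Set.Icc a b) :
    Integrable (fun x => Real.log x) μ := by
  have hb : 0 < b := lt_of_lt_of_le ha hab
  refine st8_int_bdd hs (C := max |Real.log a| |Real.log b|)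
    Real.measurable_log.aestronglyMeasurable ?_
  intro x hx
  have hx0 : 0 < x := lt_of_lt_of_le ha hx.1
  have h1 : Real.log a ≤ Real.log x := (Real.log_le_log_iff ha hx0).2 hx.1
  have h2 : Real.log x ≤ Real.log b := (Real.log_le_log_iff hx0 (by linarith)).2 hx.2
  rw [abs_le]
  constructor
  · have := neg_abs_le (Real.log a)
    have := le_max_left |Real.log a| |Real.log b|
    linarith
  · have := le_abs_self (Real.log b)
    have := le_max_right |Real.log a| |Real.log b|
    linarith

lemma st8_psiF_eq (μ : Measure ℝ) (z : ℝ) : psiF μ z = z * bF μ z := by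
  unfold psiF bF
  rw [show (fun x => z * x / (1 - z * x)) = fun x => z * (x / (1 - z * x)) by
    funext x; ring, integral_const_mul]

lemma st8_aF_eq (ha : 0 < a) (hs : ∀ᵐ x ∂μ, x ∈ Set.Icc a b) (hz : z ≤ 0) :
    aF μ z = 1 + psiF μ z := by
  unfold aF psiF
  have hpt : (fun x => 1 / (1 - z * x)) =ᵐ[μ] fun x => z * x / (1 - z * x) + 1 :=
    hs.mono fun x hx => by
      have h := st8_den_pos ha hz hx
      field_simp
      ring
  rw [integral_congr_ae hpt, integral_add (st8_intPsi ha hs hz) (integrable_const 1)]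
  simp [add_comm]

lemma st8_pF_eq (ha : 0 < a) (hs : ∀ᵐ x ∂μ, x ∈ Set.Icc a b) (hz : z ≤ 0) :
    pF μ z = bF μ z + z * qF μ z := by
  unfold pF bF qF
  have hpt : (fun x => x / (1 - z * x) ^ 2)
      =ᵐ[μ] fun x => x / (1 - z * x) + z * (x ^ 2 / (1 - z * x) ^ 2) :=
    hs.mono fun x hx => by
      have h := st8_den_pos ha hz hx
      field_simp
      ring
  rw [integral_congr_ae hpt,
    integral_add (st8_intB ha hs hz) ((st8_intQ ha hs hz).const_mul z), integral_const_mul]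

lemma st8_psiF_le (ha : 0 < a) (hs : ∀ᵐ x ∂μ, x ∈ Set.Icc a b) (hz : z ≤ 0) :
    psiF μ z ≤ z * a / (1 - z * a) := by
  refine st8_int_le hs (st8_intPsi ha hs hz) ?_
  intro x hx
  have hx0 : 0 < x := lt_of_lt_of_le ha hx.1
  have h1 : 0 < 1 - z * x := st8_den_pos ha hz hx
  have h2 : 0 < 1 - z * a := by nlinarith [mul_nonneg (neg_nonneg.2 hz) ha.le]
  rw [div_le_div_iff₀ h1 h2]
  nlinarith [mul_nonneg (neg_nonneg.2 hz) (sub_nonneg.2 hx.1)]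

lemma st8_psiF_ge (ha : 0 < a) (hab : a ≤ b) (hs : ∀ᵐ x ∂μ, x ∈ Set.Icc a b) (hz : z ≤ 0) :
    z * b / (1 - z * b) ≤ psiF μ z := by
  have hb : 0 < b := lt_of_lt_of_le ha hab
  refine st8_le_int hs (st8_intPsi ha hs hz) ?_
  intro x hx
  have hx0 : 0 < x := lt_of_lt_of_le ha hx.1
  have h1 : 0 < 1 - z * x := st8_den_pos ha hz hx
  have h2 : 0 < 1 - z * b := by nlinarith [mul_nonneg (neg_nonneg.2 hz) hb.le]
  rw [div_le_div_iff₀ h2 h1]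
  nlinarith [mul_nonneg (neg_nonneg.2 hz) (sub_nonneg.2 hx.2)]

lemma st8_bF_ge (ha : 0 < a) (hab : a ≤ b) (hs : ∀ᵐ x ∂μ, x ∈ Set.Icc a b) (hz : z ≤ 0) :
    a / (1 - z * b) ≤ bF μ z := by
  have hb : 0 < b := lt_of_lt_of_le ha hab
  refine st8_le_int hs (st8_intB ha hs hz) ?_
  intro x hx
  have hx0 : 0 < x := lt_of_lt_of_le ha hx.1
  have h1 : 0 < 1 - z * x := st8_den_pos ha hz hx
  have h2 : 0 < 1 - z * b := by nlinarith [mul_nonneg (neg_nonneg.2 hz) hb.le]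
  rw [div_le_div_iff₀ h2 h1]
  nlinarith [hx.1, mul_nonneg (mul_nonneg (neg_nonneg.2 hz) hx0.le) (sub_nonneg.2 hab)]

lemma st8_bF_pos (ha : 0 < a) (hab : a ≤ b) (hs : ∀ᵐ x ∂μ, x ∈ Set.Icc a b) (hz : z ≤ 0) :
    0 < bF μ z := by
  have hb : 0 < b := lt_of_lt_of_le ha hab
  have h2 : 0 < 1 - z * b := by nlinarith [mul_nonneg (neg_nonneg.2 hz) hb.le]
  exact lt_of_lt_of_le (by positivity) (st8_bF_ge ha hab hs hz)

lemma st8_pF_pos (ha : 0 < a) (hab : a ≤ b) (hs : ∀ᵐ x ∂μ, x ∈ Set.Icc a b) (hz : z ≤ 0) :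
    0 < pF μ z := by
  have hb : 0 < b := lt_of_lt_of_le ha hab
  have h2 : 0 < 1 - z * b := by nlinarith [mul_nonneg (neg_nonneg.2 hz) hb.le]
  have hge : a / (1 - z * b) ^ 2 ≤ pF μ z := by
    refine st8_le_int hs (by
      have := st8_pF_eq ha hs hz
      exact st8_int_bdd hs (C := b)
        (measurable_id.div
          ((measurable_const.sub (measurable_const.mul measurable_id)).pow_const 2)).aestronglyMeasurable
        (fun x hx => by
          have hden1 := st8_den1 ha hz hx
          have hx0 : 0 < x := lt_of_lt_of_le ha hx.1
          rw [abs_of_pos (by positivity), div_le_iff₀ (by positivity)]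
          have h1 : 1 ≤ (1 - z * x)^2 := by nlinarith
          nlinarith [hx.2, mul_le_mul_of_nonneg_left h1 (le_trans hx0.le hx.2)])) ?_
    intro x hx
    have hx0 : 0 < x := lt_of_lt_of_le ha hx.1
    have h1 : 0 < 1 - z * x := st8_den_pos ha hz hx
    have h3 : 1 - z * x ≤ 1 - z * b := by
      nlinarith [mul_nonneg (neg_nonneg.2 hz) (sub_nonneg.2 hx.2)]
    rw [div_le_div_iff₀ (by positivity) (by positivity)]
    nlinarith [pow_le_pow_left₀ h1.le h3 2, hx.1, sq_nonneg (1 - z * x)]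
  exact lt_of_lt_of_le (by positivity) hge

lemma st8_A_pos (ha : 0 < a) (hab : a ≤ b) (hs : ∀ᵐ x ∂μ, x ∈ Set.Icc a b) (hz : z ≤ 0) :
    0 < 1 + psiF μ z := by
  have hb : 0 < b := lt_of_lt_of_le ha hab
  have h2 : 0 < 1 - z * b := by nlinarith [mul_nonneg (neg_nonneg.2 hz) hb.le]
  have he : 1 + z * b / (1 - z * b) = 1 / (1 - z * b) := by field_simp; ring
  have := st8_psiF_ge ha hab hs hz
  have h3 : 0 < 1 / (1 - z * b) := by positivity
  linarith

lemma st8_psiF_neg (ha : 0 < a) (hs : ∀ᵐ x ∂μ, x ∈ Set.Icc a b) (hz : z < 0) :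
    psiF μ z < 0 := by
  have h2 : 0 < 1 - z * a := by nlinarith [mul_nonneg (neg_nonneg.2 hz.le) ha.le]
  have := st8_psiF_le ha hs hz.le
  have h3 : z * a / (1 - z * a) < 0 :=
    div_neg_of_neg_of_pos (mul_neg_of_neg_of_pos hz ha) h2
  linarith

lemma st8_aAB (ha : 0 < a) (hab : a ≤ b) (hs : ∀ᵐ x ∂μ, x ∈ Set.Icc a b) (hz : z ≤ 0) :
    a * (1 + psiF μ z) ≤ bF μ z ∧ bF μ z ≤ b * (1 + psiF μ z) := by
  rw [← st8_aF_eq ha hs hz]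
  constructor
  · rw [show a * aF μ z = ∫ x, a * (1 / (1 - z * x)) ∂μ by rw [integral_const_mul]; rfl]
    refine integral_mono_ae ((st8_intA ha hs hz).const_mul a) (st8_intB ha hs hz)
      (hs.mono fun x hx => ?_)
    have h1 : 0 < 1 - z * x := st8_den_pos ha hz hx
    dsimp only
    rw [mul_one_div]
    gcongr
    exact hx.1
  · rw [show b * aF μ z = ∫ x, b * (1 / (1 - z * x)) ∂μ by rw [integral_const_mul]; rfl]
    refine integral_mono_ae (st8_intB ha hs hz) ((st8_intA ha hs hz).const_mul b)
      (hs.mono fun x hx => ?_)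
    have h1 : 0 < 1 - z * x := st8_den_pos ha hz hx
    dsimp only
    rw [mul_one_div]
    gcongr
    exact hx.2

end

section
variable {μ : Measure ℝ} [IsProbabilityMeasure μ] {a b z : ℝ}

lemma st8_logdiff (ha : 0 < a) (hab : a ≤ b) (hs : ∀ᵐ x ∂μ, x ∈ Set.Icc a b) (hz : z ≤ 0) :
    |Real.log (1 + psiF μ z) - Real.log (bF μ z)| ≤ max |Real.log a| |Real.log b| := by
  have hA := st8_A_pos ha hab hs hz
  have hB := st8_bF_pos ha hab hs hz
  obtain ⟨k1, k2⟩ := st8_aAB ha hab hs hz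
  have hb : 0 < b := lt_of_lt_of_le ha hab
  have e1 : Real.log (1 + psiF μ z) - Real.log (bF μ z) ≤ -Real.log a := by
    have h1 : (1 + psiF μ z) ≤ bF μ z / a := (le_div_iff₀ ha).2 (by nlinarith [k1])
    have h2 := (Real.log_le_log_iff hA (by positivity)).2 h1
    rw [Real.log_div hB.ne' (ne_of_gt ha)] at h2
    linarith
  have e2 : -Real.log b ≤ Real.log (1 + psiF μ z) - Real.log (bF μ z) := by
    have h1 : bF μ z / b ≤ 1 + psiF μ z := (div_le_iff₀ hb).2 (by nlinarith [k2])
    have h2 := (Real.log_le_log_iff (by positivity) hA).2 h1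
    rw [Real.log_div hB.ne' (ne_of_gt hb)] at h2
    linarith
  rw [abs_le]
  constructor
  · linarith [le_abs_self (Real.log b), le_max_right |Real.log a| |Real.log b|]
  · linarith [neg_abs_le (Real.log a), le_max_left |Real.log a| |Real.log b|]

lemma st8_strictMono (ha : 0 < a) (hab : a ≤ b) (hs : ∀ᵐ x ∂μ, x ∈ Set.Icc a b) :
    StrictMonoOn (psiF μ) (Set.Iio 0) := by
  apply strictMonoOn_of_deriv_pos (convex_Iio 0)
  · intro z hz
    exact (st8_hasDerivAt_psiF ha hab hs (le_of_lt hz)).continuousAt.continuousWithinAt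
  · intro z hz
    rw [interior_Iio] at hz
    rw [(st8_hasDerivAt_psiF ha hab hs (le_of_lt hz)).deriv]
    exact st8_pF_pos ha hab hs (le_of_lt hz)

lemma st8_psiF_zero (μ : Measure ℝ) : psiF μ 0 = 0 := by simp [psiF]

lemma st8_lF_zero (μ : Measure ℝ) : lF μ 0 = 0 := by simp [lF]

lemma st8_fF_zero (μ : Measure ℝ) [IsProbabilityMeasure μ] : fF μ 0 = 0 := by
  simp [fF, st8_psiF_zero, st8_lF_zero]

lemma st8_pF_integrableOn (ha : 0 < a) (hab : a ≤ b) (hs : ∀ᵐ x ∂μ, x ∈ Set.Icc a b) :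
    IntegrableOn (pF μ) (Set.Iic 0) := by
  have hb : 0 < b := lt_of_lt_of_le ha hab
  have hcont : ∀ z : ℝ, z ≤ 0 → ContinuousAt (pF μ) z :=
    fun z hz => st8_continuousAt_pF ha hab hs hz
  apply integrableOn_Iic_of_intervalIntegral_norm_bounded (a := fun n : ℕ => -(n : ℝ))
    (l := atTop) 1 0
  · intro i
    refine (ContinuousOn.integrableOn_Icc ?_).mono_set Set.Ioc_subset_Icc_self
    intro z hz
    exact (hcont z hz.2).continuousWithinAt
  · have hcast : Tendsto (fun n : ℕ => (n : ℝ)) atTop atTop := tendsto_natCast_atTop_atTop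
    exact tendsto_neg_atTop_atBot.comp hcast
  · refine Filter.Eventually.of_forall fun i => ?_
    have hle : -(i : ℝ) ≤ 0 := neg_nonpos.2 (Nat.cast_nonneg i)
    have h1 : ∫ z in -(i:ℝ)..0, ‖pF μ z‖ = ∫ z in -(i:ℝ)..0, pF μ z := by
      apply intervalIntegral.integral_congr
      intro z hz
      rw [Set.uIcc_of_le hle] at hz
      exact Real.norm_of_nonneg (st8_pF_pos ha hab hs hz.2).le
    rw [h1, intervalIntegral.integral_eq_sub_of_hasDerivAt (f := psiF μ) (f' := pF μ)]
    · rw [st8_psiF_zero]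
      have hge := st8_psiF_ge ha hab hs hle
      have h2 : 0 < 1 - (-(i:ℝ)) * b := by nlinarith [mul_nonneg (by linarith [hle] : (0:ℝ) ≤ (i:ℝ)) hb.le]
      have he : 1 + (-(i:ℝ)) * b / (1 - (-(i:ℝ)) * b) = 1 / (1 - (-(i:ℝ)) * b) := by
        rw [eq_div_iff h2.ne', add_mul, div_mul_cancel₀ _ h2.ne']; ring
      have h3 : 0 ≤ 1 / (1 - (-(i:ℝ)) * b) := by positivity
      linarith
    · intro z hz
      rw [Set.uIcc_of_le hle] at hz
      exact st8_hasDerivAt_psiF ha hab hs hz.2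
    · apply ContinuousOn.intervalIntegrable
      intro z hz
      rw [Set.uIcc_of_le hle] at hz
      exact (hcont z hz.2).continuousWithinAt

lemma st8_gF_integrableOn (ha : 0 < a) (hab : a ≤ b) (hs : ∀ᵐ x ∂μ, x ∈ Set.Icc a b) :
    IntegrableOn (gF μ) (Set.Iic 0) := by
  have hmax0 : 0 ≤ max |Real.log a| |Real.log b| :=
    le_trans (abs_nonneg _) (le_max_left _ _)
  refine Integrable.mono'
    ((st8_pF_integrableOn ha hab hs).const_mul (max |Real.log a| |Real.log b|)) ?_ ?_
  · apply ContinuousOn.aestronglyMeasurable ?_ measurableSet_Iic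
    intro z hz
    have hz' : z ≤ 0 := hz
    have h1 := (st8_hasDerivAt_psiF ha hab hs hz').continuousAt
    have h2 := (st8_hasDerivAt_bF ha hab hs hz').continuousAt
    have h3 := st8_continuousAt_pF ha hab hs hz'
    have hA := st8_A_pos ha hab hs hz'
    have hB := st8_bF_pos ha hab hs hz'
    refine ContinuousAt.continuousWithinAt ?_
    have h1' : ContinuousAt (fun w => 1 + psiF μ w) z := ContinuousAt.add continuousAt_const h1
    have c1 : ContinuousAt (fun z => Real.log (1 + psiF μ z)) z :=
      ContinuousAt.comp (g := Real.log) (f := fun w => 1 + psiF μ w)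
        (Real.continuousAt_log hA.ne') h1'
    have c2 : ContinuousAt (fun z => Real.log (bF μ z)) z :=
      ContinuousAt.comp (g := Real.log) (f := bF μ) (Real.continuousAt_log hB.ne') h2
    exact h3.mul (c1.sub c2)
  · rw [ae_restrict_iff' measurableSet_Iic]
    refine .of_forall fun z hz => ?_
    have hz' : z ≤ 0 := hz
    have h := st8_logdiff ha hab hs hz'
    have hp := (st8_pF_pos ha hab hs hz').le
    rw [Real.norm_eq_abs]
    unfold gF
    rw [abs_mul, abs_of_nonneg hp]
    calc pF μ z * |Real.log (1 + psiF μ z) - Real.log (bF μ z)|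
        ≤ pF μ z * max |Real.log a| |Real.log b| := mul_le_mul_of_nonneg_left h hp
      _ = max |Real.log a| |Real.log b| * pF μ z := mul_comm _ _

lemma st8_fF_hasDeriv (ha : 0 < a) (hab : a ≤ b) (hs : ∀ᵐ x ∂μ, x ∈ Set.Icc a b)
    (hz : z ≤ 0) : HasDerivAt (fF μ) (gF μ z) z := by
  have hψ := st8_hasDerivAt_psiF ha hab hs hz
  have hB' := st8_hasDerivAt_bF ha hab hs hz
  have hL := st8_hasDerivAt_lF ha hab hs hz
  have hA := st8_A_pos ha hab hs hz
  have hBpos := st8_bF_pos ha hab hs hz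
  have h1 : HasDerivAt (fun z => 1 + psiF μ z) (pF μ z) z := hψ.const_add 1
  have h2 : HasDerivAt (fun z => Real.log (1 + psiF μ z)) (pF μ z / (1 + psiF μ z)) z :=
    h1.log hA.ne'
  have h3 : HasDerivAt (fun z => Real.log (bF μ z)) (qF μ z / bF μ z) z := hB'.log hBpos.ne'
  have h4 := h1.mul h2
  have h5 := hψ.mul h3
  have h6 := (h4.sub h5).add hL
  replace h6 : HasDerivAt (fF μ) _ z := h6
  convert h6 using 1
  have e1 : psiF μ z = z * bF μ z := st8_psiF_eq μ z
  have e2 : pF μ z = bF μ z + z * qF μ z := st8_pF_eq ha hs hz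
  have e3 : psiF μ z * (qF μ z / bF μ z) = z * qF μ z := by
    rw [e1]; field_simp
  have e4 : (1 + psiF μ z) * (pF μ z / (1 + psiF μ z)) = pF μ z := by
    field_simp
  unfold gF
  rw [e4, e3, e2]
  ring

lemma st8_tendsto_fF (ha : 0 < a) (hab : a ≤ b) (hs : ∀ᵐ x ∂μ, x ∈ Set.Icc a b) :
    Tendsto (fF μ) atBot (𝓝 (∫ x, Real.log x ∂μ)) := by
  have hb : 0 < b := lt_of_lt_of_le ha hab
  have hR_int : ∀ z : ℝ, z < 0 → Integrable (fun x => Real.log (1 + 1/((-z) * x))) μ := by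
    intro z hz
    have hz0 : 0 < -z := neg_pos.2 hz
    refine st8_int_bdd hs (C := Real.log (1 + 1/((-z) * a)))
      (Real.measurable_log.comp (measurable_const.add
        (measurable_const.div (measurable_const.mul measurable_id)))).aestronglyMeasurable ?_
    intro x hx
    have hx0 : 0 < x := lt_of_lt_of_le ha hx.1
    have hb1 : 0 < (-z) * a := by positivity
    have hb2 : 0 < (-z) * x := by positivity
    have hle : 1/((-z) * x) ≤ 1/((-z) * a) :=
      one_div_le_one_div_of_le hb1 (mul_le_mul_of_nonneg_left hx.1 hz0.le)
    have harg : (1:ℝ) ≤ 1 + 1/((-z) * x) := by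
      have : 0 ≤ 1/((-z) * x) := by positivity
      linarith
    rw [abs_of_nonneg (Real.log_nonneg harg)]
    exact (Real.log_le_log_iff (by linarith) (by positivity)).2 (by linarith)
  -- limit of A
  have hAto : Tendsto (fun z => 1 + psiF μ z) atBot (𝓝 0) := by
    have htop : Tendsto (fun z : ℝ => 1 - z * a) atBot atTop := by
      have h2 : Tendsto (fun z : ℝ => a * (-z)) atBot atTop :=
        (tendsto_neg_atBot_atTop).const_mul_atTop ha
      have h3 := tendsto_atTop_add_const_right atBot (1:ℝ) h2
      refine h3.congr fun z => by ring
    have hinv : Tendsto (fun z : ℝ => 1 / (1 - z * a)) atBot (𝓝 0) := by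
      simpa [one_div, Pi.inv_def] using htop.inv_tendsto_atTop
    apply tendsto_of_tendsto_of_tendsto_of_le_of_le' tendsto_const_nhds hinv
    · filter_upwards [eventually_le_atBot (0:ℝ)] with z hz
      exact (st8_A_pos ha hab hs hz).le
    · filter_upwards [eventually_le_atBot (0:ℝ)] with z hz
      have h2 : 0 < 1 - z * a := by nlinarith [mul_nonneg (neg_nonneg.2 hz) ha.le]
      have he : 1 + z * a / (1 - z * a) = 1 / (1 - z * a) := by field_simp; ring
      linarith [st8_psiF_le ha hs hz]
  -- decomposition of fF
  have hkey : ∀ z : ℝ, z < 0 → fF μ z =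
      (1 + psiF μ z) * Real.log (1 + psiF μ z)
      + (-psiF μ z) * Real.log (-psiF μ z)
      + (1 + psiF μ z) * Real.log (-z)
      + (∫ x, Real.log (1 + 1/((-z) * x)) ∂μ) + ∫ x, Real.log x ∂μ := by
    intro z hz
    have hz0 : 0 < -z := neg_pos.2 hz
    have hB := st8_bF_pos ha hab hs hz.le
    have hψB := st8_psiF_eq μ z
    have hLsplit : lF μ z = Real.log (-z) +
        ((∫ x, Real.log x ∂μ) + ∫ x, Real.log (1 + 1/((-z) * x)) ∂μ) := by
      unfold lF
      have hpt : (fun x => Real.log (1 - z * x)) =ᵐ[μ]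
          fun x => Real.log (-z) + (Real.log x + Real.log (1 + 1/((-z) * x))) :=
        hs.mono fun x hx => by
          dsimp only
          have hx0 : 0 < x := lt_of_lt_of_le ha hx.1
          have hb2 : 0 < (-z) * x := by positivity
          have hden : 0 < 1 - z * x := by nlinarith
          have hinv : 1/((-z) * x) * ((-z) * x) = 1 := one_div_mul_cancel (ne_of_gt hb2)
          rw [show (1:ℝ) + 1/((-z) * x) = (1 - z * x)/((-z) * x) by
            rw [eq_div_iff (ne_of_gt hb2), add_mul, one_mul, hinv]; ring]
          rw [Real.log_div (ne_of_gt hden) (ne_of_gt hb2),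
            Real.log_mul (ne_of_gt hz0) (ne_of_gt hx0)]
          ring
      have hadd : Integrable (fun x => Real.log x + Real.log (1 + 1/((-z) * x))) μ :=
        (st8_intLogx ha hab hs).add (hR_int z hz)
      rw [integral_congr_ae hpt, integral_add (integrable_const _) hadd,
        integral_add (st8_intLogx ha hab hs) (hR_int z hz)]
      simp
    have e1 : Real.log (bF μ z) = Real.log ((-z) * bF μ z) - Real.log (-z) := by
      rw [Real.log_mul (ne_of_gt hz0) hB.ne']
      ring
    have e2 : (-z) * bF μ z = -psiF μ z := by rw [hψB]; ring
    unfold fF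
    rw [hLsplit, e1, e2]
    ring
  -- individual limits
  have t1 : Tendsto (fun z => (1 + psiF μ z) * Real.log (1 + psiF μ z)) atBot (𝓝 0) := by
    have h := (Real.continuous_mul_log.tendsto 0).comp hAto
    have h' : Tendsto (fun z => (1 + psiF μ z) * Real.log (1 + psiF μ z)) atBot
        (𝓝 (0 * Real.log 0)) := h
    simpa using h'
  have t2 : Tendsto (fun z => (-psiF μ z) * Real.log (-psiF μ z)) atBot (𝓝 0) := by
    have hto1 : Tendsto (fun z => -psiF μ z) atBot (𝓝 1) := by
      have hc : Tendsto (fun _ : ℝ => (1:ℝ)) atBot (𝓝 1) := tendsto_const_nhds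
      have := hc.sub hAto
      simpa using this
    have h := (Real.continuous_mul_log.tendsto 1).comp hto1
    have h' : Tendsto (fun z => (-psiF μ z) * Real.log (-psiF μ z)) atBot
        (𝓝 (1 * Real.log 1)) := h
    simpa using h'
  have t3 : Tendsto (fun z => (1 + psiF μ z) * Real.log (-z)) atBot (𝓝 0) := by
    have h0 : Tendsto (fun t : ℝ => Real.log t / t) atTop (𝓝 0) := by
      simpa using Real.isLittleO_log_id_atTop.tendsto_div_nhds_zero
    have htop : Tendsto (fun z : ℝ => (1/a) * (Real.log (-z) / (-z))) atBot (𝓝 0) := by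
      have := (h0.comp tendsto_neg_atBot_atTop).const_mul (1/a)
      simpa using this
    apply tendsto_of_tendsto_of_tendsto_of_le_of_le' tendsto_const_nhds htop
    · filter_upwards [eventually_le_atBot (-1:ℝ)] with z hz
      have hz' : z ≤ 0 := by linarith
      exact mul_nonneg (st8_A_pos ha hab hs hz').le (Real.log_nonneg (by linarith))
    · filter_upwards [eventually_le_atBot (-1:ℝ)] with z hz
      have hz' : z ≤ 0 := by linarith
      have hz0 : (0:ℝ) < -z := by linarith
      have h2 : 0 < 1 - z * a := by nlinarith [mul_nonneg (neg_nonneg.2 hz') ha.le]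
      have he : 1 + z * a / (1 - z * a) = 1 / (1 - z * a) := by field_simp; ring
      have hA_le : 1 + psiF μ z ≤ 1 / ((-z) * a) := by
        have hle2 : 1 / (1 - z * a) ≤ 1 / ((-z) * a) :=
          one_div_le_one_div_of_le (by positivity) (by linarith)
        linarith [st8_psiF_le ha hs hz']
      have hlog : 0 ≤ Real.log (-z) := Real.log_nonneg (by linarith)
      have heq : (1 / ((-z) * a)) * Real.log (-z) = (1/a) * (Real.log (-z) / (-z)) := by
        field_simp
      calc (1 + psiF μ z) * Real.log (-z) ≤ (1 / ((-z) * a)) * Real.log (-z) :=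
            mul_le_mul_of_nonneg_right hA_le hlog
        _ = (1/a) * (Real.log (-z) / (-z)) := heq
  have t4 : Tendsto (fun z => ∫ x, Real.log (1 + 1/((-z) * x)) ∂μ) atBot (𝓝 0) := by
    have htop : Tendsto (fun z : ℝ => 1 / ((-z) * a)) atBot (𝓝 0) := by
      have h2 : Tendsto (fun z : ℝ => (-z) * a) atBot atTop := by
        have := (tendsto_neg_atBot_atTop (G := ℝ)).atTop_mul_const ha
        simpa using this
      simpa [one_div, Pi.inv_def] using h2.inv_tendsto_atTop
    apply tendsto_of_tendsto_of_tendsto_of_le_of_le' tendsto_const_nhds htop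
    · filter_upwards [Iio_mem_atBot (0:ℝ)] with z hz
      refine st8_le_int hs (hR_int z hz) fun x hx => ?_
      have hx0 : 0 < x := lt_of_lt_of_le ha hx.1
      have hz0 : 0 < -z := neg_pos.2 hz
      refine Real.log_nonneg ?_
      have : 0 ≤ 1/((-z) * x) := by positivity
      linarith
    · filter_upwards [Iio_mem_atBot (0:ℝ)] with z hz
      refine st8_int_le hs (hR_int z hz) fun x hx => ?_
      have hx0 : 0 < x := lt_of_lt_of_le ha hx.1
      have hz0 : 0 < -z := neg_pos.2 hz
      have harg : (0:ℝ) < 1 + 1/((-z) * x) := by positivity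
      have h1 : Real.log (1 + 1/((-z) * x)) ≤ 1/((-z) * x) := by
        have := Real.log_le_sub_one_of_pos harg
        linarith
      have h2 : 1/((-z) * x) ≤ 1/((-z) * a) :=
        one_div_le_one_div_of_le (by positivity) (mul_le_mul_of_nonneg_left hx.1 hz0.le)
      linarith
  have hc2 : Tendsto (fun _ : ℝ => ∫ x, Real.log x ∂μ) atBot (𝓝 (∫ x, Real.log x ∂μ)) :=
    tendsto_const_nhds
  have hcomb := (((t1.add t2).add t3).add t4).add hc2
  rw [show (0:ℝ) + 0 + 0 + 0 + ∫ x, Real.log x ∂μ = ∫ x, Real.log x ∂μ by ring] at hcomb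
  apply hcomb.congr'
  filter_upwards [Iio_mem_atBot (0:ℝ)] with z hz
  exact (hkey z hz).symm

lemma st8_key_integral (ha : 0 < a) (hab : a ≤ b) (hs : ∀ᵐ x ∂μ, x ∈ Set.Icc a b) :
    ∫ z in Set.Iic 0, gF μ z = - ∫ x, Real.log x ∂μ := by
  rw [integral_Iic_of_hasDerivAt_of_tendsto
    (st8_fF_hasDeriv ha hab hs le_rfl).continuousAt.continuousWithinAt
    (fun z hz => st8_fF_hasDeriv ha hab hs (le_of_lt hz))
    (st8_gF_integrableOn ha hab hs) (st8_tendsto_fF ha hab hs), st8_fF_zero]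
  ring

end

/-- Let `μ` be a Borel probability measure on `ℝ` whose support is a compact subset `K` of
`(0,∞)`, let `ψ(z) = ∫ z·x/(1 − z·x) dμ(x)` for `z < 0`, let `χ : (−1,0) → (−∞,0)` denote
the inverse of the bijection `ψ : (−∞,0) → (−1,0)`, and define `S(z) = ((1+z)/z)·χ(z)` for
`z ∈ (−1,0)`.  Then the improper integral `∫₀^1 log S(−t) dt` converges, and
`∫ log x dμ(x) = −∫₀^1 log S(−t) dt`. -/
theorem stmt8 (μ : Measure ℝ) [IsProbabilityMeasure μ]
    (K : Set ℝ) (hK : IsCompact K) (hKpos : K ⊆ Set.Ioi 0) (hμK : μ Kᶜ = 0)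
    (χ : ℝ → ℝ) (S : ℝ → ℝ)
    (hχneg : ∀ u ∈ Set.Ioo (-1 : ℝ) 0, χ u < 0)
    (hχright : ∀ u ∈ Set.Ioo (-1 : ℝ) 0, ∫ x, (χ u) * x / (1 - (χ u) * x) ∂μ = u)
    (hχleft : ∀ z < (0 : ℝ), χ (∫ x, z * x / (1 - z * x) ∂μ) = z)
    (hS : ∀ z ∈ Set.Ioo (-1 : ℝ) 0, S z = ((1 + z) / z) * χ z) :
    IntegrableOn (fun t : ℝ => Real.log (S (-t))) (Set.Ioo (0 : ℝ) 1) ∧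
    ∫ x, Real.log x ∂μ = -∫ t in Set.Ioo (0 : ℝ) 1, Real.log (S (-t)) := by
  have hKne : K.Nonempty := by
    by_contra h
    rw [Set.not_nonempty_iff_eq_empty] at h
    rw [h, Set.compl_empty] at hμK
    simp [measure_univ] at hμK
  set a := sInf K with ha_def
  set b := sSup K with hb_def
  have haK : a ∈ K := hK.sInf_mem hKne
  have hbK : b ∈ K := hK.sSup_mem hKne
  have ha : 0 < a := hKpos haK
  have hab : a ≤ b := csInf_le_csSup hKne hK.bddBelow hK.bddAbove
  have hb : 0 < b := lt_of_lt_of_le ha hab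
  have hsub : K ⊆ Set.Icc a b := fun x hx =>
    ⟨csInf_le hK.bddBelow hx, le_csSup hK.bddAbove hx⟩
  have hs : ∀ᵐ x ∂μ, x ∈ Set.Icc a b := by
    have h1 : ∀ᵐ x ∂μ, x ∈ K := by
      rw [MeasureTheory.ae_iff]
      exact hμK
    exact h1.mono fun x hx => hsub hx
  have himg : psiF μ '' Set.Iio 0 = Set.Ioo (-1 : ℝ) 0 := by
    apply Set.Subset.antisymm
    · rintro u ⟨z, hz, rfl⟩
      have hz' : z < 0 := hz
      constructor
      · have hge := st8_psiF_ge ha hab hs hz'.le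
        have h2 : 0 < 1 - z * b := by nlinarith [mul_nonneg (neg_nonneg.2 hz'.le) hb.le]
        have he : 1 + z * b / (1 - z * b) = 1 / (1 - z * b) := by field_simp; ring
        have h3 : 0 < 1 / (1 - z * b) := by positivity
        linarith
      · exact st8_psiF_neg ha hs hz'
    · rintro u hu
      exact ⟨χ u, hχneg u hu, hχright u hu⟩
  have hmono := st8_strictMono ha hab hs
  have hinj : Set.InjOn (psiF μ) (Set.Iio 0) := hmono.injOn
  have hderiv : ∀ z ∈ Set.Iio 0, HasDerivWithinAt (psiF μ) (pF μ z) (Set.Iio 0) z :=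
    fun z hz => (st8_hasDerivAt_psiF ha hab hs (le_of_lt hz)).hasDerivWithinAt
  have hlogS : ∀ z ∈ Set.Iio (0:ℝ),
      Real.log (S (psiF μ z)) = Real.log (1 + psiF μ z) - Real.log (bF μ z) := by
    intro z hz
    have hz' : z < 0 := hz
    have hu : psiF μ z ∈ Set.Ioo (-1:ℝ) 0 := by rw [← himg]; exact ⟨z, hz, rfl⟩
    have hSz := hS _ hu
    have hchi : χ (psiF μ z) = z := hχleft z hz'
    have hA := st8_A_pos ha hab hs hz'.le
    have hB := st8_bF_pos ha hab hs hz'.le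
    have hψB := st8_psiF_eq μ z
    have hψne : psiF μ z ≠ 0 := (st8_psiF_neg ha hs hz').ne
    rw [hSz, hchi]
    have he : (1 + psiF μ z) / psiF μ z * z = (1 + psiF μ z) / bF μ z := by
      rw [div_mul_eq_mul_div, div_eq_div_iff hψne hB.ne', hψB]
      ring
    rw [he, Real.log_div hA.ne' hB.ne']
  have hnegimg : (fun t : ℝ => -t) '' Set.Ioo 0 1 = Set.Ioo (-1:ℝ) 0 := by
    have := Set.image_neg_Ioo (a := (0:ℝ)) (b := 1)
    simpa using this
  have hnegderiv : ∀ t ∈ Set.Ioo (0:ℝ) 1,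
      HasDerivWithinAt (fun t : ℝ => -t) (-1 : ℝ) (Set.Ioo 0 1) t :=
    fun t _ => (hasDerivAt_neg t).hasDerivWithinAt
  have hneginj : Set.InjOn (fun t : ℝ => -t) (Set.Ioo 0 1) :=
    fun x _ y _ h => neg_injective h
  have hEq : Set.EqOn (fun z => |pF μ z| • Real.log (S (psiF μ z))) (gF μ) (Set.Iio 0) := by
    intro z hz
    have hz' : z < 0 := hz
    show |pF μ z| • Real.log (S (psiF μ z)) = gF μ z
    rw [smul_eq_mul, abs_of_pos (st8_pF_pos ha hab hs hz'.le), hlogS z hz]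
    rfl
  have hIntIoo : IntegrableOn (fun u => Real.log (S u)) (Set.Ioo (-1:ℝ) 0) := by
    rw [← himg,
      integrableOn_image_iff_integrableOn_abs_deriv_smul measurableSet_Iio hderiv hinj]
    exact (((st8_gF_integrableOn ha hab hs).mono_set Set.Iio_subset_Iic_self).congr_fun
      (fun z hz => (hEq hz).symm) measurableSet_Iio)
  have goal1 : IntegrableOn (fun t : ℝ => Real.log (S (-t))) (Set.Ioo (0:ℝ) 1) := by
    have h2 := (integrableOn_image_iff_integrableOn_abs_deriv_smul
      (f' := fun _ : ℝ => (-1:ℝ)) measurableSet_Ioo hnegderiv hneginj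
      (fun u => Real.log (S u))).1 (by rw [hnegimg]; exact hIntIoo)
    simpa using h2
  have hval : ∫ t in Set.Ioo (0:ℝ) 1, Real.log (S (-t)) = - ∫ x, Real.log x ∂μ := by
    have e1 : ∫ u in Set.Ioo (-1:ℝ) 0, Real.log (S u)
        = ∫ t in Set.Ioo (0:ℝ) 1, |(-1:ℝ)| • Real.log (S (-t)) := by
      rw [← hnegimg]
      exact integral_image_eq_integral_abs_deriv_smul measurableSet_Ioo hnegderiv hneginj _
    have e2 : ∫ u in Set.Ioo (-1:ℝ) 0, Real.log (S u)
        = ∫ z in Set.Iio (0:ℝ), |pF μ z| • Real.log (S (psiF μ z)) := by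
      rw [← himg]
      exact integral_image_eq_integral_abs_deriv_smul measurableSet_Iio hderiv hinj _
    have e3 : ∫ z in Set.Iio (0:ℝ), |pF μ z| • Real.log (S (psiF μ z))
        = ∫ z in Set.Iic (0:ℝ), gF μ z := by
      rw [setIntegral_congr_fun measurableSet_Iio hEq]
      exact setIntegral_congr_set Iio_ae_eq_Iic
    have e4 := st8_key_integral ha hab hs
    calc ∫ t in Set.Ioo (0:ℝ) 1, Real.log (S (-t))
        = ∫ t in Set.Ioo (0:ℝ) 1, |(-1:ℝ)| • Real.log (S (-t)) := by simp
      _ = - ∫ x, Real.log x ∂μ := by rw [← e1, e2, e3, e4]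
  exact ⟨goal1, by rw [hval, neg_neg]⟩
end

section
/- Let μ be a Borel probability measure on ℝ whose support is a compact subset of (0,∞), let ψ(z) = ∫ z·x/(1 − z·x) dμ(x) for z < 0, and let χ : (−1,0) → (−∞,0) denote the inverse of the bijection ψ : (−∞,0) → (−1,0). Then lim_{z→0⁻} ((1+z)/z)·χ(z) = 1 / ∫ x dμ(x). -/
open Real MeasureTheory Filter

/-- Let `μ` be a Borel probability measure on `ℝ` whose support is a compact subset `K` of
`(0,∞)`, let `ψ(z) = ∫ z·x/(1 − z·x) dμ(x)` for `z < 0`, and let `χ : (−1,0) → (−∞,0)`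
denote the inverse of the bijection `ψ : (−∞,0) → (−1,0)`.  Then
`lim_{z→0⁻} ((1+z)/z)·χ(z) = 1 / ∫ x dμ(x)`. -/
theorem stmt9 (μ : Measure ℝ) [IsProbabilityMeasure μ]
    (K : Set ℝ) (hK : IsCompact K) (hKpos : K ⊆ Set.Ioi 0) (hμK : μ Kᶜ = 0)
    (χ : ℝ → ℝ)
    (hχneg : ∀ u ∈ Set.Ioo (-1 : ℝ) 0, χ u < 0)
    (hχright : ∀ u ∈ Set.Ioo (-1 : ℝ) 0, ∫ x, (χ u) * x / (1 - (χ u) * x) ∂μ = u)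
    (hχleft : ∀ z < (0 : ℝ), χ (∫ x, z * x / (1 - z * x) ∂μ) = z) :
    Tendsto (fun z : ℝ => ((1 + z) / z) * χ z)
      (nhdsWithin 0 (Set.Ioo (-1 : ℝ) 0)) (nhds (1 / ∫ x, x ∂μ)) := by
  -- K is nonempty
  have hKne : K.Nonempty := by
    rcases Set.eq_empty_or_nonempty K with h | h
    · exfalso; rw [h] at hμK; simp [Set.compl_empty, measure_univ] at hμK
    · exact h
  set a := sInf K with ha_def
  set b := sSup K with hb_def
  have haK : a ∈ K := hK.sInf_mem hKne
  have hbK : b ∈ K := hK.sSup_mem hKne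
  have ha : 0 < a := hKpos haK
  have hb : 0 < b := hKpos hbK
  have haeK : ∀ᵐ x ∂μ, a ≤ x ∧ x ≤ b := by
    have hmem : ∀ᵐ x ∂μ, x ∈ K := by
      rw [ae_iff]; exact hμK
    exact hmem.mono fun x hx => ⟨csInf_le hK.bddBelow hx, le_csSup hK.bddAbove hx⟩
  -- integrability facts
  have hint_x : Integrable (fun x : ℝ => x) μ := by
    refine (integrable_const b).mono' measurable_id.aestronglyMeasurable ?_
    refine haeK.mono fun x hx => ?_
    rw [Real.norm_eq_abs, abs_of_nonneg (ha.le.trans hx.1)]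
    exact hx.2
  have hmeas : ∀ z : ℝ, AEStronglyMeasurable (fun x : ℝ => x / (1 - z * x)) μ :=
    fun z => (measurable_id.div
      (measurable_const.sub (measurable_id.const_mul z))).aestronglyMeasurable
  have hintI : ∀ z ≤ (0:ℝ), Integrable (fun x : ℝ => x / (1 - z * x)) μ := by
    intro z hz
    refine (integrable_const b).mono' (hmeas z) ?_
    refine haeK.mono fun x hx => ?_
    have hx0 : 0 < x := lt_of_lt_of_le ha hx.1
    have hd : (1:ℝ) ≤ 1 - z * x := by nlinarith
    rw [Real.norm_eq_abs, abs_of_nonneg (div_nonneg hx0.le (by linarith))]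
    exact (div_le_self hx0.le hd).trans hx.2
  -- mean is positive
  have hm : 0 < ∫ x, x ∂μ := by
    have h1 : a ≤ ∫ x, x ∂μ := by
      have := integral_mono_ae (integrable_const a) hint_x (haeK.mono fun x hx => hx.1)
      simpa [measure_univ] using this
    linarith
  -- key identity
  have hid : ∀ u ∈ Set.Ioo (-1:ℝ) 0, u = χ u * ∫ x, x / (1 - χ u * x) ∂μ := by
    intro u hu
    have h1 : χ u * ∫ x, x / (1 - χ u * x) ∂μ = ∫ x, χ u * x / (1 - χ u * x) ∂μ := by
      simp_rw [mul_div_assoc]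
      rw [integral_const_mul]
    rw [h1, hχright u hu]
  -- upper bound on I z
  have hIub : ∀ z ≤ (0:ℝ), (∫ x, x / (1 - z * x) ∂μ) ≤ ∫ x, x ∂μ := by
    intro z hz
    refine integral_mono_ae (hintI z hz) hint_x (haeK.mono fun x hx => ?_)
    have hx0 : 0 < x := lt_of_lt_of_le ha hx.1
    have hd : (1:ℝ) ≤ 1 - z * x := by nlinarith
    exact div_le_self hx0.le hd
  -- lower bound on I z
  have hIlb : ∀ z ≤ (0:ℝ), (∫ x, x ∂μ) / (1 - z * b) ≤ ∫ x, x / (1 - z * x) ∂μ := by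
    intro z hz
    rw [← integral_div]
    refine integral_mono_ae (hint_x.div_const _) (hintI z hz) (haeK.mono fun x hx => ?_)
    have hx0 : 0 < x := lt_of_lt_of_le ha hx.1
    have h1 : 0 < 1 - z * x := by nlinarith
    have h2 : 1 - z * x ≤ 1 - z * b := by nlinarith
    exact div_le_div_of_nonneg_left hx0.le h1 h2
  -- lower bound on χ u
  have hA : ∀ u ∈ Set.Ioo (-1:ℝ) 0, u / (1 + u) / a ≤ χ u := by
    intro u hu
    have hz : χ u < 0 := hχneg u hu
    have hd : 0 < 1 - χ u * a := by nlinarith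
    have hintzx : Integrable (fun x : ℝ => χ u * x / (1 - χ u * x)) μ := by
      have := (hintI (χ u) hz.le).const_mul (χ u)
      refine this.congr (Eventually.of_forall fun x => ?_)
      simp only [mul_div_assoc]
    have hstep : u ≤ χ u * a / (1 - χ u * a) := by
      have hle : (∫ x, χ u * x / (1 - χ u * x) ∂μ) ≤ χ u * a / (1 - χ u * a) := by
        have := integral_mono_ae hintzx (integrable_const (χ u * a / (1 - χ u * a)))
          (haeK.mono fun x hx => ?_)
        · simpa [measure_univ] using this
        · have hx0 : 0 < x := lt_of_lt_of_le ha hx.1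
          have hdx : 0 < 1 - χ u * x := by nlinarith
          rw [div_le_div_iff₀ hdx hd]
          nlinarith [mul_nonpos_of_nonpos_of_nonneg hz.le (sub_nonneg.2 hx.1)]
      calc u = ∫ x, χ u * x / (1 - χ u * x) ∂μ := (hχright u hu).symm
        _ ≤ _ := hle
    have h1u : 0 < 1 + u := by linarith [hu.1]
    rw [div_le_iff₀ ha, div_le_iff₀ h1u]
    have := (le_div_iff₀ hd).1 hstep
    nlinarith
  -- χ tends to 0
  have hB : Tendsto χ (nhdsWithin 0 (Set.Ioo (-1:ℝ) 0)) (nhds 0) := by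
    have hlow : Tendsto (fun u : ℝ => u / (1 + u) / a)
        (nhdsWithin 0 (Set.Ioo (-1:ℝ) 0)) (nhds 0) := by
      have hc : ContinuousAt (fun u : ℝ => u / (1 + u) / a) 0 := by
        apply ContinuousAt.div
        · exact ContinuousAt.div continuousAt_id (by fun_prop) (by norm_num)
        · exact continuousAt_const
        · exact ha.ne'
      have := hc.tendsto.mono_left (nhdsWithin_le_nhds (s := Set.Ioo (-1:ℝ) 0))
      simpa using this
    refine tendsto_of_tendsto_of_tendsto_of_le_of_le' hlow tendsto_const_nhds ?_ ?_
    · filter_upwards [self_mem_nhdsWithin] with u hu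
      exact hA u hu
    · filter_upwards [self_mem_nhdsWithin] with u hu
      exact (hχneg u hu).le
  -- I(χ u) tends to the mean
  have hIc : Tendsto (fun u : ℝ => ∫ x, x / (1 - χ u * x) ∂μ)
      (nhdsWithin 0 (Set.Ioo (-1:ℝ) 0)) (nhds (∫ x, x ∂μ)) := by
    have hlb' : Tendsto (fun u : ℝ => (∫ x, x ∂μ) / (1 - χ u * b))
        (nhdsWithin 0 (Set.Ioo (-1:ℝ) 0)) (nhds (∫ x, x ∂μ)) := by
      have hc : ContinuousAt (fun t : ℝ => (∫ x, x ∂μ) / (1 - t * b)) 0 := by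
        apply ContinuousAt.div continuousAt_const (by fun_prop) (by norm_num)
      have := hc.tendsto.comp hB
      simp only [zero_mul, sub_zero, div_one] at this
      exact this
    refine tendsto_of_tendsto_of_tendsto_of_le_of_le' hlb' tendsto_const_nhds ?_ ?_
    · filter_upwards [self_mem_nhdsWithin] with u hu
      exact hIlb _ (hχneg u hu).le
    · filter_upwards [self_mem_nhdsWithin] with u hu
      exact hIub _ (hχneg u hu).le
  -- final assembly
  have hnum : Tendsto (fun u : ℝ => 1 + u)
      (nhdsWithin 0 (Set.Ioo (-1:ℝ) 0)) (nhds 1) := by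
    have hc : ContinuousAt (fun u : ℝ => 1 + u) 0 := by fun_prop
    have := hc.tendsto.mono_left (nhdsWithin_le_nhds (s := Set.Ioo (-1:ℝ) 0))
    simpa using this
  have hfinal : Tendsto (fun u : ℝ => (1 + u) / ∫ x, x / (1 - χ u * x) ∂μ)
      (nhdsWithin 0 (Set.Ioo (-1:ℝ) 0)) (nhds (1 / ∫ x, x ∂μ)) :=
    hnum.div hIc hm.ne'
  refine hfinal.congr' ?_
  filter_upwards [self_mem_nhdsWithin] with u hu
  have hz : χ u < 0 := hχneg u hu
  set z := χ u with hzdef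
  have hz0 : z ≠ 0 := ne_of_lt hz
  set Iu := ∫ x, x / (1 - z * x) ∂μ with hIu_def
  have hIpos : 0 < Iu := by
    have h1 : 0 < 1 - z * b := by nlinarith
    exact lt_of_lt_of_le (div_pos hm h1) (hIlb _ hz.le)
  have hId : u = z * Iu := hid u hu
  rw [hId]
  field_simp
end

section
/- For every real λ > 0, ∫_{(1−√λ)²}^{(1+√λ)²} √(4λ − (x−1−λ)²)/(2πx) dx = min(1, λ). -/
open Real MeasureTheory Set intervalIntegral

lemma mp_aux (a b : ℝ) (hb : 0 < b) (hba : b < a) :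
    ∫ x in (a - b)..(a + b), Real.sqrt (b ^ 2 - (x - a) ^ 2) / (2 * π * x)
      = (a - Real.sqrt (a ^ 2 - b ^ 2)) / 2 := by
  have ha : 0 < a := hb.trans hba
  have hab0 : 0 < a - b := by linarith
  set c : ℝ := Real.sqrt (a ^ 2 - b ^ 2) with hc
  have hc2 : c ^ 2 = a ^ 2 - b ^ 2 := Real.sq_sqrt (by nlinarith)
  have hcpos : 0 < c := Real.sqrt_pos.2 (by nlinarith)
  set F : ℝ → ℝ := fun x =>
    (Real.sqrt (b ^ 2 - (x - a) ^ 2) + a * Real.arcsin ((x - a) / b)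
      - c * Real.arcsin ((b ^ 2 + a * (x - a)) / (b * x))) / (2 * π) with hFdef
  have hcont : ContinuousOn F (Icc (a - b) (a + b)) := by
    apply ContinuousOn.div_const
    apply ContinuousOn.sub
    · apply ContinuousOn.add
      · exact (continuous_const.sub ((continuous_id.sub continuous_const).pow 2)).continuousOn.sqrt
      · exact continuousOn_const.mul (Real.continuous_arcsin.comp_continuousOn
          ((continuous_id.sub continuous_const).div_const b).continuousOn)
    · refine continuousOn_const.mul (Real.continuous_arcsin.comp_continuousOn ?_)
      refine ContinuousOn.div (by fun_prop) (by fun_prop) ?_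
      intro x hx
      have : 0 < x := lt_of_lt_of_le hab0 hx.1
      positivity
  have hint : IntervalIntegrable (fun x => Real.sqrt (b ^ 2 - (x - a) ^ 2) / (2 * π * x))
      volume (a - b) (a + b) := by
    apply ContinuousOn.intervalIntegrable
    rw [uIcc_of_le (by linarith)]
    refine ContinuousOn.div (by fun_prop) (by fun_prop) ?_
    intro x hx
    have hx0 : 0 < x := lt_of_lt_of_le hab0 hx.1
    have : 0 < 2 * π * x := by positivity
    exact this.ne'
  have hderiv : ∀ x ∈ Ioo (a - b) (a + b),
      HasDerivAt F (Real.sqrt (b ^ 2 - (x - a) ^ 2) / (2 * π * x)) x := by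
    intro x hx
    have hx1 : a - b < x := hx.1
    have hx2 : x < a + b := hx.2
    have hx0 : 0 < x := hab0.trans hx1
    have hs : 0 < b ^ 2 - (x - a) ^ 2 := by nlinarith
    set S : ℝ := Real.sqrt (b ^ 2 - (x - a) ^ 2) with hSdef
    have hS : 0 < S := Real.sqrt_pos.2 hs
    have hS2 : S ^ 2 = b ^ 2 - (x - a) ^ 2 := Real.sq_sqrt hs.le
    -- first term
    have h1 : HasDerivAt (fun y : ℝ => Real.sqrt (b ^ 2 - (y - a) ^ 2))
        ((0 - (2 : ℕ) * (x - a) ^ 1 * 1) / (2 * S)) x := by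
      exact ((hasDerivAt_const x (b ^ 2)).sub (((hasDerivAt_id x).sub_const a).pow 2)).sqrt hs.ne'
    -- second term
    have h2inner : HasDerivAt (fun y : ℝ => (y - a) / b) (1 / b) x := by
      simpa using ((hasDerivAt_id x).sub_const a).div_const b
    have hu1 : (x - a) / b < 1 := (div_lt_one hb).2 (by linarith)
    have hu2 : -1 < (x - a) / b := by rw [lt_div_iff₀ hb]; linarith
    have h2 : HasDerivAt (fun y : ℝ => Real.arcsin ((y - a) / b))
        (1 / Real.sqrt (1 - ((x - a) / b) ^ 2) * (1 / b)) x :=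
      by exact (Real.hasDerivAt_arcsin hu2.ne' hu1.ne).comp x h2inner
    -- third term
    have hbx : (0:ℝ) < b * x := by positivity
    have h3inner : HasDerivAt (fun y : ℝ => (b ^ 2 + a * (y - a)) / (b * y))
        ((a * (b * x) - (b ^ 2 + a * (x - a)) * b) / (b * x) ^ 2) x := by
      exact ((hasDerivAt_const x (b^2)).add (((hasDerivAt_id x).sub_const a).const_mul a)).div
        ((hasDerivAt_id x).const_mul b) hbx.ne' |>.congr_deriv (by simp [id])
    have hg1 : (b ^ 2 + a * (x - a)) / (b * x) < 1 := by
      rw [div_lt_one hbx]; nlinarith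
    have hg2 : -1 < (b ^ 2 + a * (x - a)) / (b * x) := by
      rw [lt_div_iff₀ hbx]; nlinarith
    have h3 : HasDerivAt (fun y : ℝ => Real.arcsin ((b ^ 2 + a * (y - a)) / (b * y)))
        (1 / Real.sqrt (1 - ((b ^ 2 + a * (x - a)) / (b * x)) ^ 2) *
          ((a * (b * x) - (b ^ 2 + a * (x - a)) * b) / (b * x) ^ 2)) x :=
      by exact (Real.hasDerivAt_arcsin hg2.ne' hg1.ne).comp x h3inner
    -- sqrt identities
    have hA : Real.sqrt (1 - ((x - a) / b) ^ 2) = S / b := by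
      rw [show 1 - ((x - a) / b) ^ 2 = (b ^ 2 - (x - a) ^ 2) / b ^ 2 by
        field_simp]
      rw [Real.sqrt_div hs.le, Real.sqrt_sq hb.le]
    have hB : Real.sqrt (1 - ((b ^ 2 + a * (x - a)) / (b * x)) ^ 2) = c * S / (b * x) := by
      rw [show 1 - ((b ^ 2 + a * (x - a)) / (b * x)) ^ 2
          = (a ^ 2 - b ^ 2) * (b ^ 2 - (x - a) ^ 2) / (b * x) ^ 2 by
        field_simp; ring]
      rw [Real.sqrt_div (by nlinarith), Real.sqrt_sq hbx.le,
        Real.sqrt_mul (by nlinarith)]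
    have hD : HasDerivAt F
        (((0 - (2 : ℕ) * (x - a) ^ 1 * 1) / (2 * S)
          + a * (1 / Real.sqrt (1 - ((x - a) / b) ^ 2) * (1 / b))
          - c * (1 / Real.sqrt (1 - ((b ^ 2 + a * (x - a)) / (b * x)) ^ 2) *
              ((a * (b * x) - (b ^ 2 + a * (x - a)) * b) / (b * x) ^ 2))) / (2 * π)) x :=
      ((h1.add (h2.const_mul a)).sub (h3.const_mul c)).div_const _
    convert hD using 1
    rw [hA, hB]
    have hπ : (0:ℝ) < π := Real.pi_pos
    have e1 : (0 - ((2:ℕ):ℝ) * (x - a) ^ 1 * 1) / (2 * S) = -(x - a) / S := by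
      push_cast
      rw [div_eq_div_iff (by positivity) hS.ne']
      ring
    have e2 : a * (1 / (S / b) * (1 / b)) = a / S := by
      field_simp
    have e3 : c * (1 / (c * S / (b * x)) * ((a * (b * x) - (b ^ 2 + a * (x - a)) * b) / (b * x) ^ 2))
        = c ^ 2 / (x * S) := by
      field_simp
      linear_combination (-1 : ℝ) * hc2
    rw [e1, e2, e3, hc2]
    rw [div_eq_div_iff (by positivity) (by positivity)]
    field_simp
    linear_combination hS2
  rw [intervalIntegral.integral_eq_sub_of_hasDeriv_right_of_le (by linarith) hcont
    (fun x hx => (hderiv x hx).hasDerivWithinAt) hint]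
  have hπ : (0:ℝ) < π := Real.pi_pos
  have hFb : F (a + b) = (a - c) / 4 := by
    simp only [hFdef]
    rw [show a + b - a = b from by ring, div_self hb.ne',
      show b ^ 2 + a * b = b * (a + b) from by ring, div_self (by positivity),
      show b ^ 2 - b ^ 2 = 0 from by ring, Real.sqrt_zero, Real.arcsin_one]
    field_simp
    ring
  have hFa : F (a - b) = -((a - c) / 4) := by
    simp only [hFdef]
    rw [show a - b - a = -b from by ring,
      show (-b) / b = -1 from by field_simp,
      show b ^ 2 + a * -b = -b * (a - b) from by ring,
      show (-b * (a - b)) / (b * (a - b)) = -1 from by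
        rw [div_eq_iff (by positivity : (0:ℝ) < b * (a - b)).ne']; ring,
      show b ^ 2 - (-b) ^ 2 = 0 from by ring, Real.sqrt_zero, Real.arcsin_neg_one]
    field_simp
    ring
  rw [hFb, hFa]
  ring

lemma mp_one : ∫ x in (0:ℝ)..4, Real.sqrt (4 * x - x ^ 2) / (2 * π * x) = 1 := by
  have hπ : (0:ℝ) < π := Real.pi_pos
  set F : ℝ → ℝ := fun x => (Real.sqrt (4 * x - x ^ 2)
    + 4 * Real.arcsin (Real.sqrt x / 2)) / (2 * π) with hFdef
  have hcont : ContinuousOn F (Icc (0:ℝ) 4) := by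
    apply Continuous.continuousOn
    exact ((Real.continuous_sqrt.comp (by fun_prop)).add
      (continuous_const.mul (Real.continuous_arcsin.comp
        (Real.continuous_sqrt.div_const 2)))).div_const _
  have hsqrt4 : Real.sqrt 4 = 2 := by
    rw [show (4:ℝ) = 2 ^ 2 by norm_num, Real.sqrt_sq (by norm_num)]
  have hint : IntervalIntegrable (fun x => Real.sqrt (4 * x - x ^ 2) / (2 * π * x))
      volume 0 4 := by
    have hg : IntervalIntegrable (fun x : ℝ => x ^ (-(1:ℝ)/2)) volume 0 4 :=
      intervalIntegral.intervalIntegrable_rpow' (by norm_num)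
    refine hg.mono_fun ?_ ?_
    · apply Measurable.aestronglyMeasurable
      fun_prop
    · rw [uIoc_of_le (by norm_num : (0:ℝ) ≤ 4)]
      filter_upwards [ae_restrict_mem measurableSet_Ioc] with x hx
      have hx0 : 0 < x := hx.1
      have hx4 : x ≤ 4 := hx.2
      set P : ℝ := Real.sqrt x with hPdef
      have hP : 0 < P := Real.sqrt_pos.2 hx0
      have hP2 : P ^ 2 = x := Real.sq_sqrt hx0.le
      have hval : x ^ (-(1:ℝ)/2) = 1 / P := by
        rw [show -(1:ℝ)/2 = -(1/2) by norm_num, Real.rpow_neg hx0.le,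
          ← Real.sqrt_eq_rpow, inv_eq_one_div]
      rw [Real.norm_eq_abs, Real.norm_eq_abs, hval,
        abs_of_nonneg (by positivity), abs_of_nonneg (by positivity)]
      have h1 : Real.sqrt (4 * x - x ^ 2) ≤ 2 * P := by
        rw [show 2 * P = Real.sqrt ((2 * P) ^ 2) from (Real.sqrt_sq (by positivity)).symm]
        apply Real.sqrt_le_sqrt
        nlinarith
      calc Real.sqrt (4 * x - x ^ 2) / (2 * π * x) ≤ (2 * P) / (2 * π * x) := by
            gcongr
        _ ≤ 1 / P := by
            rw [div_le_div_iff₀ (by positivity) hP]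
            nlinarith [Real.pi_gt_three]
  have hderiv : ∀ x ∈ Ioo (0:ℝ) 4,
      HasDerivAt F (Real.sqrt (4 * x - x ^ 2) / (2 * π * x)) x := by
    intro x hx
    have hx0 : 0 < x := hx.1
    have hx4 : x < 4 := hx.2
    have hs : 0 < 4 * x - x ^ 2 := by nlinarith
    set P : ℝ := Real.sqrt x with hPdef
    have hP : 0 < P := Real.sqrt_pos.2 hx0
    have hP2 : P ^ 2 = x := Real.sq_sqrt hx0.le
    set Q : ℝ := Real.sqrt (4 - x) with hQdef
    have hQ : 0 < Q := Real.sqrt_pos.2 (by linarith)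
    have hQ2 : Q ^ 2 = 4 - x := Real.sq_sqrt (by linarith)
    have h1 : HasDerivAt (fun y : ℝ => Real.sqrt (4 * y - y ^ 2))
        ((4 * 1 - (2:ℕ) * x ^ 1 * 1) / (2 * Real.sqrt (4 * x - x ^ 2))) x :=
      (((hasDerivAt_id x).const_mul 4).sub ((hasDerivAt_id x).pow 2)).sqrt hs.ne'
    have h2inner : HasDerivAt (fun y : ℝ => Real.sqrt y / 2) (1 / (2 * P) / 2) x :=
      (Real.hasDerivAt_sqrt hx0.ne').div_const 2
    have hu1 : P / 2 < 1 := by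
      rw [div_lt_one (by norm_num)]
      calc P < Real.sqrt 4 := Real.sqrt_lt_sqrt hx0.le hx4
        _ = 2 := hsqrt4
    have hu2 : (0:ℝ) ≤ P / 2 := by positivity
    have h2 : HasDerivAt (fun y : ℝ => Real.arcsin (Real.sqrt y / 2))
        (1 / Real.sqrt (1 - (P / 2) ^ 2) * (1 / (2 * P) / 2)) x :=
      by exact (Real.hasDerivAt_arcsin ((lt_of_lt_of_le neg_one_lt_zero hu2).ne') hu1.ne).comp x h2inner
    have hA : Real.sqrt (1 - (P / 2) ^ 2) = Q / 2 := by
      rw [show 1 - (P / 2) ^ 2 = (4 - x) / 4 from by linear_combination (-(1:ℝ)/4) * hP2,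
        Real.sqrt_div (by linarith), hsqrt4]
    have hB : Real.sqrt (4 * x - x ^ 2) = P * Q := by
      rw [show 4 * x - x ^ 2 = x * (4 - x) from by ring, Real.sqrt_mul hx0.le]
    have hD : HasDerivAt F
        (((4 * 1 - (2 : ℕ) * x ^ 1 * 1) / (2 * Real.sqrt (4 * x - x ^ 2))
          + 4 * (1 / Real.sqrt (1 - (P / 2) ^ 2) * (1 / (2 * P) / 2))) / (2 * π)) x :=
      (h1.add (h2.const_mul 4)).div_const _
    convert hD using 1
    rw [hA, hB]
    push_cast
    rw [div_eq_div_iff (by positivity) (by positivity)]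
    field_simp
    ring_nf
    linear_combination (2 * Q ^ 2) * hP2 + (2 * x) * hQ2
  rw [intervalIntegral.integral_eq_sub_of_hasDeriv_right_of_le (by norm_num) hcont
    (fun x hx => (hderiv x hx).hasDerivWithinAt) hint]
  simp only [hFdef]
  norm_num [hsqrt4, Real.arcsin_one, Real.arcsin_zero]
  field_simp
  ring

/-- For every real `l > 0`,
`∫_{(1−√l)²}^{(1+√l)²} √(4l − (x−1−l)²)/(2πx) dx = min(1, l)`. -/
theorem stmt11 (l : ℝ) (hl : 0 < l) :
    ∫ x in ((1 - Real.sqrt l) ^ 2)..((1 + Real.sqrt l) ^ 2),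
      Real.sqrt (4 * l - (x - 1 - l) ^ 2) / (2 * π * x) = min 1 l := by
  have hsq : Real.sqrt l ^ 2 = l := Real.sq_sqrt hl.le
  rcases eq_or_ne l 1 with rfl | hne
  · rw [show ((1:ℝ) - Real.sqrt 1) ^ 2 = 0 from by rw [Real.sqrt_one]; norm_num,
      show ((1:ℝ) + Real.sqrt 1) ^ 2 = 4 from by rw [Real.sqrt_one]; norm_num,
      min_self]
    rw [show (fun x : ℝ => Real.sqrt (4 * 1 - (x - 1 - 1) ^ 2) / (2 * π * x))
        = fun x : ℝ => Real.sqrt (4 * x - x ^ 2) / (2 * π * x) from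
      funext fun x => by rw [show 4 * (1:ℝ) - (x - 1 - 1) ^ 2 = 4 * x - x ^ 2 from by ring]]
    exact mp_one
  · have hsl : Real.sqrt l ≠ 1 := by
      intro h
      rw [h] at hsq
      exact hne (by linarith)
    have hb : (0:ℝ) < 2 * Real.sqrt l := by
      have := Real.sqrt_pos.2 hl
      linarith
    have hsl0 : (0:ℝ) < (1 - Real.sqrt l) ^ 2 := by
      have h1 : 1 - Real.sqrt l ≠ 0 := sub_ne_zero.2 fun h => hsl h.symm
      exact lt_of_le_of_ne (sq_nonneg _) (Ne.symm (pow_ne_zero 2 h1))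
    have hba : 2 * Real.sqrt l < 1 + l := by nlinarith [hsq]
    have e1 : ((1:ℝ) - Real.sqrt l) ^ 2 = (1 + l) - 2 * Real.sqrt l := by
      rw [sub_sq, hsq]; ring
    have e2 : ((1:ℝ) + Real.sqrt l) ^ 2 = (1 + l) + 2 * Real.sqrt l := by
      rw [add_sq, hsq]; ring
    rw [e1, e2, show (fun x : ℝ => Real.sqrt (4 * l - (x - 1 - l) ^ 2) / (2 * π * x))
        = fun x : ℝ => Real.sqrt ((2 * Real.sqrt l) ^ 2 - (x - (1 + l)) ^ 2) / (2 * π * x) from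
      funext fun x => by
        rw [show (2 * Real.sqrt l) ^ 2 = 4 * (Real.sqrt l ^ 2) from by ring, hsq,
          show 4 * l - (x - 1 - l) ^ 2 = 4 * l - (x - (1 + l)) ^ 2 from by ring]]
    rw [mp_aux (1 + l) (2 * Real.sqrt l) hb hba]
    rw [show (1 + l) ^ 2 - (2 * Real.sqrt l) ^ 2 = (1 - l) ^ 2 from by
      rw [show (2 * Real.sqrt l) ^ 2 = 4 * (Real.sqrt l ^ 2) from by ring, hsq]; ring]
    rw [Real.sqrt_sq_eq_abs]
    rcases le_or_gt l 1 with h | h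
    · rw [abs_of_nonneg (by linarith), min_eq_right h]
      ring
    · rw [abs_of_nonpos (by linarith), min_eq_left h.le]
      ring
end

section
/- Let t > 0 and let g : ℝ → ℝ be a continuous, strictly decreasing function whose range is the interval (−t, 0), with inverse g^{(−1)} : (−t,0) → ℝ. Suppose that the improper integrals ∫_{−∞}^0 (−g(v)) dv and ∫₀^{∞} (t + g(v)) dv are both finite. Then the improper integral ∫_{−t}^0 g^{(−1)}(x) dx converges absolutely, and lim_{A→∞} [ −t·A − ∫_{−∞}^A g(v) dv ] = −∫_{−t}^0 g^{(−1)}(x) dx. -/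
open Real MeasureTheory Filter

/-- Let `t > 0` and let `g : ℝ → ℝ` be a continuous, strictly decreasing function whose
range is the interval `(−t, 0)`, with inverse `ginv : (−t,0) → ℝ`.  Suppose that the
improper integrals `∫_{−∞}^0 (−g(v)) dv` and `∫₀^∞ (t + g(v)) dv` are both finite.  Then
the improper integral `∫_{−t}^0 ginv(x) dx` converges absolutely, and
`lim_{A→∞} [ −t·A − ∫_{−∞}^A g(v) dv ] = −∫_{−t}^0 ginv(x) dx`. -/
theorem stmt14 (t : ℝ) (ht : 0 < t) (g ginv : ℝ → ℝ)
    (hgc : Continuous g) (hga : StrictAnti g)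
    (hgrange : Set.range g = Set.Ioo (-t) 0)
    (hinv_left : ∀ v : ℝ, ginv (g v) = v)
    (hinv_right : ∀ x ∈ Set.Ioo (-t) 0, g (ginv x) = x)
    (hint_neg : IntegrableOn (fun v : ℝ => -g v) (Set.Iic 0))
    (hint_pos : IntegrableOn (fun v : ℝ => t + g v) (Set.Ici 0)) :
    IntegrableOn ginv (Set.Ioo (-t) 0) ∧
    Tendsto (fun A : ℝ => -t * A - ∫ v in Set.Iic A, g v) atTop
      (nhds (-∫ x in Set.Ioo (-t) 0, ginv x)) := by
  have hgv : ∀ v, g v ∈ Set.Ioo (-t) 0 := fun v => hgrange ▸ Set.mem_range_self v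
  set s : Set ℝ := Set.Ioo (-t) 0 with hs_def
  have hs : MeasurableSet s := measurableSet_Ioo
  -- order characterizations of the inverse
  have hlt : ∀ x ∈ s, ∀ v : ℝ, v < ginv x ↔ x < g v := by
    intro x hx v
    constructor
    · intro h
      have h2 := hga h
      rwa [hinv_right x hx] at h2
    · intro h
      by_contra hc
      push_neg at hc
      have h2 := hga.antitone hc
      rw [hinv_right x hx] at h2
      exact absurd h (not_lt.mpr h2)
  have hgt : ∀ x ∈ s, ∀ v : ℝ, ginv x < v ↔ g v < x := by
    intro x hx v
    constructor
    · intro h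
      have h2 := hga h
      rwa [hinv_right x hx] at h2
    · intro h
      by_contra hc
      push_neg at hc
      have h2 := hga.antitone hc
      rw [hinv_right x hx] at h2
      exact absurd h (not_lt.mpr h2)
  -- measurability of ginv on s
  have hgemb : MeasurableEmbedding g := hgc.measurableEmbedding hga.injective
  have key_pre : ∀ S : Set ℝ, s ∩ ginv ⁻¹' S = g '' S := by
    intro S
    ext x
    constructor
    · rintro ⟨hx, hxS⟩
      exact ⟨ginv x, hxS, hinv_right x hx⟩
    · rintro ⟨v, hv, rfl⟩
      exact ⟨hgv v, by rwa [Set.mem_preimage, hinv_left]⟩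
  have hind : Measurable (s.indicator ginv) := by
    intro S hS
    have himg : MeasurableSet (g '' S) := hgemb.measurableSet_image' hS
    by_cases h0 : (0:ℝ) ∈ S
    · have heq : s.indicator ginv ⁻¹' S = (s ∩ ginv ⁻¹' S) ∪ sᶜ := by
        ext x
        by_cases hx : x ∈ s <;> simp [Set.indicator, hx, h0]
      rw [heq, key_pre S]
      exact himg.union hs.compl
    · have heq : s.indicator ginv ⁻¹' S = s ∩ ginv ⁻¹' S := by
        ext x
        by_cases hx : x ∈ s <;> simp [Set.indicator, hx, h0]
      rw [heq, key_pre S]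
      exact himg
  have hmeas : AEMeasurable ginv (volume.restrict s) :=
    (aemeasurable_indicator_iff hs).mp hind.aemeasurable
  -- positive-part layer cake
  have hInt_pos' : IntegrableOn (fun v : ℝ => t + g v) (Set.Ioi 0) :=
    hint_pos.mono_set Set.Ioi_subset_Ici_self
  have hpos_nn : ∀ v : ℝ, 0 ≤ t + g v := fun v => by
    have := (hgv v).1; linarith
  have hneg_nn : ∀ v : ℝ, 0 ≤ -g v := fun v => by
    have := (hgv v).2; linarith
  have Lpos : (∫⁻ x in s, ENNReal.ofReal (max (ginv x) 0)) =
      ENNReal.ofReal (∫ v in Set.Ioi 0, (t + g v)) := by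
    have hm1 : AEMeasurable (fun x => max (ginv x) 0) (volume.restrict s) :=
      hmeas.max aemeasurable_const
    rw [lintegral_eq_lintegral_meas_lt (f := fun x => max (ginv x) 0) _
      (Eventually.of_forall fun x => le_max_right _ _) hm1,
      ofReal_integral_eq_lintegral_ofReal hInt_pos' (Eventually.of_forall hpos_nn)]
    refine setLIntegral_congr_fun measurableSet_Ioi (fun v hv => ?_)
    have hset : {x | v < max (ginv x) 0} ∩ s = Set.Ioo (-t) (g v) := by
      ext x
      simp only [Set.mem_inter_iff, Set.mem_setOf_eq, Set.mem_Ioo, lt_max_iff, hs_def]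
      constructor
      · rintro ⟨hvx, hx1, hx2⟩
        refine ⟨hx1, ?_⟩
        rcases hvx with h | h
        · exact (hlt x ⟨hx1, hx2⟩ v).mp h
        · exact absurd h (not_lt.mpr (le_of_lt hv))
      · rintro ⟨hx1, hx2⟩
        have hxs : x ∈ s := ⟨hx1, hx2.trans (hgv v).2⟩
        exact ⟨Or.inl ((hlt x hxs v).mpr hx2), hx1, hx2.trans (hgv v).2⟩
    rw [Measure.restrict_apply' hs, hset, Real.volume_Ioo, sub_neg_eq_add, add_comm]
  -- negative-part layer cake
  have Lneg : (∫⁻ x in s, ENNReal.ofReal (max (-ginv x) 0)) =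
      ENNReal.ofReal (∫ v in Set.Iic 0, -g v) := by
    have hm2 : AEMeasurable (fun x => max (-ginv x) 0) (volume.restrict s) :=
      hmeas.neg.max aemeasurable_const
    rw [lintegral_eq_lintegral_meas_lt (f := fun x => max (-ginv x) 0) _
      (Eventually.of_forall fun x => le_max_right _ _) hm2]
    have step1 : (∫⁻ v in Set.Ioi (0:ℝ), (volume.restrict s) {a | v < max (-ginv a) 0}) =
        ∫⁻ v in Set.Ioi (0:ℝ), ENNReal.ofReal (-g (-v)) := by
      refine setLIntegral_congr_fun measurableSet_Ioi (fun v hv => ?_)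
      have hset : {x | v < max (-ginv x) 0} ∩ s = Set.Ioo (g (-v)) 0 := by
        ext x
        simp only [Set.mem_inter_iff, Set.mem_setOf_eq, Set.mem_Ioo, lt_max_iff, hs_def]
        constructor
        · rintro ⟨hvx, hx1, hx2⟩
          refine ⟨?_, hx2⟩
          rcases hvx with h | h
          · have : ginv x < -v := by linarith
            exact (hgt x ⟨hx1, hx2⟩ (-v)).mp this
          · exact absurd h (not_lt.mpr (le_of_lt hv))
        · rintro ⟨hx1, hx2⟩
          have hxs : x ∈ s := ⟨(hgv (-v)).1.trans hx1, hx2⟩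
          have : ginv x < -v := (hgt x hxs (-v)).mpr hx1
          exact ⟨Or.inl (by linarith), (hgv (-v)).1.trans hx1, hx2⟩
      rw [Measure.restrict_apply' hs, hset, Real.volume_Ioo, zero_sub]
    rw [step1]
    have hmapneg : Measure.map Neg.neg (volume.restrict (Set.Iio (0:ℝ))) =
        volume.restrict (Set.Ioi (0:ℝ)) := by
      have hpre : (Neg.neg ⁻¹' Set.Ioi (0:ℝ)) = Set.Iio (0:ℝ) := by
        ext x; simp
      rw [← hpre, ← Measure.restrict_map measurable_neg measurableSet_Ioi,
        Measure.map_neg_eq_self]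
    have hF : Measurable fun v : ℝ => ENNReal.ofReal (-g (-v)) :=
      ENNReal.measurable_ofReal.comp ((hgc.measurable.comp measurable_neg).neg)
    calc (∫⁻ v in Set.Ioi (0:ℝ), ENNReal.ofReal (-g (-v)))
        = ∫⁻ v, ENNReal.ofReal (-g (-v))
            ∂(Measure.map Neg.neg (volume.restrict (Set.Iio (0:ℝ)))) := by rw [hmapneg]
      _ = ∫⁻ w in Set.Iio (0:ℝ), ENNReal.ofReal (-g (- -w)) :=
          lintegral_map hF measurable_neg
      _ = ∫⁻ w in Set.Iio (0:ℝ), ENNReal.ofReal (-g w) := by simp only [neg_neg]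
      _ = ENNReal.ofReal (∫ w in Set.Iio (0:ℝ), -g w) :=
          (ofReal_integral_eq_lintegral_ofReal (hint_neg.mono_set Set.Iio_subset_Iic_self)
            (Eventually.of_forall fun w => hneg_nn w)).symm
      _ = ENNReal.ofReal (∫ w in Set.Iic (0:ℝ), -g w) := by
          rw [setIntegral_congr_set Iio_ae_eq_Iic]
  -- integrability of ginv on s
  have emax : ∀ a : ℝ, ENNReal.ofReal (max a 0) = ENNReal.ofReal a := by
    intro a
    rcases le_total a 0 with h | h
    · simp [max_eq_right h, ENNReal.ofReal_eq_zero.mpr h]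
    · rw [max_eq_left h]
  have hfin : IntegrableOn ginv s := by
    refine ⟨hmeas.aestronglyMeasurable, ?_⟩
    rw [hasFiniteIntegral_iff_norm]
    have heq : (∫⁻ a in s, ENNReal.ofReal ‖ginv a‖) =
        (∫⁻ x in s, ENNReal.ofReal (max (ginv x) 0)) +
          ∫⁻ x in s, ENNReal.ofReal (max (-ginv x) 0) := by
      rw [← lintegral_add_left' ((hmeas.max aemeasurable_const).ennreal_ofReal)]
      refine lintegral_congr fun x => ?_
      rw [← ENNReal.ofReal_add (le_max_right _ _) (le_max_right _ _)]
      congr 1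
      rw [Real.norm_eq_abs]
      rcases le_total (ginv x) 0 with h | h
      · rw [abs_of_nonpos h, max_eq_right h, max_eq_left (by linarith), zero_add]
      · rw [abs_of_nonneg h, max_eq_left h, max_eq_right (by linarith), add_zero]
    rw [heq, Lpos, Lneg]
    exact ENNReal.add_lt_top.mpr ⟨ENNReal.ofReal_lt_top, ENNReal.ofReal_lt_top⟩
  refine ⟨hfin, ?_⟩
  -- value of the integral
  have hIpos_nn : 0 ≤ ∫ v in Set.Ioi (0:ℝ), (t + g v) :=
    setIntegral_nonneg measurableSet_Ioi fun v _ => hpos_nn v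
  have hIneg_nn : 0 ≤ ∫ v in Set.Iic (0:ℝ), -g v :=
    setIntegral_nonneg measurableSet_Iic fun v _ => hneg_nn v
  have hval : (∫ x in s, ginv x) =
      (∫ v in Set.Ioi 0, (t + g v)) - ∫ v in Set.Iic 0, -g v := by
    rw [integral_eq_lintegral_pos_part_sub_lintegral_neg_part hfin]
    have h1 : (∫⁻ x in s, ENNReal.ofReal (ginv x)) =
        ENNReal.ofReal (∫ v in Set.Ioi 0, (t + g v)) := by
      rw [← Lpos]; exact lintegral_congr fun x => (emax _).symm
    have h2 : (∫⁻ x in s, ENNReal.ofReal (-ginv x)) =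
        ENNReal.ofReal (∫ v in Set.Iic 0, -g v) := by
      rw [← Lneg]; exact lintegral_congr fun x => (emax _).symm
    rw [h1, h2, ENNReal.toReal_ofReal hIpos_nn, ENNReal.toReal_ofReal hIneg_nn]
  have hgoal : (-∫ x in s, ginv x) =
      (∫ v in Set.Iic 0, -g v) - ∫ v in Set.Ioi 0, (t + g v) := by
    rw [hval]; ring
  rw [hgoal]
  -- the limit
  have htend : Tendsto (fun A : ℝ =>
      (∫ v in Set.Iic 0, -g v) - ∫ v in (0:ℝ)..A, (t + g v)) atTop
      (nhds ((∫ v in Set.Iic 0, -g v) - ∫ v in Set.Ioi 0, (t + g v))) :=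
    tendsto_const_nhds.sub (intervalIntegral_tendsto_integral_Ioi 0 hInt_pos' tendsto_id)
  have hIg0 : IntegrableOn g (Set.Iic 0) := by
    have h : IntegrableOn (fun v : ℝ => -(-g v)) (Set.Iic 0) := hint_neg.neg
    simpa using h
  refine htend.congr' ?_
  filter_upwards [eventually_ge_atTop (0:ℝ)] with A hA
  have hsplit : (∫ v in Set.Iic A, g v) =
      (∫ v in Set.Iic 0, g v) + ∫ v in Set.Ioc 0 A, g v := by
    rw [← setIntegral_union (Set.Iic_disjoint_Ioc le_rfl) measurableSet_Ioc hIg0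
      (hgc.integrableOn_Ioc), Set.Iic_union_Ioc_eq_Iic hA]
  have hiv : (∫ v in (0:ℝ)..A, (t + g v)) = A * t + ∫ v in Set.Ioc 0 A, g v := by
    rw [intervalIntegral.integral_add (intervalIntegrable_const) (hgc.intervalIntegrable 0 A),
      intervalIntegral.integral_const, intervalIntegral.integral_of_le hA]
    simp [smul_eq_mul]
  rw [hiv, hsplit, integral_neg]
  ring
end
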